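/- arXiv:1512.05107 — 11 statements merged into one kernel-verified Lean document; each statement's English description precedes it below -/
import Mathlib

section
/- Let (A, 𝔪) be a Noetherian local ring of Krull dimension d ≥ 2 with infinite residue field A/𝔪, and suppose the order function of 𝔪 is additive in the following sense: whenever a ∈ 𝔪^i \ 𝔪^{i+1} and b ∈ 𝔪^j \ 𝔪^{j+1}, then ab ∉ 𝔪^{i+j+1} (equivalently, the associated graded ring G_𝔪(A) is a domain). Then for every integer s ≥ 1 there exists an element u ∈ 𝔪^s \ 𝔪^{s+1} such that u is a nonzerodivisor on A and there are at least s pairwise distinct prime ideals of A of height one containing u. -/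
open IsLocalRing

section Helpers

private lemma height_add_one_le' {α : Type*} [Preorder α] {a b : α} (h : a < b) :
    Order.height a + 1 ≤ Order.height b := by
  rw [Order.height_eq_iSup_lt_height b]
  exact le_iSup₂_of_le a h le_rfl

private lemma pt_lt_pt {A : Type*} [CommRing A] {a b : PrimeSpectrum A}
    (h : a.asIdeal < b.asIdeal) : a < b :=
  lt_of_le_of_ne ((PrimeSpectrum.asIdeal_le_asIdeal _ _).mp h.le)
    (fun he => h.ne (congrArg PrimeSpectrum.asIdeal he))

private lemma pt_lt_pt' {A : Type*} [CommRing A] {a b : PrimeSpectrum A}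
    (h : a < b) : a.asIdeal < b.asIdeal :=
  lt_of_le_of_ne ((PrimeSpectrum.asIdeal_le_asIdeal _ _).mpr h.le)
    (fun he => h.ne (PrimeSpectrum.ext he))

/-- A Noetherian ring with a maximal ideal some power of which is zero is artinian. -/
private lemma isArtinianRing_of_pow_maximal_eq_bot {R : Type*} [CommRing R] [IsNoetherianRing R]
    (m : Ideal R) (hm : m.IsMaximal) (k : ℕ) (hk : m ^ k = ⊥) : IsArtinianRing R := by
  haveI := hm
  have key : ∀ i : ℕ, IsArtinian R (R ⧸ (m ^ i : Ideal R)) := by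
    intro i
    induction i with
    | zero =>
        have h0 : (m ^ 0 : Ideal R) = ⊤ := by rw [pow_zero, Ideal.one_eq_top]
        haveI : Subsingleton (R ⧸ (m ^ 0 : Ideal R)) :=
          Submodule.Quotient.subsingleton_iff.mpr h0
        haveI : Finite (R ⧸ (m ^ 0 : Ideal R)) := Finite.of_subsingleton
        exact isArtinian_of_finite
    | succ i ih =>
        set S : Ideal R := m ^ (i + 1) with hS
        set T : Ideal R := m ^ i with hT
        have hST : S ≤ T := Ideal.pow_le_pow_right (Nat.le_succ i)
        set N : Submodule R (R ⧸ S) := Submodule.map S.mkQ (T : Submodule R R) with hN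
        rw [isArtinian_iff_submodule_quotient N]
        constructor
        · -- N is a f.g. module killed by m
          have htor : Module.IsTorsionBySet R N (m : Set R) := by
            rintro ⟨xx, hxx⟩ ⟨a, ha⟩
            obtain ⟨t, ht, rfl⟩ := Submodule.mem_map.mp hxx
            apply Subtype.ext
            show a • (S.mkQ t) = 0
            rw [← map_smul, Submodule.mkQ_apply, Submodule.Quotient.mk_eq_zero]
            have : t * a ∈ m ^ i * m := Ideal.mul_mem_mul ht ha
            rw [← pow_succ] at this
            simpa [smul_eq_mul, mul_comm] using this
          letI : Module (R ⧸ m) N := htor.module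
          haveI : IsScalarTower R (R ⧸ m) N := htor.isScalarTower
          haveI : Module.Finite R N := Module.Finite.iff_fg.mpr (IsNoetherian.noetherian N)
          haveI : Module.Finite (R ⧸ m) N := Module.Finite.of_restrictScalars_finite R _ _
          letI : Field (R ⧸ m) := Ideal.Quotient.field m
          have hart : IsArtinian (R ⧸ m) N := inferInstance
          rw [isArtinian_iff]
          refine OrderEmbedding.wellFounded ?_ ((isArtinian_iff _ _).mp hart)
          exact {
            toFun := fun p => {
              carrier := ↑p
              add_mem' := fun {a b} ha hb => p.add_mem ha hb
              zero_mem' := p.zero_mem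
              smul_mem' := fun c {x} hx => by
                obtain ⟨r, rfl⟩ := Ideal.Quotient.mk_surjective c
                have h' : (Ideal.Quotient.mk m r) • x = r • x := htor.mk_smul r x
                rw [SetLike.mem_coe] at hx ⊢
                rw [h']
                exact p.smul_mem r hx }
            inj' := fun p q h => by
              ext x
              exact SetLike.ext_iff.mp h x
            map_rel_iff' := Iff.rfl }
        · haveI := ih
          exact isArtinian_of_linearEquiv
            (Submodule.quotientQuotientEquivQuotient S T hST).symm
  have := key k
  rw [hk] at this
  exact isArtinian_of_linearEquiv (Submodule.quotEquivOfEqBot (⊥ : Ideal R) rfl)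

end Helpers

private lemma pit_local {R : Type*} [CommRing R] [IsNoetherianRing R] [IsLocalRing R] {x : R}
    (hxm : x ∈ maximalIdeal R)
    (hx : ∀ q : Ideal R, q.IsPrime → x ∈ q → q = maximalIdeal R)
    {Q q' : Ideal R} (hQ : Q.IsPrime) (hq' : q'.IsPrime)
    (h1 : q' < Q) (h2 : Q < maximalIdeal R) : False := by
  classical
  have hxQ : x ∉ Q := fun h => h2.ne (hx Q hQ h)
  set I : Ideal R := Ideal.span {x} with hIdef
  have hxI : x ∈ I := Ideal.subset_span rfl
  have hInetop : I ≠ ⊤ := fun h =>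
    (maximalIdeal.isMaximal R).ne_top (top_le_iff.mp (h ▸ (Ideal.span_singleton_le_iff_mem _).mpr hxm))
  haveI : Nontrivial (R ⧸ I) := Ideal.Quotient.nontrivial_iff.mpr hInetop
  haveI : IsLocalRing (R ⧸ I) :=
    IsLocalRing.of_surjective' (Ideal.Quotient.mk I) Ideal.Quotient.mk_surjective
  -- every prime of R ⧸ I is the maximal ideal
  have hmkx : ∀ p : Ideal (R ⧸ I), Ideal.Quotient.mk I x ∈ p := by
    intro p
    rw [Ideal.Quotient.eq_zero_iff_mem.mpr hxI]
    exact p.zero_mem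
  have hprime : ∀ p : Ideal (R ⧸ I), p.IsPrime → p = maximalIdeal (R ⧸ I) := by
    intro p hp
    have hc1 : p.comap (Ideal.Quotient.mk I) = maximalIdeal R :=
      hx _ (hp.comap _) (hmkx p)
    have hc2 : (maximalIdeal (R ⧸ I)).comap (Ideal.Quotient.mk I) = maximalIdeal R :=
      hx _ ((maximalIdeal.isMaximal _).isPrime.comap _) (Ideal.mem_comap.mpr (hmkx _))
    exact Ideal.comap_injective_of_surjective (Ideal.Quotient.mk I)
      Ideal.Quotient.mk_surjective (hc1.trans hc2.symm)
  -- the maximal ideal of R ⧸ I is nilpotent, hence R ⧸ I is artinian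
  have hnilrad : nilradical (R ⧸ I) = maximalIdeal (R ⧸ I) := by
    rw [nilradical, Ideal.radical_eq_sInf]
    apply le_antisymm
    · exact sInf_le ⟨bot_le, (maximalIdeal.isMaximal _).isPrime⟩
    · exact le_sInf fun J hJ => (hprime J hJ.2) ▸ le_rfl
  obtain ⟨k, hk⟩ : IsNilpotent (maximalIdeal (R ⧸ I)) := by
    rw [← hnilrad]; exact IsNoetherianRing.isNilpotent_nilradical _
  haveI : IsArtinianRing (R ⧸ I) :=
    isArtinianRing_of_pow_maximal_eq_bot _ (maximalIdeal.isMaximal _) k hk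
  -- symbolic powers of Q
  haveI := hQ
  set L := Localization.AtPrime Q with hLdef
  haveI : IsNoetherianRing L := IsLocalization.isNoetherianRing Q.primeCompl L ‹_›
  set φ : R →+* L := algebraMap R L with hφdef
  set Nn : ℕ → Ideal R := fun n => ((Q.map φ) ^ n).comap φ with hNn
  have hanti : ∀ {a b : ℕ}, a ≤ b → Nn b ≤ Nn a := fun hab =>
    Ideal.comap_mono (Ideal.pow_le_pow_right hab)
  have hprimary : ∀ (n : ℕ) (r a : R), a ∉ Q → r * a ∈ Nn n → r ∈ Nn n := by
    intro n r a ha hra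
    have hu : IsUnit (φ a) := (IsLocalization.AtPrime.isUnit_to_map_iff L Q a).mpr ha
    have hmem : φ r * φ a ∈ (Q.map φ) ^ n := by
      have := Ideal.mem_comap.mp hra
      simpa [map_mul] using this
    exact Ideal.mem_comap.mpr ((Ideal.mul_unit_mem_iff_mem _ hu).mp hmem)
  -- stabilization of the chain in R ⧸ I
  have hmono : ∀ {a b : ℕ}, a ≤ b →
      (Nn b).map (Ideal.Quotient.mk I) ≤ (Nn a).map (Ideal.Quotient.mk I) :=
    fun hab => Ideal.map_mono (hanti hab)
  obtain ⟨n, hstab⟩ := IsArtinian.monotone_stabilizes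
    (⟨fun n => OrderDual.toDual ((Nn n).map (Ideal.Quotient.mk I)),
      fun a b hab => hmono hab⟩ : ℕ →o (Ideal (R ⧸ I))ᵒᵈ)
  have hstab1 : (Nn n).map (Ideal.Quotient.mk I) = (Nn (n+1)).map (Ideal.Quotient.mk I) :=
    congrArg OrderDual.ofDual (hstab (n+1) (Nat.le_succ n))
  -- Nakayama step in R
  have hclaim : Nn n ≤ Nn (n+1) ⊔ (maximalIdeal R) • (Nn n) := by
    intro a ha
    have : Ideal.Quotient.mk I a ∈ (Nn (n+1)).map (Ideal.Quotient.mk I) := by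
      rw [← hstab1]; exact Ideal.mem_map_of_mem _ ha
    obtain ⟨b, hb, hba⟩ := Ideal.mem_map_iff_of_surjective _ Ideal.Quotient.mk_surjective |>.mp this
    have hdiff : a - b ∈ I := by
      have h0 : Ideal.Quotient.mk I (a - b) = 0 := by rw [map_sub, hba, sub_self]
      exact Ideal.Quotient.eq_zero_iff_mem.mp h0
    obtain ⟨r, hr⟩ := Ideal.mem_span_singleton'.mp hdiff
    have hrx : r * x ∈ Nn n := hr ▸ sub_mem ha (hanti (Nat.le_succ n) hb)
    have hrN : r ∈ Nn n := hprimary n r x hxQ hrx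
    have hab : a = b + r * x := by rw [hr]; ring
    rw [hab]
    exact Submodule.add_mem _ (Ideal.mem_sup_left hb)
      (Ideal.mem_sup_right (by rw [mul_comm]; exact Submodule.smul_mem_smul hxm hrN))
  have hle : Nn n ≤ Nn (n+1) :=
    Submodule.le_of_le_smul_of_le_jacobson_bot (IsNoetherian.noetherian _)
      (le_of_eq (IsLocalRing.jacobson_eq_maximalIdeal ⊥ bot_ne_top).symm) hclaim
  -- push back to L and apply Nakayama there
  have hmapeq : (Q.map φ) ^ n = (Q.map φ) ^ (n+1) := by
    have e1 : Ideal.map φ (Nn n) = (Q.map φ) ^ n := IsLocalization.map_comap Q.primeCompl L _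
    have e2 : Ideal.map φ (Nn (n+1)) = (Q.map φ) ^ (n+1) := IsLocalization.map_comap Q.primeCompl L _
    rw [← e1, ← e2, le_antisymm (Ideal.map_mono hle) (Ideal.map_mono (hanti (Nat.le_succ n)))]
  have hmaxL : Q.map φ = maximalIdeal L := Localization.AtPrime.map_eq_maximalIdeal
  have hbot : (Q.map φ) ^ n = ⊥ := by
    refine Submodule.eq_bot_of_le_smul_of_le_jacobson_bot (Q.map φ) _
      (IsNoetherian.noetherian _) ?_ ?_
    · rw [Ideal.smul_eq_mul, ← pow_succ']
      exact hmapeq.le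
    · rw [hmaxL]
      exact le_of_eq (IsLocalRing.jacobson_eq_maximalIdeal ⊥ bot_ne_top).symm
  -- conclude Q ≤ q', contradiction
  have hdisjq' : Disjoint (Q.primeCompl : Set R) (q' : Set R) := by
    rw [Set.disjoint_left]
    intro a ha ha'
    exact ha (h1.le ha')
  have hq'L : (q'.map φ).IsPrime :=
    IsLocalization.isPrime_of_isPrime_disjoint Q.primeCompl L q' hq' hdisjq'
  have hQle : Q.map φ ≤ q'.map φ := by
    intro z hz
    have hzn : z ^ n ∈ (Q.map φ) ^ n := Ideal.pow_mem_pow hz n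
    rw [hbot, Ideal.mem_bot] at hzn
    exact hq'L.mem_of_pow_mem n (by rw [hzn]; exact (q'.map φ).zero_mem)
  have hQq' : Q ≤ q' := by
    have hQc : (Q.map φ).comap φ = Q :=
      IsLocalization.comap_map_of_isPrime_disjoint Q.primeCompl L hQ
        (by rw [Set.disjoint_left]; intro a ha ha'; exact ha ha')
    have hq'c : (q'.map φ).comap φ = q' :=
      IsLocalization.comap_map_of_isPrime_disjoint Q.primeCompl L hq' hdisjq'
    calc Q = (Q.map φ).comap φ := hQc.symm
    _ ≤ (q'.map φ).comap φ := Ideal.comap_mono hQle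
    _ = q' := hq'c
  exact h1.not_ge hQq'

private lemma pit {R : Type*} [CommRing R] [IsNoetherianRing R] {x : R} {P : Ideal R}
    (hP : P ∈ (Ideal.span {x}).minimalPrimes) {Q q' : Ideal R}
    (hQ : Q.IsPrime) (hq' : q'.IsPrime) (h1 : q' < Q) (h2 : Q < P) : False := by
  haveI hPp : P.IsPrime := hP.1.1
  set L := Localization.AtPrime P with hL
  set φ : R →+* L := algebraMap R L with hφ
  haveI : IsNoetherianRing L := IsLocalization.isNoetherianRing P.primeCompl L ‹_›
  have hxP : x ∈ P := hP.1.2 (Ideal.subset_span rfl)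
  have hdisj : ∀ {J : Ideal R}, J ≤ P → Disjoint (P.primeCompl : Set R) (J : Set R) := by
    intro J hJ
    rw [Set.disjoint_left]
    intro a ha ha'
    exact ha (hJ ha')
  have hcomap : ∀ {J : Ideal R} (hJp : J.IsPrime), J ≤ P → (J.map φ).comap φ = J :=
    fun {J} hJp hJ => IsLocalization.comap_map_of_isPrime_disjoint P.primeCompl L hJp (hdisj hJ)
  have hmaxL : P.map φ = maximalIdeal L := Localization.AtPrime.map_eq_maximalIdeal
  -- every prime of L containing φ x is maximal
  have hx : ∀ qt : Ideal L, qt.IsPrime → φ x ∈ qt → qt = maximalIdeal L := by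
    intro qt hqt hxqt
    have hcom : qt.comap φ = P := by
      have h1' : (qt.comap φ).IsPrime := hqt.comap _
      have h2' : Ideal.span {x} ≤ qt.comap φ := by
        rw [Ideal.span_singleton_le_iff_mem]
        exact Ideal.mem_comap.mpr hxqt
      have h3' : qt.comap φ ≤ P := by
        have hle : qt ≤ maximalIdeal L := IsLocalRing.le_maximalIdeal hqt.ne_top
        have := Ideal.comap_mono (f := φ) hle
        exact this.trans (le_of_eq Localization.AtPrime.comap_maximalIdeal)
      exact le_antisymm h3' (hP.2 ⟨h1', h2'⟩ h3')
    exact (IsLocalization.map_comap P.primeCompl L qt).symm.trans (by change Ideal.map φ (Ideal.comap φ qt) = _; rw [hcom, hmaxL])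
  -- transfer the chain
  have hq'p : (q'.map φ).IsPrime :=
    IsLocalization.isPrime_of_isPrime_disjoint P.primeCompl L q' hq' (hdisj (h1.le.trans h2.le))
  have hQp : (Q.map φ).IsPrime :=
    IsLocalization.isPrime_of_isPrime_disjoint P.primeCompl L Q hQ (hdisj h2.le)
  have hlt1 : q'.map φ < Q.map φ := by
    refine lt_of_le_of_ne (Ideal.map_mono h1.le) ?_
    intro he
    exact h1.ne (by
      rw [← hcomap hq' (h1.le.trans h2.le), ← hcomap hQ h2.le, he])
  have hlt2 : Q.map φ < maximalIdeal L := by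
    rw [← hmaxL]
    refine lt_of_le_of_ne (Ideal.map_mono h2.le) ?_
    intro he
    exact h2.ne (by rw [← hcomap hQ h2.le, he, hcomap hPp le_rfl])
  have hxmL : φ x ∈ maximalIdeal L := by
    rw [← hmaxL]
    exact Ideal.mem_map_of_mem φ hxP
  exact pit_local hxmL hx hQp hq'p hlt1 hlt2

private lemma exists_height_one {A : Type*} [CommRing A] [IsNoetherianRing A] [IsDomain A]
    {z : A} (hz0 : z ≠ 0) (hz : ¬ IsUnit z) :
    ∃ p : PrimeSpectrum A, z ∈ p.asIdeal ∧ Order.height p = 1 ∧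
      p.asIdeal ∈ (Ideal.span {z}).minimalPrimes := by
  have hne : Ideal.span {z} ≠ ⊤ := fun h => hz (Ideal.span_singleton_eq_top.mp h)
  obtain ⟨M, hM, hle⟩ := Ideal.exists_le_maximal _ hne
  haveI := hM.isPrime
  obtain ⟨p, hp, hpM⟩ := Ideal.exists_minimalPrimes_le hle
  haveI hpp : p.IsPrime := hp.1.1
  have hzp : z ∈ p := hp.1.2 (Ideal.subset_span rfl)
  refine ⟨⟨p, hpp⟩, hzp, ?_, hp⟩
  have hbotlt : (⟨⊥, Ideal.bot_prime⟩ : PrimeSpectrum A) < ⟨p, hpp⟩ := by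
    apply pt_lt_pt
    show (⊥ : Ideal A) < p
    exact bot_lt_iff_ne_bot.mpr (fun h => hz0 (by rw [h] at hzp; exact Ideal.mem_bot.mp hzp))
  have hge : 1 ≤ Order.height (⟨p, hpp⟩ : PrimeSpectrum A) :=
    le_trans le_add_self (height_add_one_le' hbotlt)
  have hle1 : Order.height (⟨p, hpp⟩ : PrimeSpectrum A) ≤ 1 := by
    rw [show (1 : ℕ∞) = ((1 : ℕ) : ℕ∞) from rfl, Order.height_le_coe_iff]
    intro y hy
    rw [show ((1 : ℕ) : ℕ∞) = 1 from rfl, ENat.lt_one_iff_eq_zero, Order.height_eq_zero]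
    intro w hwle
    by_contra hnot
    have hw : w < y := lt_of_le_of_ne hwle (fun h => hnot (h ▸ le_rfl))
    exact pit hp y.isPrime w.isPrime (pt_lt_pt' hw) (pt_lt_pt' hy)
  exact le_antisymm hle1 hge

set_option maxHeartbeats 1000000 in
/-- Let `(A, 𝔪)` be a Noetherian local ring of Krull dimension `≥ 2` with infinite residue
field, such that the order function of `𝔪` is additive (equivalently, the associated graded
ring is a domain). Then for every `s ≥ 1` there is `u ∈ 𝔪^s \ 𝔪^{s+1}` which is a
nonzerodivisor on `A` such that at least `s` pairwise distinct height-one primes contain `u`. -/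
theorem stmt_0 (A : Type*) [CommRing A] [IsNoetherianRing A] [IsLocalRing A]
    (hdim : 2 ≤ ringKrullDim A)
    (hres : Infinite (A ⧸ maximalIdeal A))
    (hadd : ∀ (i j : ℕ) (a b : A),
      a ∈ maximalIdeal A ^ i → a ∉ maximalIdeal A ^ (i + 1) →
      b ∈ maximalIdeal A ^ j → b ∉ maximalIdeal A ^ (j + 1) →
      a * b ∉ maximalIdeal A ^ (i + j + 1))
    (s : ℕ) (hs : 1 ≤ s) :
    ∃ u : A, u ∈ maximalIdeal A ^ s ∧ u ∉ maximalIdeal A ^ (s + 1) ∧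
      u ∈ nonZeroDivisors A ∧
      ∃ P : Fin s → PrimeSpectrum A, Function.Injective P ∧
        ∀ i, Order.height (P i) = 1 ∧ u ∈ (P i).asIdeal := by
  classical
  haveI := hres
  set m : Ideal A := maximalIdeal A with hmdef
  have hmnetop : m ≠ ⊤ := (maximalIdeal.isMaximal A).ne_top
  -- every nonzero element has a well-defined order
  have horder : ∀ a : A, a ≠ 0 → ∃ i, a ∈ m ^ i ∧ a ∉ m ^ (i + 1) := by
    intro a ha
    have hbot := Ideal.iInf_pow_eq_bot_of_isLocalRing m hmnetop
    have hnotall : ¬ ∀ n, a ∈ m ^ n := by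
      intro h
      apply ha
      have : a ∈ (⨅ n : ℕ, m ^ n) := Ideal.mem_iInf.mpr h
      rw [hbot] at this
      exact Ideal.mem_bot.mp this
    have hex : ∃ n, a ∉ m ^ n := not_forall.mp hnotall
    have h0 : a ∈ m ^ 0 := by rw [pow_zero, Ideal.one_eq_top]; exact Submodule.mem_top
    have hn : a ∉ m ^ (Nat.find hex) := Nat.find_spec hex
    have hpos : Nat.find hex ≠ 0 := fun h => hn (h ▸ h0)
    refine ⟨Nat.find hex - 1, ?_, ?_⟩
    · exact not_not.mp (Nat.find_min hex (Nat.sub_lt (Nat.pos_of_ne_zero hpos) one_pos))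
    · have he : Nat.find hex - 1 + 1 = Nat.find hex := by omega
      rwa [he]
  -- A is a domain
  haveI : NoZeroDivisors A := by
    constructor
    intro a b hab
    by_contra hcon
    push_neg at hcon
    obtain ⟨i, hai, hai'⟩ := horder a hcon.1
    obtain ⟨j, hbj, hbj'⟩ := horder b hcon.2
    exact hadd i j a b hai hai' hbj hbj' (hab ▸ Submodule.zero_mem _)
  haveI : IsDomain A := NoZeroDivisors.to_isDomain A
  -- the closed point has height at least 2
  set cp : PrimeSpectrum A := ⟨m, (maximalIdeal.isMaximal A).isPrime⟩ with hcpdef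
  have hallle : ∀ a : PrimeSpectrum A, a ≤ cp := fun a =>
    (PrimeSpectrum.asIdeal_le_asIdeal _ _).mp (IsLocalRing.le_maximalIdeal a.isPrime.ne_top)
  have hcp2 : 2 ≤ Order.height cp := by
    have hk : ringKrullDim A = ((Order.height cp : ℕ∞) : WithBot ℕ∞) := by
      rw [ringKrullDim, Order.krullDim_eq_iSup_height_of_nonempty]
      congr 1
      apply le_antisymm
      · exact iSup_le fun a => Order.height_mono (hallle a)
      · exact le_iSup (fun a : PrimeSpectrum A => Order.height a) cp
    rw [hk] at hdim
    have h2 : ((2 : ℕ∞) : WithBot ℕ∞) ≤ ((Order.height cp : ℕ∞) : WithBot ℕ∞) := by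
      refine le_trans (le_of_eq ?_) hdim
      norm_num
    exact WithBot.coe_le_coe.mp h2
  -- a chain of length two ending at the closed point
  obtain ⟨ch, hchlast, hchlen⟩ := Order.exists_series_of_le_height cp (n := 2) hcp2
  have hi01 : (⟨0, by omega⟩ : Fin (ch.length + 1)) < ⟨1, by omega⟩ := by
    simp [Fin.lt_def]
  have hi12 : (⟨1, by omega⟩ : Fin (ch.length + 1)) < ⟨2, by omega⟩ := by
    simp [Fin.lt_def]
  have h2eq : ch ⟨2, by omega⟩ = cp := by
    rw [← hchlast]
    show ch _ = ch (Fin.last ch.length)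
    congr 1
    ext
    simp [hchlen, Fin.last]
  have hch01 : ch ⟨0, by omega⟩ < ch ⟨1, by omega⟩ := ch.strictMono hi01
  have hch12 : ch ⟨1, by omega⟩ < cp := h2eq ▸ ch.strictMono hi12
  -- the maximal ideal is not a minimal prime of any principal ideal
  have hmnotmin : ∀ w : A, m ∉ (Ideal.span {w}).minimalPrimes := by
    intro w hw
    exact pit hw (ch ⟨1, by omega⟩).isPrime (ch ⟨0, by omega⟩).isPrime
      (pt_lt_pt' hch01) (pt_lt_pt' hch12)
  -- m is not contained in m^2
  have hm2 : ¬ (m ≤ m ^ 2) := by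
    intro hle
    have hbot : m = ⊥ :=
      Submodule.eq_bot_of_le_smul_of_le_jacobson_bot m m (IsNoetherian.noetherian m)
        (by rwa [Ideal.smul_eq_mul, ← pow_two])
        (le_of_eq (IsLocalRing.jacobson_eq_maximalIdeal ⊥ bot_ne_top).symm)
    have hltm : (ch ⟨0, by omega⟩).asIdeal < m := by
      have := pt_lt_pt' (lt_trans hch01 hch12)
      exact this
    rw [hbot] at hltm
    exact absurd (lt_of_le_of_lt bot_le hltm) (lt_irrefl _)
  -- choose x of order one
  obtain ⟨x, hxm, hx2⟩ := SetLike.not_le_iff_exists.mp hm2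
  have hx0 : x ≠ 0 := fun h => hx2 (h ▸ Submodule.zero_mem _)
  -- minimal primes of (x) are finitely many, and none contains m
  have hfin : ((Ideal.span {x}).minimalPrimes).Finite := by
    rw [Ideal.minimalPrimes_eq_comap]
    exact Set.Finite.image _ (minimalPrimes.finite_of_isNoetherianRing _)
  -- prime avoidance: find y in m, outside m^2 and outside all minimal primes of (x)
  have hsub : ¬ ((m : Set A) ⊆
      ⋃ q ∈ (insert (m ^ 2) hfin.toFinset : Finset (Ideal A)), ((q : Ideal A) : Set A)) := by
    intro hsub
    obtain ⟨q, hqs, hqle⟩ := (Ideal.subset_union_prime (f := fun q : Ideal A => q)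
      (m ^ 2) (m ^ 2) (fun i hi hia _ => by
        have : i ∈ hfin.toFinset := (Finset.mem_insert.mp hi).resolve_left hia
        exact (hfin.mem_toFinset.mp this).1.1)).mp hsub
    rcases Finset.mem_insert.mp hqs with h | h
    · exact hm2 (h ▸ hqle)
    · have hqmin : q ∈ (Ideal.span {x}).minimalPrimes := hfin.mem_toFinset.mp h
      have : m = q := (maximalIdeal.isMaximal A).eq_of_le hqmin.1.1.ne_top hqle
      exact hmnotmin x (this ▸ hqmin)
  obtain ⟨y, hym', hynot⟩ := Set.not_subset.mp hsub
  have hym : y ∈ m := hym'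
  simp only [Set.mem_iUnion, SetLike.mem_coe, not_exists, exists_prop, not_and] at hynot
  have hy2 : y ∉ m ^ 2 := hynot _ (Finset.mem_insert_self _ _)
  have hyq : ∀ q ∈ (Ideal.span {x}).minimalPrimes, y ∉ q := fun q hq =>
    hynot q (Finset.mem_insert_of_mem (hfin.mem_toFinset.mpr hq))
  -- choose lifts of distinct residues
  let emb : Fin (s + 1) ↪ A ⧸ maximalIdeal A :=
    Fin.valEmbedding.trans (Infinite.natEmbedding _)
  choose c0 hc0 using fun i : Fin (s + 1) =>
    Ideal.Quotient.mk_surjective (I := maximalIdeal A) (emb i)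
  have hunit : ∀ i j : Fin (s + 1), i ≠ j → IsUnit (c0 i - c0 j) := by
    intro i j hij
    by_contra hnu
    have hmem : c0 i - c0 j ∈ maximalIdeal A := by
      rw [IsLocalRing.mem_maximalIdeal]
      exact hnu
    have heq : emb i = emb j := by
      have h0 : Ideal.Quotient.mk (maximalIdeal A) (c0 i - c0 j) = 0 :=
        Ideal.Quotient.eq_zero_iff_mem.mpr hmem
      rw [map_sub, hc0, hc0, sub_eq_zero] at h0
      exact h0
    exact hij (emb.injective heq)
  -- at most one bad residue
  set B : Finset (Fin (s + 1)) :=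
    Finset.univ.filter (fun i => x + c0 i * y ∈ m ^ 2) with hBdef
  have hBcard : B.card ≤ 1 := by
    refine Finset.card_le_one.mpr (fun i hi j hj => ?_)
    by_contra hij
    have hi' := (Finset.mem_filter.mp hi).2
    have hj' := (Finset.mem_filter.mp hj).2
    have hd : (c0 i - c0 j) * y ∈ m ^ 2 := by
      have hsub2 := Submodule.sub_mem _ hi' hj'
      have he : (x + c0 i * y) - (x + c0 j * y) = (c0 i - c0 j) * y := by ring
      rwa [he] at hsub2
    exact hy2 ((Ideal.unit_mul_mem_iff_mem _ (hunit i j hij)).mp hd)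
  have hcard : Fintype.card (Fin s) ≤ Bᶜ.card := by
    have h1 : Bᶜ.card = Fintype.card (Fin (s + 1)) - B.card := Finset.card_compl B
    rw [Fintype.card_fin] at h1 ⊢
    omega
  obtain ⟨g, hg⟩ := Function.Embedding.exists_of_card_le_finset hcard
  -- the elements z i
  obtain ⟨z, hzdef⟩ : ∃ z : Fin s → A, ∀ i, z i = x + c0 (g i) * y := ⟨_, fun _ => rfl⟩
  have hz1 : ∀ i, z i ∈ m := fun i => by
    rw [hzdef]
    exact Submodule.add_mem _ hxm (Ideal.mul_mem_left _ _ hym)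
  have hz2 : ∀ i, z i ∉ m ^ 2 := by
    intro i hmem
    rw [hzdef] at hmem
    have hgB : g i ∈ B := Finset.mem_filter.mpr ⟨Finset.mem_univ _, hmem⟩
    have hgBc : g i ∈ Bᶜ := hg ⟨i, rfl⟩
    exact (Finset.mem_compl.mp hgBc) hgB
  have hz0 : ∀ i, z i ≠ 0 := fun i h => hz2 i (h ▸ Submodule.zero_mem _)
  have hznu : ∀ i, ¬ IsUnit (z i) := fun i hu =>
    hmnetop (m.eq_top_of_isUnit_mem (hz1 i) hu)
  -- height one primes containing z i
  have hHO := fun i => exists_height_one (hz0 i) (hznu i)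
  choose p hpz hph hpmin using hHO
  -- injectivity
  have hinj : Function.Injective p := by
    intro i j hij
    by_contra hne
    have hzj : z j ∈ (p i).asIdeal := by rw [hij]; exact hpz j
    have hdm : (c0 (g i) - c0 (g j)) * y ∈ (p i).asIdeal := by
      have hsub2 := Submodule.sub_mem _ (hpz i) hzj
      have he : z i - z j = (c0 (g i) - c0 (g j)) * y := by rw [hzdef, hzdef]; ring
      rwa [he] at hsub2
    have hgne : g i ≠ g j := fun h => hne (g.injective h)
    have hyp : y ∈ (p i).asIdeal := (Ideal.unit_mul_mem_iff_mem _ (hunit _ _ hgne)).mp hdm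
    have hxp : x ∈ (p i).asIdeal := by
      have hsub2 := Submodule.sub_mem _ (hpz i) (Ideal.mul_mem_left _ (c0 (g i)) hyp)
      have he : z i - c0 (g i) * y = x := by rw [hzdef]; ring
      rwa [he] at hsub2
    haveI := (p i).isPrime
    obtain ⟨q, hq, hqle⟩ := Ideal.exists_minimalPrimes_le (I := Ideal.span {x})
      ((Ideal.span_singleton_le_iff_mem _).mpr hxp)
    haveI hqp : q.IsPrime := hq.1.1
    have hqlt : q < (p i).asIdeal := lt_of_le_of_ne hqle (fun h => hyq q hq (h ▸ hyp))
    have hbotlt : (⊥ : Ideal A) < q := bot_lt_iff_ne_bot.mpr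
      (fun h => hx0 (Ideal.mem_bot.mp (h ▸ hq.1.2 (Ideal.subset_span rfl))))
    have h1 := height_add_one_le' (a := (⟨⊥, Ideal.bot_prime⟩ : PrimeSpectrum A))
      (b := ⟨q, hqp⟩) (pt_lt_pt hbotlt)
    have h2 := height_add_one_le' (a := (⟨q, hqp⟩ : PrimeSpectrum A)) (b := p i) (pt_lt_pt hqlt)
    rw [hph i] at h2
    have hq1 : 1 ≤ Order.height (⟨q, hqp⟩ : PrimeSpectrum A) := le_trans le_add_self h1
    have h21 : (2 : ℕ∞) ≤ 1 := by
      calc (2 : ℕ∞) = 1 + 1 := by norm_num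
      _ ≤ Order.height (⟨q, hqp⟩ : PrimeSpectrum A) + 1 := add_le_add_left hq1 1
      _ ≤ 1 := h2
    have h21' : ((2 : ℕ) : ℕ∞) ≤ ((1 : ℕ) : ℕ∞) := by exact_mod_cast h21
    exact absurd (Nat.cast_le.mp h21') (by norm_num)
  -- order of the product
  have hprod : ∀ (n : ℕ) (f : Fin n → A), (∀ i, f i ∈ m) → (∀ i, f i ∉ m ^ 2) →
      (∏ i, f i) ∈ m ^ n ∧ (∏ i, f i) ∉ m ^ (n + 1) := by
    intro n
    induction n with
    | zero =>
        intro f _ _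
        constructor
        · rw [pow_zero, Ideal.one_eq_top]; exact Submodule.mem_top
        · intro h
          exact (Ideal.ne_top_iff_one m).mp hmnetop (by simpa using h)
    | succ n ih =>
        intro f hf1 hf2
        rw [Fin.prod_univ_castSucc]
        obtain ⟨ha, ha'⟩ := ih (fun i => f i.castSucc) (fun i => hf1 _) (fun i => hf2 _)
        refine ⟨?_, ?_⟩
        · rw [pow_succ]
          exact Ideal.mul_mem_mul ha (hf1 _)
        · have hlast1 : f (Fin.last n) ∈ m ^ 1 := by rw [pow_one]; exact hf1 _
          exact hadd n 1 _ _ ha ha' hlast1 (hf2 (Fin.last n))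
  obtain ⟨hu1, hu2⟩ := hprod s z hz1 hz2
  refine ⟨∏ i, z i, hu1, hu2, ?_, p, hinj, fun i => ⟨hph i, ?_⟩⟩
  · exact mem_nonZeroDivisors_of_ne_zero (fun h => hu2 (h ▸ Submodule.zero_mem _))
  · obtain ⟨t, ht⟩ := Finset.dvd_prod_of_mem z (Finset.mem_univ i)
    rw [ht]
    exact Ideal.mul_mem_right _ _ (hpz i)
end

section
/- Let (A, 𝔪) be a Noetherian local ring that is a unique factorization domain, and suppose the order function of 𝔪 is additive in the following sense: whenever a ∈ 𝔪^i \ 𝔪^{i+1} and b ∈ 𝔪^j \ 𝔪^{j+1}, then ab ∉ 𝔪^{i+j+1} (equivalently, the associated graded ring G_𝔪(A) is a domain). If u ∈ 𝔪^s \ 𝔪^{s+1} is nonzero, then the number of height-one prime ideals of A containing u is at most s. -/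
open IsLocalRing

lemma aux_eq_span {A : Type*} [CommRing A] [IsDomain A]
    {p : A} (hp : Prime p) {Q : PrimeSpectrum A} (hQ : Order.height Q = 1)
    (hpQ : p ∈ Q.asIdeal) : Q.asIdeal = Ideal.span {p} := by
  let P1 : PrimeSpectrum A := ⟨Ideal.span {p}, (Ideal.span_singleton_prime hp.ne_zero).mpr hp⟩
  let P0 : PrimeSpectrum A := ⟨⊥, Ideal.bot_prime⟩
  have hle : P1 ≤ Q := (PrimeSpectrum.asIdeal_le_asIdeal _ _).mp
    ((Ideal.span_singleton_le_iff_mem _).mpr hpQ)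
  rcases eq_or_lt_of_le hle with h | h
  · exact (congrArg PrimeSpectrum.asIdeal h).symm
  · exfalso
    have h1fin : Order.height P1 < ⊤ := by
      have := Order.height_mono hle
      rw [hQ] at this
      exact lt_of_le_of_lt this (by exact_mod_cast ENat.coe_lt_top 1)
    have h01 : P0 < P1 := by
      rw [← PrimeSpectrum.asIdeal_lt_asIdeal]
      exact bot_lt_iff_ne_bot.mpr (by simpa [P1, Ideal.span_singleton_eq_bot] using hp.ne_zero)
    have h0fin : Order.height P0 < ⊤ := lt_of_le_of_lt (Order.height_mono h01.le) h1fin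
    have hlt1 : Order.height P0 < Order.height P1 := Order.height_strictMono h01 h0fin
    have hlt2 : Order.height P1 < Order.height Q := Order.height_strictMono h h1fin
    rw [hQ] at hlt2
    have h1le : (1 : ℕ∞) ≤ Order.height P1 :=
      ENat.one_le_iff_ne_zero.mpr (pos_iff_ne_zero.mp (lt_of_le_of_lt zero_le hlt1))
    exact absurd (lt_of_le_of_lt h1le hlt2) (lt_irrefl _)

lemma aux_main {A : Type*} [CommRing A] [IsLocalRing A] [IsDomain A]
    [UniqueFactorizationMonoid A] :
    ∀ (s : ℕ) (u : A), u ≠ 0 → u ∉ maximalIdeal A ^ (s + 1) →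
      {P : PrimeSpectrum A | Order.height P = 1 ∧ u ∈ P.asIdeal}.Finite ∧
      {P : PrimeSpectrum A | Order.height P = 1 ∧ u ∈ P.asIdeal}.ncard ≤ s := by
  intro s
  induction s with
  | zero =>
    intro u hne hu'
    have hempty : {P : PrimeSpectrum A | Order.height P = 1 ∧ u ∈ P.asIdeal} = ∅ := by
      ext P
      simp only [Set.mem_setOf_eq, Set.mem_empty_iff_false, iff_false, not_and]
      intro _ hup
      exact hu' (by simpa using IsLocalRing.le_maximalIdeal P.2.ne_top hup)
    rw [hempty]
    simp
  | succ s ih =>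
    intro u hne hu'
    by_cases hS : {P : PrimeSpectrum A | Order.height P = 1 ∧ u ∈ P.asIdeal} = ∅
    · rw [hS]; simp
    · obtain ⟨P, hP1, hPu⟩ := Set.nonempty_iff_ne_empty.mpr hS
      obtain ⟨f, hfp, hfu⟩ := UniqueFactorizationMonoid.exists_prime_factors u hne
      obtain ⟨c, hc⟩ := hfu.symm.dvd
      have hprodP : f.prod ∈ P.asIdeal := hc ▸ Ideal.mul_mem_right _ _ hPu
      obtain ⟨p, hpf, hpP⟩ := (P.2.multiset_prod_mem_iff_exists_mem f).mp hprodP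
      have hp : Prime p := hfp p hpf
      have hpdvd : p ∣ u := dvd_trans (Multiset.dvd_prod hpf) hfu.dvd
      obtain ⟨v, hv⟩ := hpdvd
      have hvne : v ≠ 0 := by
        rintro rfl
        exact hne (by simpa using hv)
      have hpm : p ∈ maximalIdeal A := by
        rw [IsLocalRing.mem_maximalIdeal]
        exact hp.not_unit
      have hv' : v ∉ maximalIdeal A ^ (s + 1) := by
        intro hmem
        apply hu'
        rw [hv, pow_succ']
        exact Ideal.mul_mem_mul hpm hmem
      obtain ⟨hfin, hcard⟩ := ih v hvne hv'
      have hsub : {Q : PrimeSpectrum A | Order.height Q = 1 ∧ u ∈ Q.asIdeal} ⊆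
          insert P {Q : PrimeSpectrum A | Order.height Q = 1 ∧ v ∈ Q.asIdeal} := by
        rintro Q ⟨hQ1, hQu⟩
        rcases Q.2.mem_or_mem (show p * v ∈ Q.asIdeal from hv ▸ hQu) with hpQ | hvQ
        · left
          exact PrimeSpectrum.ext ((aux_eq_span hp hQ1 hpQ).trans
            (aux_eq_span hp hP1 hpP).symm)
        · right
          exact ⟨hQ1, hvQ⟩
      have hfin' : {Q : PrimeSpectrum A | Order.height Q = 1 ∧ u ∈ Q.asIdeal}.Finite :=
        (hfin.insert P).subset hsub
      refine ⟨hfin', ?_⟩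
      calc {Q : PrimeSpectrum A | Order.height Q = 1 ∧ u ∈ Q.asIdeal}.ncard
          ≤ (insert P {Q : PrimeSpectrum A | Order.height Q = 1 ∧ v ∈ Q.asIdeal}).ncard :=
            Set.ncard_le_ncard hsub (hfin.insert P)
        _ ≤ {Q : PrimeSpectrum A | Order.height Q = 1 ∧ v ∈ Q.asIdeal}.ncard + 1 :=
            Set.ncard_insert_le _ _
        _ ≤ s + 1 := by omega

/-- Let `(A, 𝔪)` be a Noetherian local ring which is a UFD, such that the order function of
`𝔪` is additive (equivalently, the associated graded ring is a domain). If `u ∈ 𝔪^s \ 𝔪^{s+1}`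
is nonzero, then the number of height-one primes of `A` containing `u` is at most `s`. -/
theorem stmt_1 (A : Type*) [CommRing A] [IsNoetherianRing A] [IsLocalRing A]
    [IsDomain A] [UniqueFactorizationMonoid A]
    (hadd : ∀ (i j : ℕ) (a b : A),
      a ∈ maximalIdeal A ^ i → a ∉ maximalIdeal A ^ (i + 1) →
      b ∈ maximalIdeal A ^ j → b ∉ maximalIdeal A ^ (j + 1) →
      a * b ∉ maximalIdeal A ^ (i + j + 1))
    (s : ℕ) (u : A) (hu : u ∈ maximalIdeal A ^ s) (hu' : u ∉ maximalIdeal A ^ (s + 1))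
    (hne : u ≠ 0) :
    {P : PrimeSpectrum A | Order.height P = 1 ∧ u ∈ P.asIdeal}.Finite ∧
    {P : PrimeSpectrum A | Order.height P = 1 ∧ u ∈ P.asIdeal}.ncard ≤ s := by
  exact aux_main s u hne hu'
end

section
/- Let k be an algebraically closed field and let m, n ≥ 2 be integers with gcd(m, n) = 1 such that mn is invertible in k (i.e., the image of m·n in k is nonzero). Then the polynomial Y^m − X^n is irreducible in the polynomial ring k[X, Y]. -/
open MvPolynomial

theorem intDegree_pow {K : Type*} [Field K] (x : RatFunc K) (hx : x ≠ 0) (p : ℕ) :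
    (x ^ p).intDegree = p * x.intDegree := by
  induction p with
  | zero => simp [RatFunc.intDegree_one]
  | succ q ih =>
      rw [pow_succ, RatFunc.intDegree_mul (pow_ne_zero q hx) hx, ih]
      push_cast; ring

theorem key (k : Type*) [Field k] (m n : ℕ) (hmodd : Odd m) (hm : 1 ≤ m) (hn : 1 ≤ n)
    (hgcd : Nat.gcd m n = 1) :
    Irreducible (Polynomial.X ^ m - Polynomial.C ((Polynomial.X : Polynomial k) ^ n)) := by
  have hmonic := Polynomial.monic_X_pow_sub_C ((Polynomial.X : Polynomial k) ^ n)
    (by omega : m ≠ 0)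
  rw [hmonic.irreducible_iff_irreducible_map_fraction_map (K := RatFunc k)]
  rw [Polynomial.map_sub, Polynomial.map_pow, Polynomial.map_X, Polynomial.map_C]
  apply X_pow_sub_C_irreducible_of_odd hmodd
  intro p hp hpm b hb
  have hb0 : b ≠ 0 := by
    rintro rfl
    rw [zero_pow hp.ne_zero] at hb
    have : ((Polynomial.X : Polynomial k) ^ n) = 0 :=
      (map_eq_zero_iff _ (RatFunc.algebraMap_injective k)).mp hb.symm
    simp at this
  have hdeg := congrArg RatFunc.intDegree hb
  rw [intDegree_pow b hb0, RatFunc.intDegree_polynomial] at hdeg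
  have hXn : (Polynomial.X ^ n : Polynomial k).natDegree = n := by
    simp [Polynomial.natDegree_X_pow]
  rw [hXn] at hdeg
  have hpn : p ∣ n := by
    have : (p : ℤ) ∣ (n : ℤ) := ⟨b.intDegree, hdeg.symm⟩
    exact_mod_cast this
  have := Nat.dvd_gcd hpm hpn
  rw [hgcd] at this
  exact hp.ne_one (Nat.dvd_one.mp this)

theorem aux (k : Type*) [Field k] (m n : ℕ) (hmodd : Odd m) (hm : 1 ≤ m) (hn : 1 ≤ n)
    (hgcd : Nat.gcd m n = 1) :
    Irreducible ((X 1 : MvPolynomial (Fin 2) k) ^ m - (X 0) ^ n) := by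
  let e : MvPolynomial (Fin 1) k ≃ₐ[k] Polynomial k :=
    (renameEquiv k ((Equiv.equivPUnit (Fin 1)) : Fin 1 ≃ PUnit.{1})).trans (pUnitAlgEquiv k)
  let F : MvPolynomial (Fin 2) k ≃ₐ[k] Polynomial (Polynomial k) :=
    (renameEquiv k (Equiv.swap (0 : Fin 2) 1)).trans
      ((finSuccEquiv k 1).trans (Polynomial.mapAlgEquiv e))
  have hF : F ((X 1 : MvPolynomial (Fin 2) k) ^ m - (X 0) ^ n)
      = Polynomial.X ^ m - Polynomial.C ((Polynomial.X : Polynomial k) ^ n) := by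
    have h1 : F (X 1) = Polynomial.X := by
      simp [F, e, Equiv.swap_apply_right, finSuccEquiv_X_zero]
    have h0 : F (X 0) = Polynomial.C (Polynomial.X : Polynomial k) := by
      have h01 : (1 : Fin 2) = Fin.succ 0 := rfl
      show Polynomial.map (e : MvPolynomial (Fin 1) k →+* Polynomial k)
        ((finSuccEquiv k 1) (rename (Equiv.swap (0 : Fin 2) 1) (X 0))) = _
      rw [rename_X, Equiv.swap_apply_left, h01, finSuccEquiv_X_succ, Polynomial.map_C]
      congr 1
      simp [e]
    rw [map_sub, map_pow, map_pow, h1, h0, ← map_pow]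
  have hirr := key k m n hmodd hm hn hgcd
  rw [← hF] at hirr
  exact (MulEquiv.irreducible_iff F.toMulEquiv).mp hirr

/-- Let `k` be an algebraically closed field and `m, n ≥ 2` integers with `gcd(m,n) = 1`
such that `m·n` is invertible in `k`. Then `Y^m − X^n` is irreducible in `k[X, Y]`. -/
theorem stmt_2 (k : Type*) [Field k] [IsAlgClosed k] (m n : ℕ)
    (hm : 2 ≤ m) (hn : 2 ≤ n) (hgcd : Nat.gcd m n = 1)
    (hchar : ((m * n : ℕ) : k) ≠ 0) :
    Irreducible ((X 1 : MvPolynomial (Fin 2) k) ^ m - (X 0) ^ n) := by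
  rcases Nat.even_or_odd m with hme | hmo
  · have hno : Odd n := by
      rcases Nat.even_or_odd n with hne | hno
      · exfalso
        have : 2 ∣ Nat.gcd m n := Nat.dvd_gcd hme.two_dvd hne.two_dvd
        omega
      · exact hno
    have h1 := aux k n m hno (by omega) (by omega) (by rw [Nat.gcd_comm]; exact hgcd)
    let G := renameEquiv k (Equiv.swap (0 : Fin 2) 1)
    have h2 := (MulEquiv.irreducible_iff G.toMulEquiv).mpr h1
    have hG : G.toMulEquiv ((X 1 : MvPolynomial (Fin 2) k) ^ n - (X 0) ^ m)
        = (X 0 : MvPolynomial (Fin 2) k) ^ n - (X 1) ^ m := by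
      simp [G, Equiv.swap_apply_left, Equiv.swap_apply_right]
    rw [hG] at h2
    have h3 : (X 1 : MvPolynomial (Fin 2) k) ^ m - (X 0) ^ n
        = -1 * ((X 0 : MvPolynomial (Fin 2) k) ^ n - (X 1) ^ m) := by ring
    rw [h3]
    exact (irreducible_isUnit_mul isUnit_one.neg).mpr h2
  · exact aux k m n hmo (by omega) (by omega) hgcd
end

section
/- Let k be an algebraically closed field and let m, n ≥ 2 be integers with gcd(m, n) = 1 such that mn is invertible in k (i.e., the image of m·n in k is nonzero). Then for every nonzero α ∈ k, the polynomial Y^m + α X^n is irreducible in the polynomial ring k[X, Y]. -/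
open MvPolynomial

lemma rm_pow_aux {k : Type*} [Field k] (f : Polynomial k) (hf : f ≠ 0) (p : ℕ) (x : k) :
    Polynomial.rootMultiplicity x (f ^ p) = p * Polynomial.rootMultiplicity x f := by
  induction p with
  | zero => simp
  | succ p ih =>
      rw [pow_succ, Polynomial.rootMultiplicity_mul (mul_ne_zero (pow_ne_zero _ hf) hf), ih]
      ring

lemma not_pth_power_aux {k : Type*} [Field k] (p n : ℕ) (hp : p.Prime) (hpn : ¬ p ∣ n)
    (β : k) (hβ : β ≠ 0) (b : RatFunc k) : b ^ p ≠ RatFunc.C β * RatFunc.X ^ n := by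
  intro h
  have hrhs : RatFunc.C β * RatFunc.X ^ n ≠ 0 :=
    mul_ne_zero (by simpa using hβ) (pow_ne_zero _ RatFunc.X_ne_zero)
  have hb : b ≠ 0 := by
    rintro rfl
    exact hrhs (by simpa [zero_pow hp.ne_zero] using h.symm)
  have hgne : b.denom ≠ 0 := b.denom_ne_zero
  have hfne : b.num ≠ 0 := RatFunc.num_ne_zero hb
  have hbd : algebraMap (Polynomial k) (RatFunc k) b.num
      = b * algebraMap (Polynomial k) (RatFunc k) b.denom :=
    (div_eq_iff (RatFunc.algebraMap_ne_zero hgne)).mp (RatFunc.num_div_denom b)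
  have key : algebraMap (Polynomial k) (RatFunc k) (b.num ^ p) =
      algebraMap (Polynomial k) (RatFunc k)
        (Polynomial.C β * Polynomial.X ^ n * b.denom ^ p) := by
    have h2 := congrArg (· ^ p) hbd
    simp only [mul_pow] at h2
    rw [map_pow, h2, h, map_mul, map_mul, map_pow, map_pow,
      RatFunc.algebraMap_C, RatFunc.algebraMap_X]
  have key2 : b.num ^ p = Polynomial.C β * Polynomial.X ^ n * b.denom ^ p :=
    RatFunc.algebraMap_injective k key
  have h1 : Polynomial.rootMultiplicity (0 : k) (b.num ^ p)
      = p * Polynomial.rootMultiplicity 0 b.num := rm_pow_aux b.num hfne p 0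
  have hCXne : Polynomial.C β * Polynomial.X ^ n ≠ (0 : Polynomial k) :=
    mul_ne_zero (by simpa using hβ) (pow_ne_zero _ Polynomial.X_ne_zero)
  have h2 : Polynomial.rootMultiplicity (0 : k)
      (Polynomial.C β * Polynomial.X ^ n * b.denom ^ p)
      = n + p * Polynomial.rootMultiplicity 0 b.denom := by
    rw [Polynomial.rootMultiplicity_mul (mul_ne_zero hCXne (pow_ne_zero _ hgne)),
      Polynomial.rootMultiplicity_mul hCXne, rm_pow_aux b.denom hgne p 0]
    have hX : Polynomial.rootMultiplicity (0 : k) (Polynomial.X ^ n) = n := by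
      simpa using Polynomial.rootMultiplicity_X_sub_C_pow (0 : k) n
    have hC : Polynomial.rootMultiplicity (0 : k) (Polynomial.C β) = 0 :=
      Polynomial.rootMultiplicity_eq_zero (by simpa [Polynomial.IsRoot] using hβ)
    rw [hX, hC]
    omega
  have heq : p * Polynomial.rootMultiplicity (0 : k) b.num
      = p * Polynomial.rootMultiplicity (0 : k) b.denom + n := by
    rw [← h1, key2, h2]; ring
  exact hpn ((Nat.dvd_add_right (dvd_mul_right p _)).mp
    (heq ▸ dvd_mul_right p (Polynomial.rootMultiplicity (0 : k) b.num)))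

lemma irreducible_aux {k : Type*} [Field k] (m n : ℕ) (hmodd : Odd m)
    (hcop : ∀ p : ℕ, p.Prime → p ∣ m → ¬ p ∣ n) (β : k) (hβ : β ≠ 0) :
    Irreducible ((Polynomial.X : Polynomial (Polynomial k)) ^ m
      - Polynomial.C (Polynomial.C β * Polynomial.X ^ n)) := by
  have hm0 : m ≠ 0 := by rintro rfl; simp [Nat.odd_iff] at hmodd
  have hmonic : ((Polynomial.X : Polynomial (Polynomial k)) ^ m
      - Polynomial.C (Polynomial.C β * Polynomial.X ^ n)).Monic :=
    Polynomial.monic_X_pow_sub_C _ hm0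
  rw [hmonic.irreducible_iff_irreducible_map_fraction_map (K := RatFunc k)]
  rw [Polynomial.map_sub, Polynomial.map_pow, Polynomial.map_X, Polynomial.map_C]
  apply X_pow_sub_C_irreducible_of_odd hmodd
  intro p hp hpm b hb
  rw [map_mul, map_pow, RatFunc.algebraMap_C, RatFunc.algebraMap_X] at hb
  exact not_pth_power_aux p n hp (hcop p hp hpm) β hβ b hb

/-- Let `k` be an algebraically closed field and `m, n ≥ 2` integers with `gcd(m,n) = 1`
such that `m·n` is invertible in `k`. Then for every nonzero `α ∈ k`, the polynomial
`Y^m + α X^n` is irreducible in `k[X, Y]`. -/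
theorem stmt_3 (k : Type*) [Field k] [IsAlgClosed k] (m n : ℕ)
    (hm : 2 ≤ m) (hn : 2 ≤ n) (hgcd : Nat.gcd m n = 1)
    (hchar : ((m * n : ℕ) : k) ≠ 0) (α : k) (hα : α ≠ 0) :
    Irreducible ((X 1 : MvPolynomial (Fin 2) k) ^ m + C α * (X 0) ^ n) := by
  classical
  -- the algebra equivalence `k[X 0, X 1] ≃ (k[X])[Y]` with `X 0 ↦ X` (inner), `... `
  let e2 : MvPolynomial (Fin 1) k ≃ₐ[k] Polynomial k :=
    (MvPolynomial.finSuccEquiv k 0).trans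
      (Polynomial.mapAlgEquiv (MvPolynomial.isEmptyAlgEquiv k (Fin 0)))
  let e : MvPolynomial (Fin 2) k ≃ₐ[k] Polynomial (Polynomial k) :=
    (MvPolynomial.finSuccEquiv k 1).trans (Polynomial.mapAlgEquiv e2)
  have he0 : e (X 0) = Polynomial.X := by
    simp [e, MvPolynomial.finSuccEquiv_X_zero]
  have he1 : e (X 1) = Polynomial.C Polynomial.X := by
    have h1 : (1 : Fin 2) = Fin.succ 0 := rfl
    rw [show e (X 1) = Polynomial.mapAlgEquiv e2 ((MvPolynomial.finSuccEquiv k 1) (X 1)) from rfl,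
      h1, MvPolynomial.finSuccEquiv_X_succ]
    simp [e2, MvPolynomial.finSuccEquiv_X_zero]
  have heC : ∀ c : k, e (C c) = Polynomial.C (Polynomial.C c) := by
    intro c
    simp [e, e2, MvPolynomial.finSuccEquiv_apply, Polynomial.algebraMap_apply,
      MvPolynomial.algebraMap_eq]
    exact MvPolynomial.coeff_zero_C c
  -- coprimality consequences
  have hcop : Nat.Coprime m n := hgcd
  have hm0 : 0 < m := by omega
  have hn0 : 0 < n := by omega
  have hparity : Odd m ∨ Odd n := by
    by_contra hcon
    push_neg at hcon
    rw [Nat.not_odd_iff_even, Nat.not_odd_iff_even] at hcon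
    have h2 : 2 ∣ Nat.gcd m n := Nat.dvd_gcd hcon.1.two_dvd hcon.2.two_dvd
    omega
  rcases hparity with hmodd | hnodd
  · -- `m` odd: swap the variables so that `X 1` becomes the outer variable
    let s : MvPolynomial (Fin 2) k ≃ₐ[k] MvPolynomial (Fin 2) k :=
      MvPolynomial.renameEquiv k (Equiv.swap (0 : Fin 2) 1)
    have := irreducible_aux (k := k) m n hmodd
      (fun p hp hpm hpn => hp.one_lt.ne' (Nat.eq_one_of_dvd_coprimes hcop hpm hpn ▸ rfl))
      (-α) (neg_ne_zero.mpr hα)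
    rw [← MulEquiv.irreducible_iff (s.trans e)]
    convert this using 1
    have hs1 : s (X 1) = X 0 := by simp [s, Equiv.swap_apply_right]
    have hs0 : s (X 0) = X 1 := by simp [s, Equiv.swap_apply_left]
    have hsC : s (C α) = C α := by simp [s]
    simp only [AlgEquiv.trans_apply, map_add, map_mul, map_pow, hs1, hs0, hsC,
      he0, he1, heC]
    simp only [map_neg]
    ring
  · -- `n` odd: `X 0` is already the outer variable, but we must factor out the unit `C α`
    have := irreducible_aux (k := k) n m hnodd
      (fun p hp hpn hpm => hp.one_lt.ne' (Nat.eq_one_of_dvd_coprimes hcop hpm hpn ▸ rfl))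
      (-α⁻¹) (neg_ne_zero.mpr (inv_ne_zero hα))
    rw [← MulEquiv.irreducible_iff e]
    have hkey : e ((X 1 : MvPolynomial (Fin 2) k) ^ m + C α * (X 0) ^ n)
        = Polynomial.C (Polynomial.C α) *
          ((Polynomial.X : Polynomial (Polynomial k)) ^ n
            - Polynomial.C (Polynomial.C (-α⁻¹) * Polynomial.X ^ m)) := by
      simp only [map_add, map_mul, map_pow, he0, he1, heC]
      simp only [map_neg]
      have hinv : Polynomial.C (Polynomial.C α) * Polynomial.C (Polynomial.C α⁻¹)
          = (1 : Polynomial (Polynomial k)) := by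
        rw [← map_mul, ← map_mul, mul_inv_cancel₀ hα, map_one, map_one]
      linear_combination (Polynomial.C Polynomial.X ^ m : Polynomial (Polynomial k)) * hinv.symm
    rw [hkey]
    have hu : IsUnit (Polynomial.C (Polynomial.C α) : Polynomial (Polynomial k)) :=
      Polynomial.isUnit_C.mpr (Polynomial.isUnit_C.mpr (isUnit_iff_ne_zero.mpr hα))
    exact (irreducible_isUnit_mul hu).mpr this
end

section
/- Let k be an algebraically closed field, let d ≥ 2 be an integer, and let m, n ≥ 2 be integers with gcd(m, n) = 1 such that mn is invertible in k (i.e., the image of m·n in k is nonzero). Then the polynomial f = Y^m + X_1^n + X_2^n + ⋯ + X_d^n is irreducible in the polynomial ring k[X_1, …, X_d, Y]. -/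
set_option synthInstance.maxHeartbeats 1000000
set_option maxHeartbeats 1000000

open MvPolynomial

lemma aux_kummer {R : Type*} [CommRing R] [IsDomain R] [IsIntegrallyClosed R]
    (a : ℕ) (h1 : 0 < a) (ha : Odd a) (c : R)
    (hc : ∀ p : ℕ, p.Prime → p ∣ a → ∀ b : R, b ^ p ≠ c) :
    Irreducible (Polynomial.X ^ a - Polynomial.C c) := by
  have hmonic : (Polynomial.X ^ a - Polynomial.C c).Monic := by
    apply Polynomial.monic_X_pow_sub_C _ h1.ne'
  rw [hmonic.irreducible_iff_irreducible_map_fraction_map (K := FractionRing R)]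
  rw [Polynomial.map_sub, Polynomial.map_pow, Polynomial.map_X, Polynomial.map_C]
  apply X_pow_sub_C_irreducible_of_odd ha
  intro p hp hpa b hb
  have hInt : IsIntegral R b := by
    refine ⟨Polynomial.X ^ p - Polynomial.C c, Polynomial.monic_X_pow_sub_C _ hp.ne_zero, ?_⟩
    simp [hb]
  obtain ⟨y, hy⟩ := IsIntegrallyClosed.isIntegral_iff.mp hInt
  apply hc p hp hpa y
  have : algebraMap R (FractionRing R) (y ^ p) = algebraMap R (FractionRing R) c := by
    rw [map_pow, hy, hb]
  exact IsFractionRing.injective R (FractionRing R) this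

/-- The image under `finSuccEquiv` of `X 0 ^ a + ∑ i, X i.succ ^ b i`. -/
lemma aux_image (k : Type*) [CommRing k] (e a : ℕ) (b : Fin e → ℕ) :
    finSuccEquiv k e ((X 0 : MvPolynomial (Fin (e+1)) k) ^ a
        + ∑ i : Fin e, X i.succ ^ b i)
      = Polynomial.X ^ a
        + Polynomial.C (∑ i : Fin e, (X i : MvPolynomial (Fin e) k) ^ b i) := by
  rw [map_add, map_pow, map_sum, finSuccEquiv_X_zero, map_sum]
  congr 1
  refine Finset.sum_congr rfl fun i _ => ?_
  rw [map_pow, finSuccEquiv_X_succ, ← map_pow]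

/-- Let `k` be an algebraically closed field, `d ≥ 2`, and `m, n ≥ 2` integers with
`gcd(m,n) = 1` such that `m·n` is invertible in `k`. Then
`f = Y^m + X_1^n + ⋯ + X_d^n` is irreducible in `k[X_1, …, X_d, Y]`
(here `Y` is the last variable of `Fin (d+1)` and `X_1, …, X_d` are the first `d`). -/
theorem stmt_4 (k : Type*) [Field k] [IsAlgClosed k] (d m n : ℕ)
    (hd : 2 ≤ d) (hm : 2 ≤ m) (hn : 2 ≤ n) (hgcd : Nat.gcd m n = 1)
    (hchar : ((m * n : ℕ) : k) ≠ 0) :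
    Irreducible ((X (Fin.last d) : MvPolynomial (Fin (d + 1)) k) ^ m
      + ∑ i : Fin d, (X (Fin.castSucc i)) ^ n) := by
  obtain ⟨e, rfl⟩ : ∃ e, d = e + 1 := ⟨d - 1, by omega⟩
  have hdvd : ∀ p : ℕ, p.Prime → p ∣ m → p ∣ n → False := by
    intro p pp h1 h2
    have : p ∣ 1 := hgcd ▸ Nat.dvd_gcd h1 h2
    exact pp.one_lt.ne' (Nat.dvd_one.mp this)
  rcases Nat.even_or_odd m with hme | hmo
  · -- m even, hence n odd
    have hno : Odd n := by
      rcases Nat.even_or_odd n with h | h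
      · exact (hdvd 2 Nat.prime_two hme.two_dvd h.two_dvd).elim
      · exact h
    rw [← MulEquiv.irreducible_iff (finSuccEquiv k (e + 1))]
    have himg : (finSuccEquiv k (e + 1))
        ((X (Fin.last (e + 1)) : MvPolynomial (Fin (e + 1 + 1)) k) ^ m
          + ∑ i : Fin (e + 1), X (Fin.castSucc i) ^ n)
        = Polynomial.X ^ n - Polynomial.C
            (-((X (Fin.last e) : MvPolynomial (Fin (e + 1)) k) ^ m
              + ∑ j : Fin e, X (Fin.castSucc j) ^ n)) := by
      rw [map_neg, sub_neg_eq_add, Fin.sum_univ_succ, Fin.castSucc_zero,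
        ← Fin.succ_last]
      rw [map_add, map_add, map_pow, map_pow, finSuccEquiv_X_zero, finSuccEquiv_X_succ,
        map_sum, map_add, map_pow]
      simp only [← Fin.succ_castSucc, map_pow, finSuccEquiv_X_succ]
      simp only [← Polynomial.C_pow, ← map_sum]
      ring
    rw [himg]
    refine aux_kummer n (by omega) hno _ ?_
    intro p pp hpn b hb
    exfalso
    refine hdvd p pp ?_ hpn
    -- degree argument via rename rev then finSuccEquiv
    have hb' := congrArg (fun x =>
      ((finSuccEquiv k e) (rename (Fin.rev : Fin (e+1) → Fin (e+1)) x)).natDegree) hb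
    simp only [map_pow, map_neg, map_add, map_sum, rename_X, Fin.rev_last, Fin.rev_castSucc,
      finSuccEquiv_X_zero, finSuccEquiv_X_succ] at hb'
    simp only [← Polynomial.C_pow, ← map_sum] at hb'
    rw [Polynomial.natDegree_pow, Polynomial.natDegree_neg,
      Polynomial.natDegree_X_pow_add_C] at hb'
    exact ⟨_, hb'.symm⟩
  · -- m odd
    rw [← MulEquiv.irreducible_iff (renameEquiv k (Fin.revPerm (n := e + 1 + 1)))]
    rw [← MulEquiv.irreducible_iff (finSuccEquiv k (e + 1))]
    have himg : (finSuccEquiv k (e + 1)) ((renameEquiv k (Fin.revPerm (n := e + 1 + 1)))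
        ((X (Fin.last (e + 1)) : MvPolynomial (Fin (e + 1 + 1)) k) ^ m
          + ∑ i : Fin (e + 1), X (Fin.castSucc i) ^ n))
        = Polynomial.X ^ m - Polynomial.C
            (-(∑ j : Fin (e + 1), (X j : MvPolynomial (Fin (e + 1)) k) ^ n)) := by
      rw [map_neg, sub_neg_eq_add]
      simp only [renameEquiv_apply, map_add, map_pow, map_sum, rename_X, Fin.revPerm_apply,
        Fin.rev_last, Fin.rev_castSucc, finSuccEquiv_X_zero, finSuccEquiv_X_succ]
      simp only [← Polynomial.C_pow, ← map_sum]
      congr 2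
      exact Fintype.sum_equiv Fin.revPerm _ _ (fun i => rfl)
    rw [himg]
    refine aux_kummer m (by omega) hmo _ ?_
    intro p pp hpm b hb
    exfalso
    refine hdvd p pp hpm ?_
    have hGb := congrArg (fun x => ((finSuccEquiv k e) x).natDegree) hb
    have hGc : finSuccEquiv k e (-(∑ j : Fin (e + 1), (X j : MvPolynomial (Fin (e + 1)) k) ^ n))
        = -(Polynomial.X ^ n
          + Polynomial.C (∑ j : Fin e, (X j : MvPolynomial (Fin e) k) ^ n)) := by
      rw [map_neg]
      congr 1
      rw [Fin.sum_univ_succ]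
      exact aux_image k e n (fun _ => n)
    rw [hGc, map_pow, Polynomial.natDegree_pow, Polynomial.natDegree_neg,
      Polynomial.natDegree_X_pow_add_C] at hGb
    exact ⟨_, hGb.symm⟩
end

section
/- Let k be an algebraically closed field, let d ≥ 2 be an integer, and let m, n ≥ 2 be integers with gcd(m, n) = 1 such that mn is invertible in k (i.e., the image of m·n in k is nonzero). Let a, b ≥ 1 be integers with a + b = n. Then the polynomial g = X^n + Y^m + X^a Z^b + W_3^n + W_4^n + ⋯ + W_d^n is irreducible in the polynomial ring k[X, Y, Z, W_3, …, W_d] (when d = 2 this ring is k[X, Y, Z] and g = X^n + Y^m + X^a Z^b). -/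
set_option maxHeartbeats 1000000
set_option synthInstance.maxHeartbeats 400000

open MvPolynomial

section KeyLemma
open Polynomial

lemma key_norm_lemma {K : Type*} [Field K] {m : ℕ} (hm : 1 ≤ m) {t : K}
    (H : ∀ (N : K) (r : ℕ), 1 ≤ r → r ≤ m → N ^ m = t ^ r → m ∣ r) :
    Irreducible (Polynomial.X ^ m - Polynomial.C t) := by
  classical
  set G : Polynomial K := Polynomial.X ^ m - Polynomial.C t with hG
  have hmon : G.Monic := monic_X_pow_sub_C t (by omega)
  have hG0 : G ≠ 0 := hmon.ne_zero
  have hdegG : G.natDegree = m := natDegree_X_pow_sub_C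
  have hnotunit : ¬ IsUnit G := by
    intro h
    have := natDegree_eq_zero_of_isUnit h
    omega
  obtain ⟨f, hfm, hfi, hfd⟩ := Polynomial.exists_monic_irreducible_factor G hnotunit
  have hr1 : 1 ≤ f.natDegree := hfi.natDegree_pos
  have hrm : f.natDegree ≤ m := hdegG ▸ Polynomial.natDegree_le_of_dvd hfd hG0
  haveI : Fact (Irreducible f) := ⟨hfi⟩
  have hf0 : f ≠ 0 := hfm.ne_zero
  let pb := AdjoinRoot.powerBasis hf0
  have hfinrank : Module.finrank K (AdjoinRoot f) = f.natDegree := by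
    rw [pb.finrank]
    rfl
  have hroot : (AdjoinRoot.root f) ^ m = algebraMap K (AdjoinRoot f) t := by
    have h0 : AdjoinRoot.mk f G = 0 := AdjoinRoot.mk_eq_zero.mpr hfd
    rw [hG, map_sub, map_pow, AdjoinRoot.mk_X, sub_eq_zero] at h0
    rw [h0]
    rfl
  have hN : (Algebra.norm K (AdjoinRoot.root f)) ^ m = t ^ f.natDegree := by
    rw [← map_pow, hroot, Algebra.norm_algebraMap, hfinrank]
  have hdvd : m ∣ f.natDegree := H _ _ hr1 hrm hN
  have hreq : f.natDegree = m := le_antisymm hrm (Nat.le_of_dvd (by omega) hdvd)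
  obtain ⟨q, hq⟩ := hfd
  have hq0 : q ≠ 0 := by
    rintro rfl
    rw [mul_zero] at hq
    exact hG0 hq
  have hdq : q.natDegree = 0 := by
    have := Polynomial.natDegree_mul hf0 hq0
    rw [← hq, hdegG, hreq] at this
    omega
  have hqu : IsUnit q := by
    rw [Polynomial.eq_C_of_natDegree_eq_zero hdq]
    apply Polynomial.isUnit_C.mpr
    apply IsUnit.mk0
    intro h
    apply hq0
    rw [Polynomial.eq_C_of_natDegree_eq_zero hdq, h, map_zero]
  have hassoc : Associated f G := ⟨hqu.unit, by rw [IsUnit.unit_spec, ← hq]⟩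
  exact hassoc.irreducible hfi

end KeyLemma

/-- Let `k` be an algebraically closed field, `d ≥ 2`, and `m, n ≥ 2` integers with
`gcd(m,n) = 1` such that `m·n` is invertible in `k`, and `a, b ≥ 1` with `a + b = n`.
Then `g = X^n + Y^m + X^a Z^b + W_3^n + ⋯ + W_d^n` is irreducible in
`k[X, Y, Z, W_3, …, W_d]` (the variables `X, Y, Z, W_3, …, W_d` are indexed by
`0, 1, 2, 3, …, d` in `Fin (d+1)`; when `d = 2` the sum over the `W_j` is empty). -/
theorem stmt_5 (k : Type*) [Field k] [IsAlgClosed k] (d m n a b : ℕ)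
    (hd : 2 ≤ d) (hm : 2 ≤ m) (hn : 2 ≤ n) (hgcd : Nat.gcd m n = 1)
    (hchar : ((m * n : ℕ) : k) ≠ 0) (ha : 1 ≤ a) (hb : 1 ≤ b) (hab : a + b = n) :
    Irreducible ((X 0 : MvPolynomial (Fin (d + 1)) k) ^ n + (X 1) ^ m
      + (X 0) ^ a * (X 2) ^ b
      + ∑ j ∈ Finset.univ.filter (fun j : Fin (d + 1) => 3 ≤ (j : ℕ)), (X j) ^ n) := by
  classical
  -- basic index facts
  have hv0 : ((0 : Fin (d + 1)) : ℕ) = 0 := rfl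
  have hv1 : ((1 : Fin (d + 1)) : ℕ) = 1 := by
    rw [Fin.val_one', Nat.mod_eq_of_lt (by omega)]
  have hv2 : ((2 : Fin (d + 1)) : ℕ) = 2 := by
    have h2 : (2 : Fin (d + 1)) = ⟨2 % (d + 1), Nat.mod_lt _ (by omega)⟩ := rfl
    rw [h2]
    simp [Nat.mod_eq_of_lt (by omega : 2 < d + 1)]
  set R := MvPolynomial (Fin d) k with hR
  -- the index equivalence
  let w : Fin (d + 1) → Fin d := fun j => ⟨(j : ℕ) - 1, by omega⟩
  let fidx : Fin (d + 1) → Option (Fin d) := fun j => if (j : ℕ) = 1 then none else some (w j)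
  have hbij : Function.Bijective fidx := by
    constructor
    · intro i j hij
      simp only [fidx] at hij
      by_cases hi : (i : ℕ) = 1 <;> by_cases hj : (j : ℕ) = 1
      · exact Fin.ext (by omega)
      · rw [if_pos hi, if_neg hj] at hij; exact absurd hij (by simp)
      · rw [if_neg hi, if_pos hj] at hij; exact absurd hij (by simp)
      · rw [if_neg hi, if_neg hj] at hij
        have := congrArg Fin.val (Option.some.inj hij)
        simp only [w] at this
        exact Fin.ext (by omega)
    · rintro (_ | ⟨i, hi⟩)
      · refine ⟨⟨1, by omega⟩, ?_⟩
        simp only [fidx]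
        simp
      · by_cases h0 : i = 0
        · refine ⟨⟨0, by omega⟩, ?_⟩
          simp only [fidx, w]
          rw [if_neg (by norm_num)]
          exact congrArg some (Fin.ext (by simp [h0]))
        · refine ⟨⟨i + 1, by omega⟩, ?_⟩
          simp only [fidx, w]
          rw [if_neg (by simpa using by omega)]
          exact congrArg some (Fin.ext (by simp))
  let e : Fin (d + 1) ≃ Option (Fin d) := Equiv.ofBijective fidx hbij
  let A := (renameEquiv k e).trans (optionEquivLeft k (Fin d))
  have hAX : ∀ j : Fin (d + 1), (j : ℕ) ≠ 1 → A (X j) = Polynomial.C (X (w j)) := by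
    intro j hj
    show (optionEquivLeft k (Fin d)) (rename e (X j)) = _
    rw [rename_X]
    have : e j = some (w j) := if_neg hj
    rw [this, optionEquivLeft_X_some]
  have hAY : A (X 1) = Polynomial.X := by
    show (optionEquivLeft k (Fin d)) (rename e (X 1)) = _
    rw [rename_X]
    have : e (1 : Fin (d + 1)) = none := if_pos hv1
    rw [this, optionEquivLeft_X_none]
  -- the coefficient polynomial
  set S : Finset (Fin (d + 1)) := Finset.univ.filter (fun j : Fin (d + 1) => 3 ≤ (j : ℕ)) with hS
  let x0 : Fin d := ⟨0, by omega⟩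
  let x1 : Fin d := ⟨1, by omega⟩
  set c : R := X x0 ^ n + X x0 ^ a * X x1 ^ b + ∑ j ∈ S, X (w j) ^ n with hc
  have hw0 : w 0 = x0 := Fin.ext (by simp [w, hv0, x0])
  have hw2 : w 2 = x1 := Fin.ext (by simp only [w, x1]; rw [hv2])
  have hmemS : ∀ j ∈ S, 3 ≤ (j : ℕ) := by
    intro j hj
    simpa [hS] using hj
  have hsum : A (∑ j ∈ S, (X j : MvPolynomial (Fin (d + 1)) k) ^ n)
      = Polynomial.C (∑ j ∈ S, (X (w j) : R) ^ n) := by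
    rw [map_sum, Finset.sum_congr rfl (fun j hj => by
      rw [map_pow, hAX j (by have := hmemS j hj; omega)])]
    simp [Polynomial.C_pow]
  have hAg : A ((X 0 : MvPolynomial (Fin (d + 1)) k) ^ n + (X 1) ^ m
      + (X 0) ^ a * (X 2) ^ b + ∑ j ∈ S, (X j) ^ n)
      = Polynomial.X ^ m + Polynomial.C c := by
    rw [map_add, map_add, map_add]
    rw [map_pow, map_pow, map_mul, map_pow, map_pow]
    rw [hAX 0 (by rw [hv0]; omega), hAX 2 (by rw [hv2]; omega), hAY, hw0, hw2, hsum, hc]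
    simp only [Polynomial.C_add, Polynomial.C_mul, Polynomial.C_pow]
    ring
  have hx01 : x1 ≠ x0 := by
    simp only [x0, x1, ne_eq, Fin.mk.injEq]
    omega
  have hwj : ∀ j ∈ S, w j ≠ x0 := by
    intro j hj
    have := hmemS j hj
    simp only [w, x0, ne_eq, Fin.mk.injEq]
    omega
  have hevalc : MvPolynomial.eval (fun i : Fin d => if i = x0 then (1 : k) else 0) c = 1 := by
    rw [hc, map_add, map_add, map_pow, map_mul, map_pow, map_pow, map_sum]
    simp only [eval_X]
    rw [Finset.sum_eq_zero (fun j hj => by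
        simp only [map_pow, eval_X]
        rw [if_neg (hwj j hj), zero_pow (by omega : n ≠ 0)])]
    simp [hx01, zero_pow (show b ≠ 0 by omega)]
  have hc0 : c ≠ 0 := by
    intro h
    rw [h, map_zero] at hevalc
    exact zero_ne_one hevalc
  -- integrally closed
  haveI : IsIntegrallyClosed R := by
    letI := UniqueFactorizationMonoid.toGCDMonoid R
    exact GCDMonoid.toIsIntegrallyClosed
  set K := FractionRing R with hK
  -- the homogenizing embedding
  set φ : R →ₐ[k] Polynomial R :=
    MvPolynomial.aeval (fun i : Fin d => Polynomial.C (X i) * Polynomial.X) with hφ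
  have hφretract : ∀ p : R, Polynomial.eval 1 (φ p) = p := by
    intro p
    induction p using MvPolynomial.induction_on with
    | C r =>
      rw [hφ, aeval_C, Polynomial.algebraMap_apply, Polynomial.eval_C, MvPolynomial.algebraMap_eq]
    | add p q hp hq => rw [map_add, Polynomial.eval_add, hp, hq]
    | mul_X p i hp =>
      rw [map_mul, aeval_X, Polynomial.eval_mul, hp, Polynomial.eval_mul, Polynomial.eval_C,
        Polynomial.eval_X, mul_one]
  have hφinj : Function.Injective φ := by
    intro p q h
    rw [← hφretract p, ← hφretract q, h]
  have hφX : ∀ i : Fin d, φ (X i) = Polynomial.C (X i) * Polynomial.X := fun i => by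
    rw [hφ, aeval_X]
  have hφc : φ c = Polynomial.C c * Polynomial.X ^ n := by
    rw [hc, ← hab]
    simp only [map_add, map_mul, map_pow, map_sum, hφX, mul_pow,
      Polynomial.C_add, Polynomial.C_mul, Polynomial.C_pow, Finset.sum_mul, add_mul]
    ring
  have hmonic : (Polynomial.X ^ m + Polynomial.C c).Monic :=
    Polynomial.monic_X_pow_add
      (lt_of_le_of_lt Polynomial.degree_C_le (by exact_mod_cast (by omega : 0 < m)))
  have hirrK : Irreducible ((Polynomial.X ^ m + Polynomial.C c).map (algebraMap R K)) := by
    have hmap : (Polynomial.X ^ m + Polynomial.C c).map (algebraMap R K)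
        = Polynomial.X ^ m - Polynomial.C (-(algebraMap R K c)) := by
      rw [Polynomial.map_add, Polynomial.map_pow, Polynomial.map_X, Polynomial.map_C,
        Polynomial.C_neg, sub_neg_eq_add]
    rw [hmap]
    apply key_norm_lemma (by omega : 1 ≤ m)
    intro N r hr1 hrm hNr
    have htne : algebraMap R K c ≠ 0 := by
      rw [map_ne_zero_iff _ (IsFractionRing.injective R K)]
      exact hc0
    have hN0 : N ≠ 0 := by
      intro h
      rw [h, zero_pow (by omega : m ≠ 0)] at hNr
      exact (pow_ne_zero r (neg_ne_zero.mpr htne)) hNr.symm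
    obtain ⟨x, y, hy, hxy⟩ := IsFractionRing.div_surjective (A := R) N
    have hy0 : y ≠ 0 := nonZeroDivisors.ne_zero hy
    have hyK : algebraMap R K y ≠ 0 := by
      rw [map_ne_zero_iff _ (IsFractionRing.injective R K)]
      exact hy0
    have hx0 : x ≠ 0 := by
      rintro rfl
      rw [map_zero, zero_div] at hxy
      exact hN0 hxy.symm
    have heqK : algebraMap R K (x ^ m) = algebraMap R K ((-c) ^ r * y ^ m) := by
      rw [map_pow, map_mul, map_pow, map_pow, map_neg]
      rw [← hxy] at hNr
      rw [div_pow, div_eq_iff (pow_ne_zero _ hyK)] at hNr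
      linear_combination hNr
    have heqR : x ^ m = (-c) ^ r * y ^ m := IsFractionRing.injective R K heqK
    have hφeq : φ x ^ m = (-(Polynomial.C c * Polynomial.X ^ n)) ^ r * φ y ^ m := by
      have h2 := congrArg φ heqR
      rw [map_pow, map_mul, map_pow, map_pow, map_neg, hφc] at h2
      exact h2
    have hφx0 : φ x ≠ 0 := fun h => hx0 (hφinj (by rw [h, map_zero]))
    have hφy0 : φ y ≠ 0 := fun h => hy0 (hφinj (by rw [h, map_zero]))
    have hcx0 : (Polynomial.C c * Polynomial.X ^ n : Polynomial R) ≠ 0 := by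
      apply mul_ne_zero
      · exact fun h => hc0 (by simpa using h)
      · exact pow_ne_zero _ Polynomial.X_ne_zero
    have hdeg := congrArg Polynomial.natDegree hφeq
    rw [Polynomial.natDegree_pow,
      Polynomial.natDegree_mul (pow_ne_zero _ (neg_ne_zero.mpr hcx0)) (pow_ne_zero _ hφy0),
      Polynomial.natDegree_pow, Polynomial.natDegree_pow, Polynomial.natDegree_neg,
      Polynomial.natDegree_C_mul_X_pow n c hc0] at hdeg
    have hdvdrn : m ∣ r * n := by
      have h1 : r * n = m * (φ x).natDegree - m * (φ y).natDegree := by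
        rw [hdeg, Nat.add_sub_cancel]
      rw [h1]
      exact Nat.dvd_sub (dvd_mul_right _ _) (dvd_mul_right _ _)
    exact Nat.Coprime.dvd_of_dvd_mul_right hgcd hdvdrn
  have hirrR : Irreducible (Polynomial.X ^ m + Polynomial.C c) :=
    (hmonic.irreducible_iff_irreducible_map_fraction_map (K := K)).mpr hirrK
  exact (MulEquiv.irreducible_iff (f := A)).mp (hAg ▸ hirrR)
end

section
/- Let S be a Noetherian commutative ring of Krull dimension d ≥ 1, and let T = S[X, X^{−1}] be the Laurent polynomial ring over S, graded by assigning degree i to monomials a X^i with a ∈ S, i ∈ ℤ. If 𝔪 is a homogeneous prime ideal of T of height d, then 𝔪 ∩ S is a maximal ideal of S. -/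
open Ideal IsLocalRing

universe u

/-- A Noetherian ring with a maximal ideal whose power is zero is Artinian. -/
lemma artinianRing_of_pow_maximal_eq_bot (R : Type*) [CommRing R] [IsNoetherianRing R]
    (M : Ideal R) (hM : M.IsMaximal) (k : ℕ) (hk : M ^ k = ⊥) : IsArtinianRing R := by
  have key : ∀ j, IsArtinian R (M ^ (k - j) : Ideal R) := by
    intro j
    induction j with
    | zero =>
      rw [Nat.sub_zero, hk]
      have : Subsingleton (⊥ : Ideal R) := inferInstance
      infer_instance
    | succ j ih =>
      rcases Nat.eq_zero_or_pos (k - j) with h0 | hpos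
      · rw [Nat.sub_succ, h0]
        rwa [h0] at ih
      · -- k - j = (k - (j+1)) + 1
        set i := k - (j + 1) with hi
        have hij : k - j = i + 1 := by omega
        rw [hij] at ih
        -- show IsArtinian R (M ^ i)
        haveI : IsArtinian R (M ^ (i+1) : Ideal R) := ih
        have hle : (M ^ (i+1) : Ideal R) ≤ M ^ i := Ideal.pow_le_pow_right (by omega)
        set N : Submodule R (M ^ i : Ideal R) :=
          Submodule.comap (M ^ i : Ideal R).subtype (M ^ (i+1)) with hN
        -- quotient is killed by M
        have htor : Module.IsTorsionBySet R ((M ^ i : Ideal R) ⧸ N) (M : Set R) := by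
          intro v m
          obtain ⟨x, rfl⟩ := Submodule.Quotient.mk_surjective N v
          rw [← Submodule.Quotient.mk_smul, Submodule.Quotient.mk_eq_zero]
          show ((m : R) • (x : R)) ∈ M ^ (i + 1)
          rw [smul_eq_mul, pow_succ']
          exact Ideal.mul_mem_mul m.2 x.2
        letI : Module (R ⧸ M) ((M ^ i : Ideal R) ⧸ N) := htor.module
        haveI : IsScalarTower R (R ⧸ M) ((M ^ i : Ideal R) ⧸ N) := htor.isScalarTower
        haveI : Module.Finite R ((M ^ i : Ideal R) ⧸ N) := by
          haveI : Module.Finite R (M ^ i : Ideal R) :=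
            Module.Finite.iff_fg.mpr (IsNoetherian.noetherian _)
          exact Module.Finite.of_surjective N.mkQ (Submodule.Quotient.mk_surjective N)
        haveI : Module.Finite (R ⧸ M) ((M ^ i : Ideal R) ⧸ N) :=
          Module.Finite.of_restrictScalars_finite R _ _
        letI : Field (R ⧸ M) := Ideal.Quotient.field M
        haveI hA1 : IsArtinian (R ⧸ M) ((M ^ i : Ideal R) ⧸ N) := by
          haveI := isArtinian_of_fg_of_artinian (⊤ : Submodule (R ⧸ M) ((M ^ i : Ideal R) ⧸ N))
            (Module.finite_def.mp inferInstance)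
          exact isArtinian_of_linearEquiv (Submodule.topEquiv)
        haveI hA2 : IsArtinian R ((M ^ i : Ideal R) ⧸ N) := by
          let f : Submodule R ((M ^ i : Ideal R) ⧸ N) →
              Submodule (R ⧸ M) ((M ^ i : Ideal R) ⧸ N) := fun p =>
            { carrier := p
              add_mem' := fun ha hb => p.add_mem ha hb
              zero_mem' := p.zero_mem
              smul_mem' := by
                rintro ⟨c⟩ x hx
                show (Ideal.Quotient.mk M c) • x ∈ p
                rw [← Ideal.Quotient.algebraMap_eq, IsScalarTower.algebraMap_smul]
                exact p.smul_mem c hx }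
          have hmem : ∀ (p : Submodule R ((M ^ i : Ideal R) ⧸ N)) (x), x ∈ f p ↔ x ∈ p :=
            fun _ _ => Iff.rfl
          have hf : StrictMono f := by
            intro p q hpq
            rcases lt_iff_le_not_ge.mp hpq with ⟨hle', hnle⟩
            refine lt_iff_le_not_ge.mpr ⟨fun x hx => (hmem q x).mpr (hle' ((hmem p x).mp hx)),
              fun hc => hnle fun x hx => (hmem p x).mp (hc ((hmem q x).mpr hx))⟩
          exact hf.wellFoundedLT
        exact isArtinian_of_range_eq_ker (Submodule.inclusion hle) N.mkQ
          (by rw [Submodule.range_inclusion, Submodule.ker_mkQ])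
  haveI : IsArtinian R (⊤ : Submodule R R) := by
    have h0 := key k
    rwa [Nat.sub_self, pow_zero, Ideal.one_eq_top] at h0
  exact isArtinian_of_linearEquiv (Submodule.topEquiv)

/-- Krull's principal ideal theorem, local form: in a Noetherian local ring whose maximal
ideal is minimal over a principal ideal, there is no chain `Q' < Q < maximalIdeal`. -/
lemma PIT_local (R : Type*) [CommRing R] [IsNoetherianRing R] [IsLocalRing R]
    (x : R) (hx : maximalIdeal R ∈ (Ideal.span {x}).minimalPrimes)
    (Q : Ideal R) (hQ : Q.IsPrime) (hQlt : Q < maximalIdeal R)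
    (Q' : Ideal R) (hQ' : Q'.IsPrime) : ¬ Q' < Q := by
  intro hlt
  haveI := hQ
  -- x is not in Q
  have hxQ : x ∉ Q := by
    intro hmem
    have hle : Ideal.span {x} ≤ Q := (Ideal.span_singleton_le_iff_mem _).mpr hmem
    exact hQlt.not_ge (hx.2 ⟨hQ, hle⟩ hQlt.le)
  -- the radical of (x) is the maximal ideal
  have hrad : (Ideal.span {x}).radical = maximalIdeal R := by
    apply le_antisymm
    · rw [Ideal.radical_eq_sInf]
      exact sInf_le ⟨hx.1.2, hx.1.1⟩
    · rw [Ideal.radical_eq_sInf]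
      refine le_sInf ?_
      rintro J ⟨hJle, hJp⟩
      exact hx.2 ⟨hJp, hJle⟩ (le_maximalIdeal hJp.ne_top)
  obtain ⟨k, hk⟩ := Ideal.exists_radical_pow_le_of_fg (Ideal.span {x}) (IsNoetherian.noetherian _)
  rw [hrad] at hk
  -- the quotient by (x) is Artinian
  set mk := Ideal.Quotient.mk (Ideal.span {x}) with hmk
  have hMbar : ((maximalIdeal R).map mk).IsMaximal := by
    rcases Ideal.map_eq_top_or_isMaximal_of_surjective mk Ideal.Quotient.mk_surjective
      (maximalIdeal.isMaximal R) with htop | hmax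
    · exfalso
      have : Ideal.comap mk (Ideal.map mk (maximalIdeal R)) = ⊤ := by rw [htop, Ideal.comap_top]
      rw [Ideal.comap_map_of_surjective mk Ideal.Quotient.mk_surjective,
        ← RingHom.ker_eq_comap_bot, Ideal.mk_ker, sup_eq_left.mpr hx.1.2] at this
      exact (maximalIdeal.isMaximal R).ne_top this
    · exact hmax
  have hpow : ((maximalIdeal R).map mk) ^ k = ⊥ := by
    rw [← Ideal.map_pow]
    refine le_bot_iff.mp ?_
    calc Ideal.map mk (maximalIdeal R ^ k) ≤ Ideal.map mk (Ideal.span {x}) := Ideal.map_mono hk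
    _ = ⊥ := Ideal.map_quotient_self _
  haveI hart : IsArtinianRing (R ⧸ Ideal.span {x}) :=
    artinianRing_of_pow_maximal_eq_bot _ _ hMbar k hpow
  -- symbolic powers of Q
  set A := Localization.AtPrime Q with hA
  set φ := algebraMap R A with hφ
  haveI : IsNoetherianRing A := IsLocalization.isNoetherianRing Q.primeCompl A inferInstance
  set q : ℕ → Ideal R := fun n => Ideal.comap φ ((Ideal.map φ Q) ^ n) with hq
  have hqanti : ∀ n, q (n + 1) ≤ q n := by
    intro n
    exact Ideal.comap_mono (Ideal.pow_le_pow_right (Nat.le_succ n))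
  -- stabilization of q n ⊔ (x)
  have hstab : ∃ n, 1 ≤ n ∧ Ideal.map mk (q n) = Ideal.map mk (q (n + 1)) := by
    have hmono : ∀ ⦃a b : ℕ⦄, a ≤ b → Ideal.map mk (q b) ≤ Ideal.map mk (q a) := by
      have : Antitone q := antitone_nat_of_succ_le hqanti
      exact fun a b h => Ideal.map_mono (this h)
    obtain ⟨n0, hn0⟩ := IsArtinian.monotone_stabilizes
      (⟨fun n => OrderDual.toDual (Ideal.map mk (q n)), fun a b h => hmono h⟩ :
        ℕ →o (Ideal (R ⧸ Ideal.span {x}))ᵒᵈ)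
    exact ⟨n0 + 1, le_add_self, ((hn0 (n0+1) (Nat.le_succ n0)).symm.trans
      (hn0 (n0+2) (by omega)) : _)⟩
  obtain ⟨n, hn1, hstab⟩ := hstab
  -- translate back: q n ⊔ (x) = q (n+1) ⊔ (x)
  have hsup : q n ⊔ Ideal.span {x} = q (n + 1) ⊔ Ideal.span {x} := by
    have h1 := congrArg (Ideal.comap mk) hstab
    rwa [Ideal.comap_map_of_surjective mk Ideal.Quotient.mk_surjective,
      Ideal.comap_map_of_surjective mk Ideal.Quotient.mk_surjective,
      ← RingHom.ker_eq_comap_bot, Ideal.mk_ker] at h1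
  -- key: q n ≤ q (n+1) ⊔ (x) • q n
  have hkey : q n ≤ q (n + 1) ⊔ Ideal.span {x} • q n := by
    intro u hu
    have hu' : u ∈ q (n + 1) ⊔ Ideal.span {x} := by
      rw [← hsup]; exact Submodule.mem_sup_left hu
    obtain ⟨v, hv, w, hw, huvw⟩ := Submodule.mem_sup.mp hu'
    obtain ⟨a, ha⟩ := Submodule.mem_span_singleton.mp hw
    -- a • x = w;  a * x ∈ q n
    have hax : a * x ∈ q n := by
      have hw' : w = u - v := by rw [eq_sub_iff_add_eq, add_comm]; exact huvw
      rw [← smul_eq_mul, ha, hw']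
      exact Submodule.sub_mem _ hu (hqanti n hv)
    -- a ∈ q n since x is invertible in A
    have haqn : a ∈ q n := by
      have hxu : IsUnit (φ x) := IsLocalization.map_units A (⟨x, hxQ⟩ : Q.primeCompl)
      obtain ⟨u0, hu0⟩ := hxu
      have h1 : φ (a * x) ∈ (Ideal.map φ Q) ^ n := hax
      have h2 : φ (a * x) * ↑u0⁻¹ ∈ (Ideal.map φ Q) ^ n := Ideal.mul_mem_right _ _ h1
      have h3 : φ (a * x) * ↑u0⁻¹ = φ a := by
        rw [_root_.map_mul, ← hu0, mul_assoc, Units.mul_inv, mul_one]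
      rwa [h3] at h2
    rw [← huvw]
    refine Submodule.add_mem_sup hv ?_
    have hsm : x • a ∈ Ideal.span {x} • q n :=
      Submodule.smul_mem_smul (Ideal.mem_span_singleton_self x) haqn
    have hxa : x • a = w := by rw [smul_eq_mul, mul_comm, ← smul_eq_mul, ha]
    rwa [hxa] at hsm
  -- Nakayama: q n = q (n+1)
  have heq : q n = q (n + 1) :=
    le_antisymm
      (Submodule.le_of_le_smul_of_le_jacobson_bot (IsNoetherian.noetherian _)
        (by rw [jacobson_eq_maximalIdeal ⊥ bot_ne_top]; exact hx.1.2) hkey)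
      (hqanti n)
  -- extended powers of Q in the localization stabilize, hence vanish
  have hmc : ∀ m : ℕ, Ideal.map φ (q m) = (Ideal.map φ Q) ^ m := fun m =>
    IsLocalization.map_comap Q.primeCompl A _
  have hpowA : (Ideal.map φ Q) ^ n = (Ideal.map φ Q) ^ (n + 1) := by
    rw [← hmc n, ← hmc (n + 1), heq]
  have hbot : (Ideal.map φ Q) ^ n = ⊥ := by
    refine Submodule.eq_bot_of_le_smul_of_le_jacobson_bot (Ideal.map φ Q) _
      (IsNoetherian.noetherian _) ?_ ?_
    · rw [smul_eq_mul, ← pow_succ']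
      exact le_of_eq hpowA
    · rw [jacobson_eq_maximalIdeal ⊥ bot_ne_top, ← Localization.AtPrime.map_eq_maximalIdeal]
  -- transport Q' to the localization and derive a contradiction
  set ι := IsLocalization.AtPrime.orderIsoOfPrime A Q with hι
  set p' := ι.symm ⟨Q', hQ', hlt.le⟩ with hp'
  have hcom : Ideal.comap φ p'.1 = Q' := by
    have h1 := ι.apply_symm_apply ⟨Q', hQ', hlt.le⟩
    have h2 : (ι p').1 = Q' := by rw [hp', h1]
    exact h2
  have hml : Ideal.map φ Q ≤ p'.1 := by
    intro a ha
    have h1 : a ^ n ∈ (Ideal.map φ Q) ^ n := Ideal.pow_mem_pow ha n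
    rw [hbot] at h1
    have h2 : a ^ n ∈ p'.1 := by
      rw [Submodule.mem_bot] at h1
      rw [h1]; exact p'.1.zero_mem
    exact p'.2.mem_of_pow_mem n h2
  have hQQ' : Q ≤ Q' := by
    calc Q ≤ Ideal.comap φ (Ideal.map φ Q) := Ideal.le_comap_map
    _ ≤ Ideal.comap φ p'.1 := Ideal.comap_mono hml
    _ = Q' := hcom
  exact hlt.not_ge hQQ'

section transfers
variable {R S : Type*} [CommRing R] [CommRing S]

lemma minimalPrimes_map_of_surjective (f : R →+* S)
    (hf : Function.Surjective f) {I P : Ideal R} (hker : RingHom.ker f ≤ I)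
    (hP : P ∈ I.minimalPrimes) : P.map f ∈ (I.map f).minimalPrimes := by
  have hPp : P.IsPrime := hP.1.1
  have hIP : I ≤ P := hP.1.2
  refine ⟨⟨Ideal.map_isPrime_of_surjective hf (hker.trans hIP), Ideal.map_mono hIP⟩, ?_⟩
  rintro u ⟨hup, hIu⟩ huP
  have hcu : (u.comap f).IsPrime := hup.comap f
  have h1 : I ≤ u.comap f := le_trans Ideal.le_comap_map (Ideal.comap_mono hIu)
  have h2 : u.comap f ≤ P := by
    have h3 := Ideal.comap_mono (f := f) huP
    rwa [Ideal.comap_map_of_surjective f hf, ← RingHom.ker_eq_comap_bot,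
      sup_eq_left.mpr (hker.trans hIP)] at h3
  have h3 : P ≤ u.comap f := hP.2 ⟨hcu, h1⟩ h2
  calc P.map f ≤ (u.comap f).map f := Ideal.map_mono h3
  _ = u := Ideal.map_comap_of_surjective f hf u

variable (P : Ideal R) [hP : P.IsPrime]

local notation "A" => Localization.AtPrime P
local notation "φ" => algebraMap R (Localization.AtPrime P)

lemma minimalPrimes_map_localization {I : Ideal R} (hmin : P ∈ I.minimalPrimes) :
    Ideal.map φ P ∈ (Ideal.map φ I).minimalPrimes := by
  have hMp : (Ideal.map φ P).IsPrime := by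
    rw [Localization.AtPrime.map_eq_maximalIdeal]
    infer_instance
  refine ⟨⟨hMp, Ideal.map_mono hmin.1.2⟩, ?_⟩
  rintro u ⟨hu, hIu⟩ huM
  have h1 : I ≤ u.comap φ := le_trans Ideal.le_comap_map (Ideal.comap_mono hIu)
  have h2 : u.comap φ ≤ P := by
    have h3 := Ideal.comap_mono (f := algebraMap R (Localization.AtPrime P)) huM
    rw [Localization.AtPrime.map_eq_maximalIdeal] at h3
    exact h3.trans (IsLocalization.AtPrime.comap_maximalIdeal (Localization.AtPrime P) P).le
  have h3 : P ≤ u.comap φ := hmin.2 ⟨hu.comap φ, h1⟩ h2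
  exact Ideal.map_le_iff_le_comap.mpr h3

lemma minimalPrimes_comap_localization (p : Ideal A) (hp : p.IsPrime)
    {I : Ideal R} (hI : I ≤ p.comap φ)
    (hmin : p ∈ (Ideal.map φ I).minimalPrimes) : p.comap φ ∈ I.minimalPrimes := by
  refine ⟨⟨hp.comap φ, hI⟩, ?_⟩
  rintro q ⟨hq, hIq⟩ hqle
  have hqP : q ≤ P := by
    refine hqle.trans ?_
    have h1 : p ≤ maximalIdeal A := le_maximalIdeal hp.ne_top
    calc p.comap φ ≤ (maximalIdeal A).comap φ := Ideal.comap_mono h1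
    _ = P := IsLocalization.AtPrime.comap_maximalIdeal (Localization.AtPrime P) P
  have hdisj : Disjoint (P.primeCompl : Set R) (q : Set R) :=
    Set.disjoint_left.mpr fun a ha ha' => ha (hqP ha')
  have hqmapp : (q.map φ).IsPrime :=
    IsLocalization.isPrime_of_isPrime_disjoint P.primeCompl _ q hq hdisj
  have hcomap : (q.map φ).comap φ = q :=
    IsLocalization.under_map_of_isPrime_disjoint P.primeCompl _ hq hdisj
  have h1 : Ideal.map φ I ≤ q.map φ := Ideal.map_mono hIq
  have h2 : q.map φ ≤ p := Ideal.map_le_iff_le_comap.mpr hqle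
  have h3 : p ≤ q.map φ := hmin.2 ⟨hqmapp, h1⟩ h2
  calc p.comap φ ≤ (q.map φ).comap φ := Ideal.comap_mono h3
  _ = q := hcomap

end transfers

lemma exists_prime_maximal_between {R : Type*} [CommRing R] [IsNoetherianRing R]
    (Q1' P : Ideal R) (h1 : Q1'.IsPrime) (hP : P.IsPrime) (hlt : Q1' < P) :
    ∃ Q1 : Ideal R, Q1.IsPrime ∧ Q1' ≤ Q1 ∧ Q1 < P ∧
      ∀ q : Ideal R, q.IsPrime → Q1 < q → q < P → False := by
  have hwf := set_has_maximal_iff_noetherian.mpr (inferInstance : IsNoetherian R R)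
  obtain ⟨Q1, ⟨hQ1p, hQ1le, hQ1lt⟩, hmax⟩ :=
    hwf {J : Submodule R R | Ideal.IsPrime (J : Ideal R) ∧ Q1' ≤ J ∧ J < P} ⟨Q1', h1, le_rfl, hlt⟩
  refine ⟨Q1, hQ1p, hQ1le, hQ1lt, ?_⟩
  intro q hq hlt1 hlt2
  exact hmax q ⟨hq, hQ1le.trans hlt1.le, hlt2⟩ hlt1

/-- Krull's generalized height theorem. -/
theorem height_le_of_minimal_over_span :
    ∀ (n : ℕ) (R : Type u) [CommRing R] [IsNoetherianRing R]
    (P : Ideal R) (v : Fin n → R), P ∈ (Ideal.span (Set.range v)).minimalPrimes →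
    ∀ l : LTSeries (PrimeSpectrum R), l.last.asIdeal = P → l.length ≤ n := by
  intro n
  induction n with
  | zero =>
    intro R _ _ P v hP l hl
    by_contra hcon
    have h1 : l.length ≠ 0 := by omega
    have hlt := l.eraseLast_last_rel_last h1
    have hlt' : l.eraseLast.last.asIdeal < P := by
      rw [← hl, PrimeSpectrum.asIdeal_lt_asIdeal]; exact hlt
    have hle : Ideal.span (Set.range v) ≤ l.eraseLast.last.asIdeal := by
      have : Set.range v = ∅ := Set.range_eq_empty v
      rw [this, Ideal.span_empty]; exact bot_le
    exact hlt'.not_ge (hP.2 ⟨l.eraseLast.last.isPrime, hle⟩ hlt'.le)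
  | succ n IH =>
    intro R _ _ P v hP l hl
    by_contra hcon
    push_neg at hcon
    have hm2 : 2 ≤ l.length := by omega
    haveI hPp : P.IsPrime := hP.1.1
    have hQ1'lt : l.eraseLast.last.asIdeal < P := by
      rw [← hl, PrimeSpectrum.asIdeal_lt_asIdeal]
      exact l.eraseLast_last_rel_last (by omega)
    obtain ⟨Q1, hQ1p, hQ1le, hQ1ltP, hQ1max⟩ :=
      exists_prime_maximal_between l.eraseLast.last.asIdeal P l.eraseLast.last.isPrime hPp hQ1'lt
    -- chain of length l.length - 1 ending at Q1
    have hc0lt : l.eraseLast.eraseLast.last < l.eraseLast.last :=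
      l.eraseLast.eraseLast_last_rel_last (by simp; omega)
    have hlast_lt : l.eraseLast.eraseLast.last < (⟨Q1, hQ1p⟩ : PrimeSpectrum R) := by
      refine lt_of_lt_of_le hc0lt ?_
      rw [← PrimeSpectrum.asIdeal_le_asIdeal]
      exact hQ1le
    set c := l.eraseLast.eraseLast.snoc ⟨Q1, hQ1p⟩ hlast_lt with hc
    have hclen : c.length = l.length - 1 := by
      simp only [hc, RelSeries.snoc_length, RelSeries.eraseLast_length]
      omega
    have hclast : c.last.asIdeal = Q1 := by rw [hc, RelSeries.last_snoc]
    -- localize at P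
    haveI : IsNoetherianRing (Localization.AtPrime P) := IsLocalization.isNoetherianRing P.primeCompl (Localization.AtPrime P) inferInstance
    set M := Ideal.map (algebraMap R (Localization.AtPrime P)) P with hMdef
    have hMmax : M.IsMaximal := by
      rw [hMdef, Localization.AtPrime.map_eq_maximalIdeal]
      exact maximalIdeal.isMaximal _
    have hMp : M.IsPrime := hMmax.isPrime
    have hcomapM : M.comap (algebraMap R (Localization.AtPrime P)) = P := by
      rw [hMdef, Localization.AtPrime.map_eq_maximalIdeal]
      exact IsLocalization.AtPrime.comap_maximalIdeal _ _
    have hPmin : M ∈ (Ideal.map (algebraMap R (Localization.AtPrime P)) (Ideal.span (Set.range v))).minimalPrimes :=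
      minimalPrimes_map_localization P hP
    have hQ1P : Q1 ≤ P := hQ1ltP.le
    have hdisj : Disjoint (P.primeCompl : Set R) (Q1 : Set R) :=
      Set.disjoint_left.mpr fun a ha ha' => ha (hQ1P ha')
    set p1 := Ideal.map (algebraMap R (Localization.AtPrime P)) Q1 with hp1def
    have hp1p : p1.IsPrime :=
      IsLocalization.isPrime_of_isPrime_disjoint P.primeCompl (Localization.AtPrime P) Q1 hQ1p hdisj
    have hcomapp1 : p1.comap (algebraMap R (Localization.AtPrime P)) = Q1 :=
      IsLocalization.under_map_of_isPrime_disjoint P.primeCompl (Localization.AtPrime P) hQ1p hdisj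
    have hp1M : p1 < M := by
      refine lt_of_le_of_ne (Ideal.map_mono hQ1P) ?_
      intro h
      apply hQ1ltP.ne
      rw [← hcomapp1, h, hcomapM]
    -- no primes strictly between p1 and M
    have hbet : ∀ u : Ideal (Localization.AtPrime P), u.IsPrime → p1 < u → u < M → False := by
      intro u hu h1 h2
      refine hQ1max (u.comap (algebraMap R (Localization.AtPrime P))) (hu.comap (algebraMap R (Localization.AtPrime P))) ?_ ?_
      · refine lt_of_le_of_ne ?_ ?_
        · have h4 := Ideal.comap_mono (f := algebraMap R (Localization.AtPrime P)) h1.le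
          rwa [hcomapp1] at h4
        · intro h
          refine h1.ne' ?_
          conv_lhs => rw [← IsLocalization.map_comap P.primeCompl (Localization.AtPrime P) u]
          rw [Ideal.under_def, ← h]
      · refine lt_of_le_of_ne ?_ ?_
        · have h4 := Ideal.comap_mono (f := algebraMap R (Localization.AtPrime P)) h2.le
          rwa [hcomapM] at h4
        · intro h
          refine h2.ne ?_
          conv_lhs => rw [← IsLocalization.map_comap P.primeCompl (Localization.AtPrime P) u]
          rw [Ideal.under_def, h]
    -- pick a generator not in p1
    have hxj : ∃ j : Fin (n + 1), (algebraMap R (Localization.AtPrime P)) (v j) ∉ p1 := by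
      by_contra h
      push_neg at h
      have hle2 : Ideal.map (algebraMap R (Localization.AtPrime P)) (Ideal.span (Set.range v)) ≤ p1 := by
        rw [Ideal.map_span]
        refine Ideal.span_le.mpr ?_
        rintro y ⟨y', ⟨j, rfl⟩, rfl⟩
        exact h j
      exact hp1M.not_ge (hPmin.2 ⟨hp1p, hle2⟩ hp1M.le)
    obtain ⟨j, hj⟩ := hxj
    set x := (algebraMap R (Localization.AtPrime P)) (v j) with hxdef
    have hxM : x ∈ M := Ideal.mem_map_of_mem (algebraMap R (Localization.AtPrime P)) (hP.1.2 (Ideal.subset_span ⟨j, rfl⟩))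
    -- M is contained in the radical of p1 + (x)
    have hMrad : M ≤ (p1 ⊔ Ideal.span {x}).radical := by
      rw [Ideal.radical_eq_sInf]
      refine le_sInf ?_
      rintro u ⟨hle, hu⟩
      have huM : u ≤ M := by
        rw [hMdef, Localization.AtPrime.map_eq_maximalIdeal]
        exact le_maximalIdeal hu.ne_top
      rcases eq_or_lt_of_le huM with rfl | hlt2
      · exact le_rfl
      · exfalso
        rcases eq_or_lt_of_le (le_sup_left.trans hle : p1 ≤ u) with heq | hlt1
        · apply hj
          have hxu : x ∈ u := hle (Submodule.mem_sup_right (Ideal.mem_span_singleton_self x))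
          rw [← heq] at hxu
          exact hxu
        · exact hbet u hu hlt1 hlt2
    -- decompose powers of generators
    have hdec : ∀ i : Fin (n + 1), ∃ (k : ℕ) (z a : (Localization.AtPrime P)),
        z ∈ p1 ∧ (algebraMap R (Localization.AtPrime P)) (v i) ^ k = z + a * x := by
      intro i
      have hvi : (algebraMap R (Localization.AtPrime P)) (v i) ∈ M := Ideal.mem_map_of_mem (algebraMap R (Localization.AtPrime P)) (hP.1.2 (Ideal.subset_span ⟨i, rfl⟩))
      obtain ⟨k, hk⟩ := hMrad hvi
      obtain ⟨z, hz, w, hw, hzw⟩ := Submodule.mem_sup.mp hk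
      obtain ⟨a, ha⟩ := Submodule.mem_span_singleton.mp hw
      exact ⟨k, z, a, hz, by rw [← hzw, ← ha, smul_eq_mul]⟩
    choose kk zz aa hzz hdeceq using hdec
    have hsur : ∀ i : Fin (n + 1), ∃ t : R × P.primeCompl, zz i * (algebraMap R (Localization.AtPrime P)) t.2 = (algebraMap R (Localization.AtPrime P)) t.1 :=
      fun i => IsLocalization.surj P.primeCompl (zz i)
    choose tt htt using hsur
    set wR : Fin n → R := fun i => (tt (j.succAbove i)).1 with hwRdef
    set JA := Ideal.span (Set.range fun i : Fin n => zz (j.succAbove i)) with hJAdef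
    have hJAle : JA ≤ p1 := Ideal.span_le.mpr (by rintro y ⟨i, rfl⟩; exact hzz _)
    have hmapJ : Ideal.map (algebraMap R (Localization.AtPrime P)) (Ideal.span (Set.range wR)) = JA := by
      rw [Ideal.map_span]
      apply le_antisymm
      · refine Ideal.span_le.mpr ?_
        rintro y ⟨y', ⟨i, rfl⟩, rfl⟩
        have heq1 : (algebraMap R (Localization.AtPrime P)) (wR i) = zz (j.succAbove i) * (algebraMap R (Localization.AtPrime P)) ((tt (j.succAbove i)).2 : R) :=
          (htt (j.succAbove i)).symm
        rw [heq1]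
        exact Ideal.mul_mem_right _ _ (Ideal.subset_span ⟨i, rfl⟩)
      · refine Ideal.span_le.mpr ?_
        rintro y ⟨i, rfl⟩
        show zz (j.succAbove i) ∈
          Ideal.span ((algebraMap R (Localization.AtPrime P)) '' Set.range wR)
        have hunit : IsUnit ((algebraMap R (Localization.AtPrime P)) ((tt (j.succAbove i)).2 : R)) :=
          IsLocalization.map_units (Localization.AtPrime P) (tt (j.succAbove i)).2
        obtain ⟨u0, hu0⟩ := hunit
        have heq2 : zz (j.succAbove i) = (algebraMap R (Localization.AtPrime P)) (wR i) * ↑u0⁻¹ := by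
          rw [← htt (j.succAbove i), ← hu0, mul_assoc, Units.mul_inv, mul_one]
        rw [heq2]
        exact Ideal.mul_mem_right _ _
          (Ideal.subset_span (Set.mem_image_of_mem (algebraMap R (Localization.AtPrime P)) ⟨i, rfl⟩))
    -- minimality of M over q ⊔ (x) for any prime q between JA and p1
    have hC1 : ∀ q : Ideal (Localization.AtPrime P), q.IsPrime → JA ≤ q → q ≤ p1 →
        M ∈ (q ⊔ Ideal.span {x}).minimalPrimes := by
      intro q hq hJq hqp1
      refine ⟨⟨hMp, sup_le (hqp1.trans hp1M.le)
        ((Ideal.span_singleton_le_iff_mem _).mpr hxM)⟩, ?_⟩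
      rintro u ⟨hu, hqu⟩ huM
      have hxu : x ∈ u := hqu (Submodule.mem_sup_right (Ideal.mem_span_singleton_self x))
      have hall : ∀ i : Fin (n + 1), (algebraMap R (Localization.AtPrime P)) (v i) ∈ u := by
        intro i
        rcases eq_or_ne i j with rfl | hij
        · exact hxu
        · obtain ⟨i', hi'⟩ := Fin.exists_succAbove_eq hij
          have hz_in : zz i ∈ u := by
            rw [← hi']
            exact hqu (Submodule.mem_sup_left (hJq (Ideal.subset_span ⟨i', rfl⟩)))
          have hpow : (algebraMap R (Localization.AtPrime P)) (v i) ^ kk i ∈ u := by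
            rw [hdeceq i]
            exact Ideal.add_mem _ hz_in (Ideal.mul_mem_left _ _ hxu)
          exact hu.mem_of_pow_mem _ hpow
      have hle3 : Ideal.map (algebraMap R (Localization.AtPrime P)) (Ideal.span (Set.range v)) ≤ u := by
        rw [Ideal.map_span]
        refine Ideal.span_le.mpr ?_
        rintro y ⟨y', ⟨i, rfl⟩, rfl⟩
        exact hall i
      exact hPmin.2 ⟨hu, hle3⟩ huM
    -- p1 is minimal over JA
    have hp1min : p1 ∈ JA.minimalPrimes := by
      refine ⟨⟨hp1p, hJAle⟩, ?_⟩
      rintro q ⟨hq, hJq⟩ hqp1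
      by_contra hnle
      have hqlt : q < p1 := lt_of_le_of_ne hqp1 fun h => hnle (h ▸ le_rfl)
      haveI hqI := hq
      haveI : IsLocalRing ((Localization.AtPrime P) ⧸ q) :=
        IsLocalRing.of_surjective' (Ideal.Quotient.mk q) Ideal.Quotient.mk_surjective
      have hMminq : M ∈ (q ⊔ Ideal.span {x}).minimalPrimes := hC1 q hq hJq hqp1
      have hker : RingHom.ker (Ideal.Quotient.mk q) ≤ q ⊔ Ideal.span {x} := by
        rw [Ideal.mk_ker]; exact le_sup_left
      have hMbar := minimalPrimes_map_of_surjective (Ideal.Quotient.mk q)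
        Ideal.Quotient.mk_surjective hker hMminq
      have hmapI : Ideal.map (Ideal.Quotient.mk q) (q ⊔ Ideal.span {x}) =
          Ideal.span {Ideal.Quotient.mk q x} := by
        rw [Ideal.map_sup, Ideal.map_quotient_self, bot_sup_eq, Ideal.map_span,
          Set.image_singleton]
      rw [hmapI] at hMbar
      have hMbarmax : (M.map (Ideal.Quotient.mk q)).IsMaximal := by
        rcases Ideal.map_eq_top_or_isMaximal_of_surjective (Ideal.Quotient.mk q)
          Ideal.Quotient.mk_surjective hMmax with h | h
        · exfalso
          have h2 : Ideal.comap (Ideal.Quotient.mk q) (Ideal.map (Ideal.Quotient.mk q) M) =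
              ⊤ := by rw [h, Ideal.comap_top]
          rw [Ideal.comap_map_of_surjective _ Ideal.Quotient.mk_surjective,
            ← RingHom.ker_eq_comap_bot, Ideal.mk_ker,
            sup_eq_left.mpr (hqlt.le.trans hp1M.le)] at h2
          exact hMmax.ne_top h2
        · exact h
      have hMbar_eq : M.map (Ideal.Quotient.mk q) = maximalIdeal ((Localization.AtPrime P) ⧸ q) :=
        eq_maximalIdeal hMbarmax
      have hp1bar_p : (p1.map (Ideal.Quotient.mk q)).IsPrime :=
        Ideal.map_isPrime_of_surjective Ideal.Quotient.mk_surjective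
          (by rw [Ideal.mk_ker]; exact hqlt.le)
      have hbotp : (⊥ : Ideal ((Localization.AtPrime P) ⧸ q)).IsPrime := Ideal.bot_prime
      obtain ⟨y, hyp1, hyq⟩ := SetLike.exists_of_lt hqlt
      have hbotlt : (⊥ : Ideal ((Localization.AtPrime P) ⧸ q)) < p1.map (Ideal.Quotient.mk q) := by
        refine bot_lt_iff_ne_bot.mpr fun h => ?_
        have : Ideal.Quotient.mk q y ∈ p1.map (Ideal.Quotient.mk q) :=
          Ideal.mem_map_of_mem _ hyp1
        rw [h, Submodule.mem_bot] at this
        exact hyq (Ideal.Quotient.eq_zero_iff_mem.mp this)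
      have hp1ltM : p1.map (Ideal.Quotient.mk q) < maximalIdeal ((Localization.AtPrime P) ⧸ q) := by
        rw [← hMbar_eq]
        refine lt_of_le_of_ne (Ideal.map_mono hp1M.le) ?_
        intro h
        have h3 := congrArg (Ideal.comap (Ideal.Quotient.mk q)) h
        rw [Ideal.comap_map_of_surjective _ Ideal.Quotient.mk_surjective,
          Ideal.comap_map_of_surjective _ Ideal.Quotient.mk_surjective,
          ← RingHom.ker_eq_comap_bot, Ideal.mk_ker, sup_eq_left.mpr hqlt.le,
          sup_eq_left.mpr (hqlt.le.trans hp1M.le)] at h3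
        exact hp1M.ne h3
      exact PIT_local ((Localization.AtPrime P) ⧸ q) (Ideal.Quotient.mk q x) (hMbar_eq ▸ hMbar)
        (p1.map (Ideal.Quotient.mk q)) hp1bar_p hp1ltM ⊥ hbotp hbotlt
    -- transfer minimality down to R and apply the induction hypothesis
    have hQ1min : Q1 ∈ (Ideal.span (Set.range wR)).minimalPrimes := by
      have hle4 : Ideal.span (Set.range wR) ≤ p1.comap (algebraMap R (Localization.AtPrime P)) := by
        calc Ideal.span (Set.range wR)
            ≤ (Ideal.map (algebraMap R (Localization.AtPrime P)) (Ideal.span (Set.range wR))).comap (algebraMap R (Localization.AtPrime P)) := Ideal.le_comap_map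
          _ = JA.comap (algebraMap R (Localization.AtPrime P)) := by rw [hmapJ]
          _ ≤ p1.comap (algebraMap R (Localization.AtPrime P)) := Ideal.comap_mono hJAle
      have h5 := minimalPrimes_comap_localization P p1 hp1p hle4 (by rw [hmapJ]; exact hp1min)
      rwa [hcomapp1] at h5
    have hfin := IH R Q1 wR hQ1min c hclast
    rw [hclen] at hfin
    omega

lemma exists_params {S : Type*} [CommRing S] [IsNoetherianRing S] (d : ℕ)
    (hdim : ringKrullDim S = d) (𝔭 : Ideal S) (h𝔭 : 𝔭.IsPrime) :
    ∃ (m : ℕ) (w : Fin m → S), 𝔭 ∈ (Ideal.span (Set.range w)).minimalPrimes ∧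
      ∃ cc : LTSeries (PrimeSpectrum S), cc.last.asIdeal = 𝔭 ∧ cc.length = m := by
  have hdim' : Order.krullDim (PrimeSpectrum S) = (d : WithBot ℕ∞) := hdim
  have key : ∀ i : ℕ,
      (∃ (m : ℕ) (w : Fin m → S), 𝔭 ∈ (Ideal.span (Set.range w)).minimalPrimes ∧
        ∃ cc : LTSeries (PrimeSpectrum S), cc.last.asIdeal = 𝔭 ∧ cc.length = m) ∨
      (∃ w : Fin i → S, (∀ t, w t ∈ 𝔭) ∧
        ∀ Pm ∈ (Ideal.span (Set.range w)).minimalPrimes, Pm ≤ 𝔭 →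
          ∃ cc : LTSeries (PrimeSpectrum S), cc.last.asIdeal = Pm ∧ cc.length = i) := by
    intro i
    induction i with
    | zero =>
      right
      refine ⟨Fin.elim0, fun t => t.elim0, ?_⟩
      intro Pm hPm _
      exact ⟨RelSeries.singleton _ ⟨Pm, hPm.1.1⟩, rfl, rfl⟩
    | succ i ih =>
      rcases ih with h | ⟨w, hw𝔭, hch⟩
      · exact Or.inl h
      by_cases h𝔭min : 𝔭 ∈ (Ideal.span (Set.range w)).minimalPrimes
      · exact Or.inl ⟨i, w, h𝔭min, hch 𝔭 h𝔭min le_rfl⟩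
      right
      -- minimal primes over span (range w) are finitely many
      have hfin : (Ideal.span (Set.range w)).minimalPrimes.Finite := by
        rw [Ideal.minimalPrimes_eq_comap]
        exact Set.Finite.image _ (minimalPrimes.finite_of_isNoetherianRing _)
      -- 𝔭 is not contained in any of them
      have hnotle : ∀ Pm ∈ (Ideal.span (Set.range w)).minimalPrimes, ¬ 𝔭 ≤ Pm := by
        intro Pm hPm hle
        have hsle : Ideal.span (Set.range w) ≤ 𝔭 :=
          Ideal.span_le.mpr (by rintro y ⟨t, rfl⟩; exact hw𝔭 t)
        have h1 : Pm ≤ 𝔭 := hPm.2 ⟨h𝔭, hsle⟩ hle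
        exact h𝔭min (le_antisymm hle h1 ▸ hPm)
      -- prime avoidance
      have havoid : ∃ x ∈ 𝔭, ∀ Pm ∈ (Ideal.span (Set.range w)).minimalPrimes, x ∉ Pm := by
        by_contra hcon
        push_neg at hcon
        have hsub : (𝔭 : Set S) ⊆ ⋃ Pm ∈ hfin.toFinset, (Pm : Set S) := by
          intro x hx
          obtain ⟨Pm, hPm, hxPm⟩ := hcon x hx
          exact Set.mem_biUnion (hfin.mem_toFinset.mpr hPm) hxPm
        obtain ⟨Pm, hPm, hle⟩ := (Ideal.subset_union_prime (⊥ : Ideal S) ⊥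
          (fun Pm hPm _ _ => (hfin.mem_toFinset.mp hPm).1.1)).mp hsub
        exact hnotle Pm (hfin.mem_toFinset.mp hPm) hle
      obtain ⟨x, hx𝔭, hxnot⟩ := havoid
      refine ⟨Fin.snoc w x, ?_, ?_⟩
      · intro t
        refine Fin.lastCases ?_ ?_ t
        · rw [Fin.snoc_last]; exact hx𝔭
        · intro t'; rw [Fin.snoc_castSucc]; exact hw𝔭 t'
      intro Pm' hPm' hPm'le
      have hwsub : Ideal.span (Set.range w) ≤ Pm' := by
        refine le_trans (Ideal.span_mono ?_) hPm'.1.2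
        rintro y ⟨t, rfl⟩
        exact ⟨t.castSucc, Fin.snoc_castSucc _ _ _⟩
      haveI := hPm'.1.1
      obtain ⟨Pm, hPm, hPmle⟩ := Ideal.exists_minimalPrimes_le hwsub
      obtain ⟨cc, hcclast, hcclen⟩ := hch Pm hPm (hPmle.trans hPm'le)
      have hxPm' : x ∈ Pm' := hPm'.1.2 (Ideal.subset_span ⟨Fin.last i, Fin.snoc_last _ _⟩)
      have hlt : Pm < Pm' := lt_of_le_of_ne hPmle fun h => hxnot Pm hPm (h ▸ hxPm')
      have hltpt : cc.last < (⟨Pm', hPm'.1.1⟩ : PrimeSpectrum S) := by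
        rw [← PrimeSpectrum.asIdeal_lt_asIdeal, hcclast]
        exact hlt
      exact ⟨cc.snoc ⟨Pm', hPm'.1.1⟩ hltpt, by rw [RelSeries.last_snoc], by simp [hcclen]⟩
  rcases key (d + 1) with h | ⟨w, hw𝔭, hch⟩
  · exact h
  exfalso
  have hsle : Ideal.span (Set.range w) ≤ 𝔭 :=
    Ideal.span_le.mpr (by rintro y ⟨t, rfl⟩; exact hw𝔭 t)
  obtain ⟨Pm, hPm, hPmle⟩ := Ideal.exists_minimalPrimes_le hsle
  obtain ⟨cc, _, hcclen⟩ := hch Pm hPm hPmle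
  have hbound := Order.LTSeries.length_le_krullDim cc
  rw [hdim', hcclen] at hbound
  exact absurd (by exact_mod_cast hbound) (by omega)

open LaurentPolynomial

/-- Let `S` be a Noetherian commutative ring of Krull dimension `d ≥ 1` and
`T = S[X, X⁻¹]` the Laurent polynomial ring, ℤ-graded with `deg X = 1`. If `𝔪` is a
homogeneous prime ideal of `T` of height `d`, then `𝔪 ∩ S` is a maximal ideal of `S`. -/
theorem stmt_9 (S : Type*) [CommRing S] [IsNoetherianRing S] (d : ℕ) (hd : 1 ≤ d)
    (hdim : ringKrullDim S = d)
    (𝔪 : Ideal (LaurentPolynomial S)) (h𝔪 : 𝔪.IsPrime)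
    (hhom : ∀ f ∈ 𝔪, ∀ i : ℤ, LaurentPolynomial.C (f.coeff i) * T i ∈ 𝔪)
    (hht : Order.height (⟨𝔪, h𝔪⟩ : PrimeSpectrum (LaurentPolynomial S)) = (d : ℕ∞)) :
    (𝔪.comap (LaurentPolynomial.C : S →+* LaurentPolynomial S)).IsMaximal := by
  haveI : IsNoetherianRing (LaurentPolynomial S) := by
    haveI := LaurentPolynomial.isLocalization (R := S)
    exact IsLocalization.isNoetherianRing (Submonoid.powers (Polynomial.X : Polynomial S))
      (LaurentPolynomial S) inferInstance
  set 𝔭 := 𝔪.comap (LaurentPolynomial.C : S →+* LaurentPolynomial S) with h𝔭def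
  have h𝔭p : 𝔭.IsPrime := h𝔪.comap _
  -- coefficients of elements of 𝔪 lie in 𝔭
  have hC : ∀ f ∈ 𝔪, ∀ i : ℤ, LaurentPolynomial.C (f.coeff i) ∈ 𝔪 := by
    intro f hf i
    have h2 : LaurentPolynomial.C (f.coeff i) * T i * T (-i) ∈ 𝔪 :=
      Ideal.mul_mem_right _ _ (hhom f hf i)
    rwa [mul_assoc, ← T_add, add_neg_cancel, T_zero, mul_one] at h2
  -- 𝔪 is the extension of 𝔭
  have h𝔪eq : 𝔪 = Ideal.map (LaurentPolynomial.C : S →+* LaurentPolynomial S) 𝔭 := by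
    apply le_antisymm
    · intro f hf
      have hrepr : f = f.coeff.sum fun n a => LaurentPolynomial.C a * T n := by
        conv_lhs => rw [← AddMonoidAlgebra.sum_coeff_single f]
        exact Finsupp.sum_congr fun n _ => single_eq_C_mul_T _ _
      rw [hrepr]
      refine Submodule.sum_mem _ fun n hn => ?_
      exact Ideal.mul_mem_right _ _ (Ideal.mem_map_of_mem _ (show f.coeff n ∈ 𝔭 from hC f hf n))
    · exact Ideal.map_le_iff_le_comap.mpr le_rfl
  -- parameters for 𝔭
  obtain ⟨m, w, h𝔭min, cc, hcclast, hcclen⟩ := exists_params d hdim 𝔭 h𝔭p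
  -- 𝔪 is minimal over the extension of the parameter ideal
  have h𝔪min : 𝔪 ∈ (Ideal.span (Set.range fun t =>
      (LaurentPolynomial.C : S →+* LaurentPolynomial S) (w t))).minimalPrimes := by
    have hspan : Ideal.span (Set.range fun t =>
        (LaurentPolynomial.C : S →+* LaurentPolynomial S) (w t)) =
        Ideal.map (LaurentPolynomial.C : S →+* LaurentPolynomial S)
          (Ideal.span (Set.range w)) := by
      rw [Ideal.map_span, ← Set.range_comp]
      rfl
    rw [hspan]
    refine ⟨⟨h𝔪, ?_⟩, ?_⟩
    · rw [h𝔪eq]; exact Ideal.map_mono h𝔭min.1.2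
    · rintro Q ⟨hQ, hQle⟩ hQ𝔪
      have h1 : Ideal.span (Set.range w) ≤ Q.comap LaurentPolynomial.C :=
        le_trans Ideal.le_comap_map (Ideal.comap_mono hQle)
      have h2 : Q.comap LaurentPolynomial.C ≤ 𝔭 :=
        Ideal.comap_mono (f := (LaurentPolynomial.C : S →+* LaurentPolynomial S)) hQ𝔪
      have h3 : 𝔭 ≤ Q.comap LaurentPolynomial.C := h𝔭min.2 ⟨hQ.comap _, h1⟩ h2
      rw [h𝔪eq]
      exact Ideal.map_le_iff_le_comap.mpr h3
  -- a chain of length d ending at 𝔪, so d ≤ m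
  obtain ⟨p, hplast, hplen⟩ := Order.exists_series_of_le_height
    (⟨𝔪, h𝔪⟩ : PrimeSpectrum (LaurentPolynomial S)) (le_of_eq hht.symm)
  have hdm : d ≤ m := by
    have := height_le_of_minimal_over_span m (LaurentPolynomial S) 𝔪 _ h𝔪min p
      (by rw [hplast])
    omega
  -- conclude 𝔭 is maximal
  have hdim' : Order.krullDim (PrimeSpectrum S) = (d : WithBot ℕ∞) := hdim
  refine ⟨⟨h𝔭p.ne_top, fun b hb => ?_⟩⟩
  by_contra hbne
  obtain ⟨q, hqmax, hbq⟩ := Ideal.exists_le_maximal b hbne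
  have hq : 𝔭 < q := lt_of_lt_of_le hb hbq
  have hltpt : cc.last < (⟨q, hqmax.isPrime⟩ : PrimeSpectrum S) := by
    rw [← PrimeSpectrum.asIdeal_lt_asIdeal, hcclast]
    exact hq
  have hbound := Order.LTSeries.length_le_krullDim (cc.snoc ⟨q, hqmax.isPrime⟩ hltpt)
  rw [hdim'] at hbound
  simp only [RelSeries.snoc_length, hcclen] at hbound
  have : m + 1 ≤ d := by exact_mod_cast hbound
  omega
end

section
/- Let R ⊆ A be an extension of Noetherian commutative integral domains such that A is integral over R, and let ξ ∈ R be nonzero. If A has exactly one prime ideal of height one containing ξ, then R has exactly one prime ideal of height one containing ξ. -/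
/-! Auxiliary development: Krull's principal ideal theorem (the case we need),
since it is not available in this version of Mathlib. -/

section ArtinianAux

/-- A Noetherian module over a commutative ring that is killed by a maximal ideal
is Artinian. -/
theorem aux_isArtinian_of_torsion {B V : Type*} [CommRing B] [AddCommGroup V] [Module B V]
    (M : Ideal B) (hM : M.IsMaximal) [IsNoetherian B V]
    (tors : ∀ m ∈ M, ∀ v : V, m • v = (0 : V)) : IsArtinian B V := by
  haveI := hM
  have ht : Module.IsTorsionBySet B V (M : Set B) := by
    intro v a
    exact tors a.1 a.2 v
  letI : Module (B ⧸ M) V := ht.module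
  haveI : IsScalarTower B (B ⧸ M) V := ht.isScalarTower
  haveI : IsNoetherian (B ⧸ M) V := isNoetherian_of_tower B inferInstance
  haveI : Module.Finite (B ⧸ M) V := Module.finite_def.mpr (IsNoetherian.noetherian ⊤)
  letI : Field (B ⧸ M) := Ideal.Quotient.field M
  haveI : IsArtinianRing (B ⧸ M) := inferInstance
  haveI hart : IsArtinian (B ⧸ M) V := inferInstance
  -- transfer Artinianness down along the surjection `B → B ⧸ M`
  let g : Submodule B V → Submodule (B ⧸ M) V := fun W =>
    { carrier := W
      add_mem' := fun h1 h2 => W.add_mem h1 h2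
      zero_mem' := W.zero_mem
      smul_mem' := by
        rintro c v hv
        obtain ⟨b, rfl⟩ := Ideal.Quotient.mk_surjective c
        have hbv : (Ideal.Quotient.mk M b) • v = b • v := ht.mk_smul b v
        rw [hbv]
        exact W.smul_mem b hv }
  have hg : StrictMono g := by
    intro W₁ W₂ h
    rw [lt_iff_le_and_ne] at h ⊢
    refine ⟨fun x hx => h.1 hx, fun e => h.2 ?_⟩
    ext x
    exact ⟨fun hx => (e ▸ (show x ∈ g W₁ from hx) : x ∈ g W₂),
      fun hx => (e ▸ (show x ∈ g W₂ from hx) : x ∈ g W₁)⟩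
  exact hg.wellFoundedLT

/-- If `M` is a maximal ideal of a Noetherian commutative ring `B`, then `B ⧸ M ^ k`
is an Artinian `B`-module. -/
theorem aux_isArtinian_quot_pow {B : Type*} [CommRing B] [IsNoetherianRing B] (M : Ideal B)
    (hM : M.IsMaximal) : ∀ k : ℕ, IsArtinian B (B ⧸ (M ^ k : Ideal B))
  | 0 => by
    have h0 : (M ^ 0 : Ideal B) = (⊤ : Submodule B B) := by
      rw [pow_zero, Ideal.one_eq_top]
    haveI : Subsingleton (B ⧸ (M ^ 0 : Ideal B)) := by
      rw [Submodule.Quotient.subsingleton_iff]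
      exact h0
    constructor
    constructor
    intro a
    constructor
    intro b hb
    exact absurd (Subsingleton.elim b a ▸ hb) (lt_irrefl a)
  | (k + 1) => by
    haveI IH : IsArtinian B (B ⧸ (M ^ k : Ideal B)) := aux_isArtinian_quot_pow M hM k
    set p : Submodule B B := (M ^ (k + 1) : Ideal B) with hp
    set q : Submodule B B := (M ^ k : Ideal B) with hq
    have hpq : p ≤ q := Ideal.pow_le_pow_right (Nat.le_succ k)
    set S₀ : Submodule B (B ⧸ p) := q.map p.mkQ with hS₀
    have e := Submodule.quotientQuotientEquivQuotient p q hpq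
    haveI : IsArtinian B ((B ⧸ p) ⧸ S₀) := isArtinian_of_linearEquiv e.symm
    haveI : IsArtinian B S₀ := by
      refine aux_isArtinian_of_torsion M hM ?_
      rintro m hm ⟨v, hv⟩
      obtain ⟨b, hb, rfl⟩ := hv
      have hmv : m • (p.mkQ b) = p.mkQ (m • b) := (map_smul p.mkQ m b).symm
      have hmem : m • b ∈ p := by
        rw [hp, pow_succ', smul_eq_mul]
        exact Ideal.mul_mem_mul hm hb
      have : m • (p.mkQ b) = 0 := by
        rw [hmv]
        exact (Submodule.Quotient.mk_eq_zero p).mpr hmem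
      exact Subtype.ext (by simpa using this)
    exact (isArtinian_iff_submodule_quotient S₀).mpr ⟨‹_›, ‹_›⟩

end ArtinianAux

section PIT

open Ideal

/-- Krull's principal ideal theorem, in the form we need: in a Noetherian commutative
ring, below a prime minimal over a principal ideal there is no chain of two strict
inclusions of primes. -/
theorem aux_pit {B : Type*} [CommRing B] [IsNoetherianRing B] (x : B)
    (P q₁ q₀ : Ideal B) (hP : P ∈ (Ideal.span {x}).minimalPrimes)
    (hq₁ : q₁.IsPrime) (hq₀ : q₀.IsPrime) (h01 : q₀ < q₁) (h1P : q₁ < P) : False := by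
  haveI hPP : P.IsPrime := hP.1.1
  -- localize at P
  set Sp := Localization.AtPrime P with hSp
  haveI : IsNoetherianRing Sp := IsLocalization.isNoetherianRing P.primeCompl Sp ‹_›
  set ψ := algebraMap B Sp with hψ
  set M := IsLocalRing.maximalIdeal Sp with hMdef
  have hMP : Ideal.comap ψ M = P := Localization.AtPrime.comap_maximalIdeal
  have hmapP : Ideal.map ψ P = M := Localization.AtPrime.map_eq_maximalIdeal
  set x' := ψ x with hx'
  have hxP : x ∈ P := hP.1.2 (Ideal.subset_span rfl)
  have hx'M : x' ∈ M := by rw [← hmapP]; exact Ideal.mem_map_of_mem ψ hxP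
  -- every prime of Sp containing x' is M
  have hprime_eq : ∀ J : Ideal Sp, J.IsPrime → x' ∈ J → J = M := by
    intro J hJ hxJ
    have hJM : J ≤ M := IsLocalRing.le_maximalIdeal hJ.ne_top
    haveI h1 : (Ideal.comap ψ J).IsPrime := hJ.comap ψ
    have h2 : Ideal.span {x} ≤ Ideal.comap ψ J := by
      rw [Ideal.span_le, Set.singleton_subset_iff]
      exact hxJ
    have h3 : Ideal.comap ψ J ≤ P := le_trans (Ideal.comap_mono hJM) (le_of_eq hMP)
    have h4 : P ≤ Ideal.comap ψ J := hP.2 ⟨h1, h2⟩ h3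
    have h5 : Ideal.comap ψ J = P := le_antisymm h3 h4
    calc J = Ideal.map ψ (Ideal.comap ψ J) := (IsLocalization.map_comap P.primeCompl Sp J).symm
    _ = Ideal.map ψ P := by rw [h5]
    _ = M := hmapP
  -- the radical of (x') is M, so some power of M is contained in (x')
  have hrad : (Ideal.span {x'}).radical = M := by
    rw [Ideal.radical_eq_sInf]
    apply le_antisymm
    · refine sInf_le ⟨?_, (IsLocalRing.maximalIdeal.isMaximal Sp).isPrime⟩
      rw [Ideal.span_le, Set.singleton_subset_iff]
      exact hx'M
    · refine le_sInf ?_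
      rintro J ⟨hle, hJp⟩
      rw [hprime_eq J hJp (hle (Ideal.subset_span rfl))]
  obtain ⟨k, hk⟩ := Ideal.exists_radical_pow_le_of_fg (Ideal.span {x'}) (IsNoetherian.noetherian _)
  rw [hrad] at hk
  -- the primes q₀ < q₁ < P give primes Q0 < Q1 < M in Sp
  have disj1 : Disjoint (P.primeCompl : Set B) (q₁ : Set B) := by
    rw [Set.disjoint_left]
    intro a ha ha'
    exact ha (h1P.le ha')
  have disj0 : Disjoint (P.primeCompl : Set B) (q₀ : Set B) := by
    rw [Set.disjoint_left]
    intro a ha ha'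
    exact ha (h1P.le (h01.le ha'))
  set Q1 := Ideal.map ψ q₁ with hQ1def
  set Q0 := Ideal.map ψ q₀ with hQ0def
  haveI hQ1 : Q1.IsPrime := IsLocalization.isPrime_of_isPrime_disjoint P.primeCompl Sp q₁ hq₁ disj1
  haveI hQ0 : Q0.IsPrime := IsLocalization.isPrime_of_isPrime_disjoint P.primeCompl Sp q₀ hq₀ disj0
  have hcomap1 : Ideal.comap ψ Q1 = q₁ :=
    IsLocalization.comap_map_of_isPrime_disjoint P.primeCompl Sp hq₁ disj1
  have hcomap0 : Ideal.comap ψ Q0 = q₀ :=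
    IsLocalization.comap_map_of_isPrime_disjoint P.primeCompl Sp hq₀ disj0
  have hQ1M : Q1 ≠ M := by
    intro h
    apply h1P.ne
    rw [← hcomap1, h, hMP]
  have hQ01 : Q0 < Q1 := by
    refine lt_of_le_of_ne (Ideal.map_mono h01.le) ?_
    intro h
    apply h01.ne
    rw [← hcomap0, h, hcomap1]
  have hx'Q1 : x' ∉ Q1 := fun h => hQ1M (hprime_eq Q1 hQ1 h)
  -- localize further at Q1 and consider symbolic powers of q₁
  set L := Localization Q1.primeCompl with hL
  haveI : IsNoetherianRing L := IsLocalization.isNoetherianRing Q1.primeCompl L ‹_›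
  set θ := algebraMap Sp L with hθ
  set w : ℕ → Ideal Sp := fun n => Ideal.comap θ (Ideal.map θ Q1 ^ n) with hw
  have wdesc : ∀ n, w (n + 1) ≤ w n := fun n =>
    Ideal.comap_mono (Ideal.pow_le_pow_right (Nat.le_succ n))
  set c : ℕ → Ideal Sp := fun n => w n ⊔ Ideal.span {x'} with hc
  have cdesc : ∀ n, c (n + 1) ≤ c n := fun n => sup_le_sup_right (wdesc n) _
  have hMk_le : ∀ n, (M ^ k : Ideal Sp) ≤ c n := fun n => le_trans hk le_sup_right
  -- stabilization via Artinianness of Sp ⧸ M^k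
  haveI hart : IsArtinian Sp (Sp ⧸ (M ^ k : Ideal Sp)) :=
    aux_isArtinian_quot_pow M (IsLocalRing.maximalIdeal.isMaximal Sp) k
  set Mk : Submodule Sp Sp := (M ^ k : Ideal Sp) with hMk
  set d : ℕ → Submodule Sp (Sp ⧸ Mk) := fun n => Submodule.map Mk.mkQ (c n) with hd
  have hrec : ∀ n, Submodule.comap Mk.mkQ (d n) = c n := by
    intro n
    rw [hd]
    refine Submodule.comap_map_eq_self ?_
    rw [Submodule.ker_mkQ]
    exact hMk_le n
  obtain ⟨dN, ⟨N, hdN⟩, hmin⟩ := (IsWellFounded.wf :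
      WellFounded ((· < ·) : Submodule Sp (Sp ⧸ Mk) → Submodule Sp (Sp ⧸ Mk) → Prop)).has_min
      (Set.range d) ⟨d 0, 0, rfl⟩
  have hstab : c (N + 1) = c N := by
    have h1 : d (N + 1) ≤ d N := Submodule.map_mono (cdesc N)
    have h2 : ¬ d (N + 1) < dN := hmin (d (N + 1)) ⟨N + 1, rfl⟩
    rw [← hdN] at h2
    have h3 : d (N + 1) = d N := h1.lt_or_eq.resolve_left h2
    rw [← hrec (N + 1), ← hrec N, h3]
  -- conclude w N ≤ w (N+1) ⊔ (x') • w N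
  have hx'unit : IsUnit (θ x') := IsLocalization.map_units L (⟨x', hx'Q1⟩ : Q1.primeCompl)
  have step : w N ≤ w (N + 1) ⊔ Ideal.span {x'} • w N := by
    intro a ha
    have haC : a ∈ c (N + 1) := by
      rw [hstab]
      exact le_sup_left (α := Ideal Sp) ha
    rw [hc] at haC
    obtain ⟨b, hb, z, hz, rfl⟩ := Submodule.mem_sup.mp haC
    obtain ⟨r, rfl⟩ := Ideal.mem_span_singleton'.mp hz
    have hbN : b ∈ w N := wdesc N hb
    have hrx : r * x' ∈ w N := by
      have : b + r * x' - b ∈ w N := Submodule.sub_mem _ ha hbN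
      simpa using this
    have hr : r ∈ w N := by
      have hmem : θ (r * x') ∈ Ideal.map θ Q1 ^ N := hrx
      rw [_root_.map_mul] at hmem
      obtain ⟨u, hu⟩ := hx'unit
      have hru : θ r = ↑u⁻¹ * (θ r * θ x') := by
        rw [← hu, mul_comm (θ r), ← mul_assoc, Units.inv_mul, one_mul]
      show θ r ∈ Ideal.map θ Q1 ^ N
      rw [hru]
      exact Ideal.mul_mem_left _ _ hmem
    refine Submodule.mem_sup.mpr ⟨b, hb, r * x', ?_, rfl⟩
    rw [Ideal.smul_eq_mul, mul_comm]
    exact Ideal.mul_mem_mul hr (Ideal.subset_span rfl)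
  -- Nakayama in Sp
  have hjac : Ideal.span {x'} ≤ Ideal.jacobson ⊥ := by
    rw [IsLocalRing.jacobson_eq_maximalIdeal (⊥ : Ideal Sp) bot_ne_top]
    rw [Ideal.span_le, Set.singleton_subset_iff]
    exact hx'M
  have weq : w N = w (N + 1) :=
    le_antisymm (Submodule.le_of_le_smul_of_le_jacobson_bot (IsNoetherian.noetherian (w N))
      hjac step) (wdesc N)
  -- extend back to L
  have hmapw : ∀ n, Ideal.map θ (w n) = Ideal.map θ Q1 ^ n := fun n =>
    IsLocalization.map_comap Q1.primeCompl L _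
  have hpow : Ideal.map θ Q1 ^ N = Ideal.map θ Q1 ^ (N + 1) := by
    rw [← hmapw, ← hmapw, weq]
  -- Nakayama in L
  have hQ1Lprime : (Ideal.map θ Q1).IsPrime := by
    refine IsLocalization.isPrime_of_isPrime_disjoint Q1.primeCompl L Q1 hQ1 ?_
    rw [Set.disjoint_left]
    intro a ha ha'
    exact ha ha'
  have hjacL : Ideal.map θ Q1 ≤ Ideal.jacobson ⊥ := by
    rw [IsLocalRing.jacobson_eq_maximalIdeal (⊥ : Ideal L) bot_ne_top]
    exact IsLocalRing.le_maximalIdeal hQ1Lprime.ne_top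
  have hbot : Ideal.map θ Q1 ^ N = ⊥ := by
    refine Submodule.eq_bot_of_le_smul_of_le_jacobson_bot (Ideal.map θ Q1) _
      (IsNoetherian.noetherian _) ?_ hjacL
    rw [Ideal.smul_eq_mul]
    conv_lhs => rw [hpow, Submodule.pow_succ, Submodule.mul_comm]
  -- derive the contradiction
  rcases Nat.eq_zero_or_pos N with hN | hN
  · rw [hN, Submodule.pow_zero, Ideal.one_eq_top] at hbot
    have h1 : (1 : L) ∈ (⊥ : Ideal L) := hbot ▸ Submodule.mem_top
    exact one_ne_zero (Ideal.mem_bot.mp h1)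
  · haveI hQ0Lprime : (Ideal.map θ Q0).IsPrime := by
      refine IsLocalization.isPrime_of_isPrime_disjoint Q1.primeCompl L Q0 hQ0 ?_
      rw [Set.disjoint_left]
      intro a ha ha'
      exact ha (hQ01.le ha')
    have hle : Ideal.map θ Q1 ^ N ≤ Ideal.map θ Q0 := hbot ▸ bot_le
    have hle2 : Ideal.map θ Q1 ≤ Ideal.map θ Q0 :=
      (Ideal.IsPrime.pow_le_iff (Nat.pos_iff_ne_zero.mp hN)).mp hle
    have hcomapL1 : Ideal.comap θ (Ideal.map θ Q1) = Q1 := by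
      refine IsLocalization.comap_map_of_isPrime_disjoint Q1.primeCompl L hQ1 ?_
      rw [Set.disjoint_left]
      intro a ha ha'
      exact ha ha'
    have hcomapL0 : Ideal.comap θ (Ideal.map θ Q0) = Q0 := by
      refine IsLocalization.comap_map_of_isPrime_disjoint Q1.primeCompl L hQ0 ?_
      rw [Set.disjoint_left]
      intro a ha ha'
      exact ha (hQ01.le ha')
    have : Q1 ≤ Q0 := by
      rw [← hcomapL1, ← hcomapL0]
      exact Ideal.comap_mono hle2
    exact hQ01.not_ge this

end PIT

section MainAux

/-- A nonzero prime in a Noetherian domain that is minimal over a nonzero principal ideal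
has height exactly one (as a point of the prime spectrum). -/
theorem aux_height_one_of_minimal {B : Type*} [CommRing B] [IsDomain B] [IsNoetherianRing B]
    {x : B} (hx : x ≠ 0) {P : Ideal B} (hP : P ∈ (Ideal.span {x}).minimalPrimes) :
    Order.height (⟨P, hP.1.1⟩ : PrimeSpectrum B) = 1 := by
  haveI := hP.1.1
  have hxP : x ∈ P := hP.1.2 (Ideal.subset_span rfl)
  have hle : Order.height (⟨P, hP.1.1⟩ : PrimeSpectrum B) ≤ 1 := by
    have h1 : ((1 : ℕ) : ℕ∞) = (1 : ℕ∞) := by norm_num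
    rw [← h1, Order.height_le_coe_iff]
    intro y hy
    have : Order.height y = 0 := by
      rw [Order.height_eq_zero]
      by_contra hmin
      obtain ⟨z, hz⟩ := not_isMin_iff.mp hmin
      exact aux_pit x P y.asIdeal z.asIdeal hP y.2 z.2 hz hy
    rw [this]
    norm_num
  have hne : (⟨P, hP.1.1⟩ : PrimeSpectrum B) ≠ ⊥ := by
    intro h
    have : P = (⊥ : Ideal B) := congrArg PrimeSpectrum.asIdeal h
    rw [this] at hxP
    exact hx (Ideal.mem_bot.mp hxP)
  have hge : Order.height (⟨P, hP.1.1⟩ : PrimeSpectrum B) ≠ 0 := by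
    rw [Ne, Order.height_eq_zero]
    intro hmin
    exact hne (hmin.eq_bot)
  exact le_antisymm hle (ENat.one_le_iff_ne_zero.mpr hge)

end MainAux

/-- Let `R ⊆ A` be an extension of Noetherian commutative integral domains with `A`
integral over `R`, and let `ξ ∈ R` be nonzero. If `A` has exactly one height-one prime
containing `ξ`, then `R` has exactly one height-one prime containing `ξ`. -/
theorem stmt_10 (R A : Type*) [CommRing R] [CommRing A] [IsDomain R] [IsDomain A]
    [IsNoetherianRing R] [IsNoetherianRing A] [Algebra R A]
    (hinj : Function.Injective (algebraMap R A)) [Algebra.IsIntegral R A]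
    (ξ : R) (hξ : ξ ≠ 0)
    (hA : ∃! Q : PrimeSpectrum A, Order.height Q = 1 ∧ algebraMap R A ξ ∈ Q.asIdeal) :
    ∃! P : PrimeSpectrum R, Order.height P = 1 ∧ ξ ∈ P.asIdeal := by
  obtain ⟨Q, ⟨hQh, hQξ⟩, hQuniq⟩ := hA
  set φ := algebraMap R A with hφ
  have hξ' : φ ξ ≠ 0 := fun h => hξ (hinj (h.trans (map_zero φ).symm))
  have hker : ∀ p : Ideal R, Ideal.comap φ (⊥ : Ideal A) ≤ p := by
    intro p a ha
    have : φ a = 0 := Ideal.mem_bot.mp (Ideal.mem_comap.mp ha)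
    have : a = 0 := hinj (this.trans (map_zero φ).symm)
    rw [this]; exact p.zero_mem
  -- the candidate: the contraction of Q
  haveI hQp : Q.asIdeal.IsPrime := Q.2
  set P₀ : PrimeSpectrum R := ⟨Ideal.comap φ Q.asIdeal, Ideal.IsPrime.comap φ⟩ with hP₀
  have hP₀ξ : ξ ∈ P₀.asIdeal := Ideal.mem_comap.mpr hQξ
  have hP₀bot : P₀ ≠ ⊥ := by
    intro h
    have : P₀.asIdeal = (⊥ : Ideal R) := congrArg PrimeSpectrum.asIdeal h
    rw [this] at hP₀ξ
    exact hξ (Ideal.mem_bot.mp hP₀ξ)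
  -- key: any prime of A lying over a prime of R which dominates a 2-chain leads to contradiction
  have key : Order.height P₀ ≤ 1 := by
    have h1 : ((1 : ℕ) : ℕ∞) = (1 : ℕ∞) := by norm_num
    rw [← h1, Order.height_le_coe_iff]
    intro y hy
    rw [show ((1 : ℕ) : ℕ∞) = (1 : ℕ∞) from by norm_num]
    by_contra hcon
    have h0y : Order.height y ≠ 0 := by
      intro h
      rw [h] at hcon
      exact hcon (by norm_num)
    have : ¬ IsMin y := fun hmin => h0y (Order.height_eq_zero.mpr hmin)
    obtain ⟨z, hz⟩ := not_isMin_iff.mp this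
    -- lift the chain z < y < P₀ to A via going up
    haveI := z.2
    haveI := y.2
    obtain ⟨a₀, -, ha₀p, ha₀c⟩ :=
      Ideal.exists_ideal_over_prime_of_isIntegral z.asIdeal (⊥ : Ideal A) (hker _)
    haveI := ha₀p
    obtain ⟨a₁, h01, ha₁p, ha₁c⟩ :=
      Ideal.exists_ideal_over_prime_of_isIntegral y.asIdeal a₀ (by rw [ha₀c]; exact hz.le)
    haveI := ha₁p
    obtain ⟨a₂, h12, ha₂p, ha₂c⟩ :=
      Ideal.exists_ideal_over_prime_of_isIntegral P₀.asIdeal a₁ (by rw [ha₁c]; exact hy.le)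
    haveI := ha₂p
    have h01' : a₀ < a₁ := lt_of_le_of_ne h01 (by
      intro h; apply hz.ne; apply PrimeSpectrum.ext; rw [← ha₀c, h, ha₁c])
    have h12' : a₁ < a₂ := lt_of_le_of_ne h12 (by
      intro h; apply hy.ne; apply PrimeSpectrum.ext; rw [← ha₁c, h, ha₂c])
    have hξa₂ : φ ξ ∈ a₂ := by
      have : ξ ∈ Ideal.comap φ a₂ := ha₂c ▸ hP₀ξ
      exact Ideal.mem_comap.mp this
    -- a minimal prime of (φ ξ) inside a₂ is Q by uniqueness
    have hspan : Ideal.span {φ ξ} ≤ a₂ := by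
      rw [Ideal.span_le, Set.singleton_subset_iff]; exact hξa₂
    obtain ⟨Q₀, hQ₀min, hQ₀le⟩ := Ideal.exists_minimalPrimes_le hspan
    have hQ₀h : Order.height (⟨Q₀, hQ₀min.1.1⟩ : PrimeSpectrum A) = 1 :=
      aux_height_one_of_minimal hξ' hQ₀min
    have hQ₀ξ : φ ξ ∈ Q₀ := hQ₀min.1.2 (Ideal.subset_span rfl)
    have hQ₀eq : (⟨Q₀, hQ₀min.1.1⟩ : PrimeSpectrum A) = Q := hQuniq _ ⟨hQ₀h, hQ₀ξ⟩
    have hQle : Q.asIdeal ≤ a₂ := by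
      rw [← hQ₀eq]; exact hQ₀le
    -- incomparability: Q = a₂
    have hQeq : Q.asIdeal = a₂ := by
      by_contra hne
      have hlt : Q.asIdeal < a₂ := lt_of_le_of_ne hQle hne
      obtain ⟨t, htm, htn⟩ := SetLike.exists_of_lt hlt
      have := Ideal.comap_lt_comap_of_integral_mem_sdiff (I := Q.asIdeal) (J := a₂) hQle
        ⟨htm, htn⟩ (Algebra.IsIntegral.isIntegral (R := R) t)
      rw [ha₂c] at this
      exact lt_irrefl _ (hP₀ ▸ this)
    -- but then height Q ≥ 2, contradicting height Q = 1
    have hy' : (⟨a₁, ha₁p⟩ : PrimeSpectrum A) < Q := by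
      rw [← PrimeSpectrum.asIdeal_lt_asIdeal]
      show a₁ < Q.asIdeal
      rw [hQeq]; exact h12'
    have h1Q : Order.height (⟨a₁, ha₁p⟩ : PrimeSpectrum A) < 1 := by
      have h := (Order.height_le_coe_iff (x := Q) (n := 1)).mp (by rw [hQh]; norm_num)
      have := h _ hy'
      rwa [Nat.cast_one] at this
    have h0a₁ : Order.height (⟨a₁, ha₁p⟩ : PrimeSpectrum A) = 0 :=
      ENat.lt_one_iff_eq_zero.mp h1Q
    have hmin₁ : IsMin (⟨a₁, ha₁p⟩ : PrimeSpectrum A) := Order.height_eq_zero.mp h0a₁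
    have hlt01 : (⟨a₀, ha₀p⟩ : PrimeSpectrum A) < ⟨a₁, ha₁p⟩ :=
      (PrimeSpectrum.asIdeal_lt_asIdeal _ _).mp h01'
    exact hmin₁.not_lt hlt01
  -- height of P₀ is 1
  have hP₀0 : Order.height P₀ ≠ 0 := by
    rw [Ne, Order.height_eq_zero]
    intro hmin
    exact hP₀bot hmin.eq_bot
  have hP₀h : Order.height P₀ = 1 := le_antisymm key (ENat.one_le_iff_ne_zero.mpr hP₀0)
  refine ⟨P₀, ⟨hP₀h, hP₀ξ⟩, ?_⟩
  -- uniqueness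
  rintro P' ⟨hP'h, hP'ξ⟩
  haveI := P'.2
  obtain ⟨q, -, hqp, hqc⟩ :=
    Ideal.exists_ideal_over_prime_of_isIntegral P'.asIdeal (⊥ : Ideal A) (hker _)
  haveI := hqp
  set qpt : PrimeSpectrum A := ⟨q, hqp⟩ with hqpt
  have hφξq : φ ξ ∈ q := by
    have : ξ ∈ Ideal.comap φ q := hqc ▸ hP'ξ
    exact Ideal.mem_comap.mp this
  -- the contraction map is strictly monotone
  let f : PrimeSpectrum A → PrimeSpectrum R := fun T =>
    ⟨Ideal.comap φ T.asIdeal, by haveI := T.2; infer_instance⟩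
  have hf : StrictMono f := by
    intro a b hab
    have hab' : a.asIdeal < b.asIdeal := (PrimeSpectrum.asIdeal_lt_asIdeal _ _).mpr hab
    obtain ⟨t, htm, htn⟩ := SetLike.exists_of_lt hab'
    haveI := a.2
    have := Ideal.comap_lt_comap_of_integral_mem_sdiff (I := a.asIdeal) (J := b.asIdeal)
      hab'.le ⟨htm, htn⟩ (Algebra.IsIntegral.isIntegral (R := R) t)
    exact (PrimeSpectrum.asIdeal_lt_asIdeal _ _).mp this
  have hq1 : Order.height qpt ≤ 1 := by
    have h := Order.height_le_height_apply_of_strictMono f hf qpt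
    have hfq : f qpt = P' := PrimeSpectrum.ext hqc
    rw [hfq, hP'h] at h
    exact h
  have hqbot : qpt ≠ ⊥ := by
    intro h
    have : q = (⊥ : Ideal A) := congrArg PrimeSpectrum.asIdeal h
    rw [this] at hφξq
    exact hξ' (Ideal.mem_bot.mp hφξq)
  have hq0 : Order.height qpt ≠ 0 := by
    rw [Ne, Order.height_eq_zero]
    intro hmin
    exact hqbot hmin.eq_bot
  have hqh : Order.height qpt = 1 := le_antisymm hq1 (ENat.one_le_iff_ne_zero.mpr hq0)
  have hqQ : qpt = Q := hQuniq qpt ⟨hqh, hφξq⟩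
  apply PrimeSpectrum.ext
  show P'.asIdeal = P₀.asIdeal
  rw [← hqc]
  have : q = Q.asIdeal := congrArg PrimeSpectrum.asIdeal hqQ
  rw [this]
end

section
/- Let k be a field, let T = k[X_1, …, X_d] be a polynomial ring in d variables, and let A be a commutative ring containing T that is finite and free as a T-module. Let R be any intermediate ring T ⊆ R ⊆ A, and let u_1, …, u_g ∈ T be a T-regular sequence. If the ideal (u_1, …, u_g)A of A has exactly one minimal prime, then the ideal (u_1, …, u_g)R of R has exactly one minimal prime. -/
/-- Let `k` be a field, `T = k[X_1, …, X_d]`, and `A` a commutative ring containing `T`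
which is finite free as a `T`-module. Let `R` be any intermediate ring `T ⊆ R ⊆ A`, and
let `u_1, …, u_g ∈ T` be a `T`-regular sequence. If the ideal `(u_1, …, u_g)A` has exactly
one minimal prime, then the ideal `(u_1, …, u_g)R` has exactly one minimal prime. -/
theorem stmt_13 (k : Type*) [Field k] (d : ℕ) (A : Type*) [CommRing A]
    [Algebra (MvPolynomial (Fin d) k) A]
    (hinj : Function.Injective (algebraMap (MvPolynomial (Fin d) k) A))
    [Module.Finite (MvPolynomial (Fin d) k) A] [Module.Free (MvPolynomial (Fin d) k) A]
    (R : Subalgebra (MvPolynomial (Fin d) k) A)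
    (us : List (MvPolynomial (Fin d) k))
    (hreg : RingTheory.Sequence.IsRegular (MvPolynomial (Fin d) k) us)
    (hA : ∃! Q : Ideal A, Q ∈ (Ideal.span
      ((algebraMap (MvPolynomial (Fin d) k) A) '' {x | x ∈ us})).minimalPrimes) :
    ∃! P : Ideal R, P ∈ (Ideal.span
      ((algebraMap (MvPolynomial (Fin d) k) R) '' {x | x ∈ us})).minimalPrimes := by
  set IA : Ideal A :=
    Ideal.span ((algebraMap (MvPolynomial (Fin d) k) A) '' {x | x ∈ us}) with hIA
  set IR : Ideal R :=
    Ideal.span ((algebraMap (MvPolynomial (Fin d) k) R) '' {x | x ∈ us}) with hIR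
  obtain ⟨Q, hQ, hQuniq⟩ := hA
  have hQprime : Q.IsPrime := hQ.1.1
  have hIAQ : IA ≤ Q := hQ.1.2
  haveI : Algebra.IsIntegral (MvPolynomial (Fin d) k) A :=
    Algebra.IsIntegral.of_finite (MvPolynomial (Fin d) k) A
  haveI : Algebra.IsIntegral R A :=
    ⟨fun x => (Algebra.IsIntegral.isIntegral (R := MvPolynomial (Fin d) k) x).tower_top⟩
  set f : R →+* A := algebraMap R A with hf
  have hmap : ∀ u : MvPolynomial (Fin d) k,
      f (algebraMap (MvPolynomial (Fin d) k) R u) = algebraMap (MvPolynomial (Fin d) k) A u := by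
    intro u
    rw [hf, ← IsScalarTower.algebraMap_apply]
  -- `IR` is contained in the contraction of `Q`.
  have hIRle : IR ≤ Q.comap f := by
    rw [hIR, Ideal.span_le]
    rintro _ ⟨u, hu, rfl⟩
    rw [SetLike.mem_coe, Ideal.mem_comap, hmap]
    exact hIAQ (Ideal.subset_span ⟨u, hu, rfl⟩)
  -- every prime of `R` containing `IR` contains `Q.comap f`
  have key : ∀ P' : Ideal R, P'.IsPrime → IR ≤ P' → Q.comap f ≤ P' := by
    intro P' hP' hle
    haveI := hP'
    obtain ⟨Q', _hQ'le, hQ'prime, hQ'comap⟩ :=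
      Ideal.exists_ideal_over_prime_of_isIntegral (S := A) P' ⊥ (fun x hx => by
        have hx0 : f x = 0 := hx
        have : x = 0 := Subtype.ext hx0
        rw [this]; exact P'.zero_mem)
    haveI := hQ'prime
    have hIAQ' : IA ≤ Q' := by
      rw [hIA, Ideal.span_le]
      rintro _ ⟨u, hu, rfl⟩
      have h1 : algebraMap (MvPolynomial (Fin d) k) R u ∈ P' :=
        hle (Ideal.subset_span ⟨u, hu, rfl⟩)
      rw [← hQ'comap, Ideal.mem_comap, hmap] at h1
      exact h1
    obtain ⟨Q'', hQ''min, hQ''le⟩ := Ideal.exists_minimalPrimes_le hIAQ'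
    have hQQ : Q ≤ Q' := by
      have hEq := hQuniq Q'' hQ''min
      rw [← hEq]; exact hQ''le
    calc Q.comap f ≤ Q'.comap f := Ideal.comap_mono hQQ
      _ = P' := hQ'comap
  refine ⟨Q.comap f, ⟨⟨Ideal.IsPrime.comap f, hIRle⟩, ?_⟩, ?_⟩
  · rintro P' ⟨hP'prime, hP'le⟩ _
    exact key P' hP'prime hP'le
  · rintro P ⟨⟨hPprime, hPle⟩, hPmin⟩
    exact le_antisymm (hPmin ⟨Ideal.IsPrime.comap f, hIRle⟩ (key P hPprime hPle))
      (key P hPprime hPle)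
end

section
/- Let k be an algebraically closed field and let m, n ≥ 2 be integers with gcd(m, n) = 1 such that mn is invertible in k (i.e., the image of m·n in k is nonzero). Let (a, b) ∈ k² be a nonzero pair. Then the quotient ring k[X, Y, Z]/(X^n + Y^m + Z^n, aX + bZ) has exactly one minimal prime ideal. -/
open MvPolynomial


theorem aux_rm_pow {R : Type*} [CommRing R] [IsDomain R] (x : R) (r : Polynomial R)
    (hr : r ≠ 0) (t : ℕ) :
    Polynomial.rootMultiplicity x (r ^ t) = t * Polynomial.rootMultiplicity x r := by
  induction t with
  | zero => simpa using Polynomial.rootMultiplicity_C 1 x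
  | succ t ih =>
      rw [pow_succ, Polynomial.rootMultiplicity_mul (mul_ne_zero (pow_ne_zero _ hr) hr), ih]
      ring

theorem aux_prime_poly {k : Type*} [Field k] (N M : ℕ) (hN : Odd N) (hM : 1 ≤ M)
    (hco : ∀ p : ℕ, p.Prime → p ∣ N → ¬ p ∣ M) (e : k) (he : e ≠ 0) :
    Prime (Polynomial.X ^ N + Polynomial.C (Polynomial.C e * Polynomial.X ^ M)
      : Polynomial (Polynomial k)) := by
  set c : Polynomial k := Polynomial.C e * Polynomial.X ^ M with hc_def
  have hc : c ≠ 0 := mul_ne_zero (by simpa using he) (pow_ne_zero _ Polynomial.X_ne_zero)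
  have hN1 : 1 ≤ N := hN.pos
  have hmonic : (Polynomial.X ^ N + Polynomial.C c :
      Polynomial (Polynomial k)).Monic := by
    apply Polynomial.monic_X_pow_add
    exact lt_of_le_of_lt (Polynomial.degree_C_le) (by exact_mod_cast hN1)
  rw [← UniqueFactorizationMonoid.irreducible_iff_prime]
  rw [hmonic.irreducible_iff_irreducible_map_fraction_map (K := FractionRing (Polynomial k))]
  have : (Polynomial.X ^ N + Polynomial.C c).map
      (algebraMap (Polynomial k) (FractionRing (Polynomial k)))
      = Polynomial.X ^ N - Polynomial.C (-(algebraMap (Polynomial k)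
          (FractionRing (Polynomial k)) c)) := by
    simp [Polynomial.map_add, Polynomial.map_pow, sub_neg_eq_add]
  rw [this]
  apply X_pow_sub_C_irreducible_of_odd hN
  intro p hp hpN b hb
  have hane : (-(algebraMap (Polynomial k) (FractionRing (Polynomial k)) c)) ≠ 0 := by
    simpa using (map_ne_zero_iff _ (IsFractionRing.injective (Polynomial k)
      (FractionRing (Polynomial k)))).mpr hc
  have hb0 : b ≠ 0 := by
    rintro rfl
    rw [zero_pow hp.ne_zero] at hb
    exact hane hb.symm
  obtain ⟨r, s, hs, rfl⟩ := IsFractionRing.div_surjective (A := Polynomial k) b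
  have hs0 : s ≠ 0 := nonZeroDivisors.ne_zero hs
  have hsK : algebraMap (Polynomial k) (FractionRing (Polynomial k)) s ≠ 0 := by
    simpa using (map_ne_zero_iff _ (IsFractionRing.injective (Polynomial k)
      (FractionRing (Polynomial k)))).mpr hs0
  have hr0 : r ≠ 0 := by
    rintro rfl
    exact hb0 (by simp)
  have key : r ^ p = (-c) * s ^ p := by
    apply IsFractionRing.injective (Polynomial k) (FractionRing (Polynomial k))
    rw [div_pow] at hb
    field_simp at hb
    push_cast [map_mul, map_pow, map_neg]
    rw [hb]; ring
  have hv := congrArg (Polynomial.rootMultiplicity 0) key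
  rw [aux_rm_pow 0 r hr0, Polynomial.rootMultiplicity_mul
    (mul_ne_zero (neg_ne_zero.mpr hc) (pow_ne_zero _ hs0)), aux_rm_pow 0 s hs0] at hv
  have hvc : Polynomial.rootMultiplicity 0 (-c) = M := by
    have : -c = Polynomial.C (-e) * Polynomial.X ^ M := by rw [hc_def]; ring_nf; simp [map_neg]
    rw [this, Polynomial.rootMultiplicity_mul
      (mul_ne_zero (by simpa using neg_ne_zero.mpr he) (pow_ne_zero _ Polynomial.X_ne_zero)),
      Polynomial.rootMultiplicity_C, aux_rm_pow 0 _ Polynomial.X_ne_zero]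
    have : Polynomial.rootMultiplicity (0:k) Polynomial.X = 1 := by
      simpa using (Polynomial.rootMultiplicity_X_sub_C_self (x := (0:k)))
    rw [this]; ring
  rw [hvc] at hv
  apply hco p hp hpN
  have : M = p * Polynomial.rootMultiplicity 0 r - p * Polynomial.rootMultiplicity 0 s := by
    omega
  rw [this]
  exact Nat.dvd_sub (Dvd.intro _ rfl) (Dvd.intro _ rfl)


theorem aux_unique_min {R : Type*} [CommRing R] (I : Ideal R) (hrad : I.radical.IsPrime) :
    ∃! P : Ideal (R ⧸ I), P ∈ minimalPrimes (R ⧸ I) := by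
  set π := Ideal.Quotient.mk I
  have hker : RingHom.ker π ≤ I.radical := by
    rw [Ideal.mk_ker]; exact Ideal.le_radical
  set P := Ideal.map π I.radical with hP
  have hPprime : P.IsPrime :=
    Ideal.map_isPrime_of_surjective Ideal.Quotient.mk_surjective hker
  have least : ∀ Q : Ideal (R ⧸ I), Q.IsPrime → P ≤ Q := by
    intro Q hQ
    have h1 : I ≤ Ideal.comap π Q := fun x hx => by
      show π x ∈ Q
      rw [Ideal.Quotient.eq_zero_iff_mem.mpr hx]
      exact Q.zero_mem
    have h2 : I.radical ≤ Ideal.comap π Q :=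
      (Ideal.comap_isPrime π Q).radical_le_iff.mpr h1
    calc P ≤ Ideal.map π (Ideal.comap π Q) := Ideal.map_mono h2
      _ = Q := Ideal.map_comap_of_surjective π Ideal.Quotient.mk_surjective Q
  refine ⟨P, ⟨⟨hPprime, bot_le⟩, ?_⟩, ?_⟩
  · intro Q hQ _
    exact least Q hQ.1
  · intro Q hQ
    exact le_antisymm (hQ.2 ⟨hPprime, bot_le⟩ (least Q hQ.1.1)) (least Q hQ.1.1)



theorem aux_rad_prime {R S : Type*} [CommRing R] [CommRing S] (I : Ideal R)
    (φ : R →+* S) (s : S →+* R) (hss : ∀ y, φ (s y) = y)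
    (hsec : ∀ x, x - s (φ x) ∈ I) (hJ : (I.map φ).radical.IsPrime) :
    I.radical.IsPrime := by
  have hsurj : Function.Surjective φ := fun y => ⟨s y, hss y⟩
  have hker : RingHom.ker φ ≤ I := fun x hx => by
    have h := hsec x
    rwa [show φ x = 0 from hx, map_zero, sub_zero] at h
  have hI : I = Ideal.comap φ (I.map φ) := by
    rw [Ideal.comap_map_of_surjective φ hsurj I]
    refine (sup_eq_left.mpr ?_).symm
    rw [← RingHom.ker_eq_comap_bot]
    exact hker
  rw [hI, ← Ideal.comap_radical]
  exact Ideal.comap_isPrime φ _ (H := hJ)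

theorem aux_rad {S : Type*} [CommRing S] [IsDomain S] (E h : S) (t : ℕ) (ht : t ≠ 0)
    (hp : Prime h) (ha : Associated (h ^ t) E) : (Ideal.span {E}).radical.IsPrime := by
  have hsp : (Ideal.span {h} : Ideal S).IsPrime :=
    (Ideal.span_singleton_prime hp.ne_zero).mpr hp
  rw [← Ideal.span_singleton_eq_span_singleton.mpr ha, ← Ideal.span_singleton_pow]
  rw [Ideal.radical_pow _ ht, hsp.radical]
  exact hsp

theorem aux_map_span {R S : Type*} [CommRing R] [CommRing S] (φ : R →+* S) (g x : R) (E : S)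
    (hg : φ g = E) (hx : φ x = 0) : Ideal.map φ (Ideal.span {g, x}) = Ideal.span {E} := by
  rw [Ideal.map_span, Set.image_insert_eq, Set.image_singleton, hg, hx, Ideal.span_insert,
    show Ideal.span {(0 : S)} = ⊥ from Ideal.span_singleton_eq_bot.mpr rfl, sup_bot_eq]

theorem aux_span_pair {R : Type*} [CommRing R] [IsDomain R] (g x u : R) (hu : IsUnit u) :
    Ideal.span {g, u * x} = Ideal.span {g, x} := by
  rw [Ideal.span_insert, Ideal.span_insert, mul_comm,
    Ideal.span_singleton_eq_span_singleton.mpr (associated_mul_unit_left x u hu)]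

theorem aux_final {k : Type*} [Field k] (i j : Fin 3) (u : Fin 3 → Polynomial (Polynomial k))
    (hui : u i = Polynomial.X) (huj : u j = Polynomial.C Polynomial.X)
    (I : Ideal (MvPolynomial (Fin 3) k))
    (hX : ∀ v : Fin 3, (X v : MvPolynomial (Fin 3) k) -
      Polynomial.eval₂ (Polynomial.eval₂RingHom (MvPolynomial.C) (X j)) (X i) (u v) ∈ I)
    (E h : Polynomial (Polynomial k)) (t : ℕ) (ht : t ≠ 0) (hp : Prime h)
    (ha : Associated (h ^ t) E)
    (hmap : Ideal.map (MvPolynomial.aeval u).toRingHom I = Ideal.span {E}) :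
    I.radical.IsPrime := by
  set s : Polynomial (Polynomial k) →+* MvPolynomial (Fin 3) k :=
    Polynomial.eval₂RingHom (Polynomial.eval₂RingHom (MvPolynomial.C) (X j)) (X i) with hs
  set F : MvPolynomial (Fin 3) k →+* Polynomial (Polynomial k) :=
    (MvPolynomial.aeval u).toRingHom with hF
  have hFC : ∀ a : k, F (MvPolynomial.C a) = Polynomial.C (Polynomial.C a) := by
    intro a
    simp [hF, Polynomial.algebraMap_apply]
  have hFX : ∀ v, F (X v) = u v := fun v => by simp [hF]
  have hss : ∀ y, F (s y) = y := by
    intro y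
    have hinner : (F.comp s).comp (Polynomial.C : Polynomial k →+* Polynomial (Polynomial k))
        = Polynomial.C := by
      apply Polynomial.ringHom_ext
      · intro a
        simp [hs, Polynomial.eval₂_C, hFC]
      · simp [hs, Polynomial.eval₂_C, Polynomial.eval₂_X, hFX, huj]
    have houter : F.comp s = RingHom.id _ := by
      apply Polynomial.ringHom_ext
      · intro a
        exact RingHom.congr_fun hinner a
      · simp [hs, Polynomial.eval₂_X, hFX, hui]
    exact RingHom.congr_fun houter y
  have hsec : ∀ x, x - s (F x) ∈ I := by
    intro x
    induction x using MvPolynomial.induction_on with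
    | C a => rw [hFC a, hs]; simpa [Polynomial.eval₂_C] using I.zero_mem
    | add p q hp' hq' =>
        have := I.add_mem hp' hq'
        have heq : p + q - s (F (p + q)) = (p - s (F p)) + (q - s (F q)) := by
          rw [map_add, map_add]; ring
        rwa [heq]
    | mul_X p v hp' =>
        have heq : p * X v - s (F (p * X v))
            = p * (X v - s (F (X v))) + (p - s (F p)) * s (F (X v)) := by
          rw [map_mul, map_mul]; ring
        rw [heq]
        refine I.add_mem (Ideal.mul_mem_left _ _ ?_) (Ideal.mul_mem_right _ _ hp')
        rw [hFX v, hs]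
        simpa only [Polynomial.coe_eval₂RingHom] using hX v
  exact aux_rad_prime I F s hss hsec (hJ := by rw [hmap]; exact aux_rad E h t ht hp ha)



/-- Let `k` be an algebraically closed field and `m, n ≥ 2` integers with `gcd(m,n) = 1`
such that `m·n` is invertible in `k`. Let `(a, b) ∈ k²` be a nonzero pair. Then
`k[X, Y, Z]/(X^n + Y^m + Z^n, aX + bZ)` has exactly one minimal prime ideal
(variables `X, Y, Z` are indexed by `0, 1, 2`). -/
theorem stmt_14 (k : Type*) [Field k] [IsAlgClosed k] (m n : ℕ)
    (hm : 2 ≤ m) (hn : 2 ≤ n) (hgcd : Nat.gcd m n = 1)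
    (hchar : ((m * n : ℕ) : k) ≠ 0) (a b : k) (hab : (a, b) ≠ (0, 0)) :
    ∃! P : Ideal (MvPolynomial (Fin 3) k ⧸
        Ideal.span {(X 0 : MvPolynomial (Fin 3) k) ^ n + (X 1) ^ m + (X 2) ^ n,
          C a * X 0 + C b * X 2}),
      P ∈ minimalPrimes (MvPolynomial (Fin 3) k ⧸
        Ideal.span {(X 0 : MvPolynomial (Fin 3) k) ^ n + (X 1) ^ m + (X 2) ^ n,
          C a * X 0 + C b * X 2}) := by
  classical
  apply aux_unique_min
  set g : MvPolynomial (Fin 3) k := X 0 ^ n + X 1 ^ m + X 2 ^ n with hg_def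
  have hconm : ∀ p : ℕ, p.Prime → p ∣ n → ¬ p ∣ m :=
    fun p hp h1 h2 => hp.ne_one (Nat.dvd_one.mp (hgcd ▸ Nat.dvd_gcd h2 h1))
  have hcomn : ∀ p : ℕ, p.Prime → p ∣ m → ¬ p ∣ n :=
    fun p hp h1 h2 => hp.ne_one (Nat.dvd_one.mp (hgcd ▸ Nat.dvd_gcd h1 h2))
  have hm1 : 1 ≤ m := le_trans (by norm_num) hm
  have hn1 : 1 ≤ n := le_trans (by norm_num) hn
  have hodd : Odd n ∨ Odd m := by
    rcases Nat.even_or_odd n with he | ho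
    · rcases Nat.even_or_odd m with he' | ho'
      · exfalso
        have : (2 : ℕ) ∣ 1 := hgcd ▸ Nat.dvd_gcd he'.two_dvd he.two_dvd
        norm_num at this
      · exact Or.inr ho'
    · exact Or.inl ho
  by_cases hb : b = 0
  · -- case b = 0, a ≠ 0
    have ha0 : a ≠ 0 := by
      intro h; exact hab (by rw [h, hb])
    subst hb
    have hl : (C a * X 0 + C 0 * X 2 : MvPolynomial (Fin 3) k) = C a * X 0 := by simp
    rw [hl, aux_span_pair g (X 0) (C a) ((Ne.isUnit ha0).map C)]
    rcases hodd with hno | hmo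
    · -- n odd : X0 ↦ 0, X1 ↦ C Y, X2 ↦ X
      have hgeq : (MvPolynomial.aeval (![0, Polynomial.C Polynomial.X, Polynomial.X] :
          Fin 3 → Polynomial (Polynomial k))) g
          = Polynomial.X ^ n + Polynomial.C (Polynomial.C 1 * Polynomial.X ^ m) := by
        rw [hg_def]
        simp only [map_add, map_pow, aeval_X]
        norm_num [Matrix.cons_val_two]
        rw [zero_pow (by omega : n ≠ 0), ← Polynomial.C_pow]
        ring
      refine aux_final 2 1 ![0, Polynomial.C Polynomial.X, Polynomial.X] (by norm_num [Matrix.cons_val_two])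
        (by norm_num) _ ?_ (Polynomial.X ^ n + Polynomial.C (Polynomial.C 1 * Polynomial.X ^ m))
        _ 1 one_ne_zero (aux_prime_poly n m hno hm1 hconm 1 one_ne_zero) (by rw [pow_one]) ?_
      · intro v
        fin_cases v
        · norm_num
          exact Ideal.subset_span (Set.mem_insert_of_mem _ rfl)
        · norm_num [Polynomial.eval₂_C]
        · norm_num
          simpa using Ideal.zero_mem _
      · exact aux_map_span _ g (X 0) _ hgeq (by norm_num)
    · -- m odd : X0 ↦ 0, X1 ↦ X, X2 ↦ C Y
      have hgeq : (MvPolynomial.aeval (![0, Polynomial.X, Polynomial.C Polynomial.X] :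
          Fin 3 → Polynomial (Polynomial k))) g
          = Polynomial.X ^ m + Polynomial.C (Polynomial.C 1 * Polynomial.X ^ n) := by
        rw [hg_def]
        simp only [map_add, map_pow, aeval_X]
        norm_num [Matrix.cons_val_two, zero_pow (show n ≠ 0 by omega)]
      refine aux_final 1 2 ![0, Polynomial.X, Polynomial.C Polynomial.X] (by norm_num)
        (by norm_num [Matrix.cons_val_two]) _ ?_ (Polynomial.X ^ m + Polynomial.C (Polynomial.C 1 * Polynomial.X ^ n))
        _ 1 one_ne_zero (aux_prime_poly m n hmo hn1 hcomn 1 one_ne_zero) (by rw [pow_one]) ?_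
      · intro v
        fin_cases v
        · norm_num
          exact Ideal.subset_span (Set.mem_insert_of_mem _ rfl)
        · norm_num [Polynomial.eval₂_C]
        · norm_num
          simpa using Ideal.zero_mem _
      · exact aux_map_span _ g (X 0) _ hgeq (by norm_num)
  · -- case b ≠ 0
    set c : k := -(a * b⁻¹) with hc_def
    set lc : MvPolynomial (Fin 3) k := X 2 - C c * X 0 with hlc_def
    have hbc : b * c = -a := by rw [hc_def]; field_simp
    have hl : (C a * X 0 + C b * X 2 : MvPolynomial (Fin 3) k) = C b * lc := by
      rw [hlc_def, mul_sub, ← mul_assoc, ← C_mul, hbc, map_neg, neg_mul, sub_neg_eq_add]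
      ring
    rw [hl, aux_span_pair g lc (C b) ((Ne.isUnit hb).map C)]
    set d : k := 1 + c ^ n with hd_def
    have hlcmem : lc ∈ Ideal.span {g, lc} := Ideal.subset_span (Set.mem_insert_of_mem _ rfl)
    by_cases hd : d = 0
    · -- degenerate case
      have h0 : (c : k) ^ n = -1 := by
        have h1 : 1 + c ^ n = 0 := by rw [← hd_def]; exact hd
        linear_combination h1
      have hgeq : (MvPolynomial.aeval (![Polynomial.X, Polynomial.C Polynomial.X,
          Polynomial.C (Polynomial.C c) * Polynomial.X] : Fin 3 → Polynomial (Polynomial k))) g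
          = (Polynomial.C Polynomial.X) ^ m := by
        rw [hg_def]
        simp only [map_add, map_pow, aeval_X]
        norm_num [Matrix.cons_val_two]
        have h1 : ((Polynomial.C (Polynomial.C c) : Polynomial (Polynomial k))) ^ n
            = Polynomial.C (Polynomial.C (c ^ n)) := by
          rw [← Polynomial.C_pow, ← Polynomial.C_pow]
        have h4 : (Polynomial.C (Polynomial.C (-1 : k)) : Polynomial (Polynomial k)) = -1 := by
          simp
        rw [mul_pow, h1, h0, h4]
        ring
      have hlceq : (MvPolynomial.aeval (![Polynomial.X, Polynomial.C Polynomial.X,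
          Polynomial.C (Polynomial.C c) * Polynomial.X] : Fin 3 → Polynomial (Polynomial k))) lc
          = 0 := by
        rw [hlc_def]
        simp only [map_sub, map_mul, aeval_X, aeval_C]
        norm_num [Matrix.cons_val_two, Polynomial.algebraMap_apply]
      refine aux_final 0 1 ![Polynomial.X, Polynomial.C Polynomial.X,
          Polynomial.C (Polynomial.C c) * Polynomial.X] (by norm_num) (by norm_num) _ ?_
        ((Polynomial.C Polynomial.X) ^ m) (Polynomial.C Polynomial.X) m (by omega)
        (Polynomial.prime_C_iff.mpr Polynomial.prime_X) (Associated.refl _) ?_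
      · intro v
        fin_cases v <;> try norm_num [Polynomial.eval₂_C]
        all_goals first
          | exact hlcmem
          | exact Ideal.subset_span (Set.mem_insert_of_mem _ rfl)
          | simpa using Ideal.zero_mem _
      · exact aux_map_span _ g lc _ hgeq hlceq
    · -- nondegenerate
      have h1 : ((Polynomial.C (Polynomial.C c) : Polynomial (Polynomial k))) ^ n
          = Polynomial.C (Polynomial.C (c ^ n)) := by
        rw [← Polynomial.C_pow, ← Polynomial.C_pow]
      have h3 : (Polynomial.C (Polynomial.C d) : Polynomial (Polynomial k))
          = 1 + Polynomial.C (Polynomial.C (c ^ n)) := by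
        rw [hd_def, map_add, map_add, map_one, map_one]
      rcases hodd with hno | hmo
      · -- n odd
        have h2 : (Polynomial.C (Polynomial.C d) : Polynomial (Polynomial k)) *
            Polynomial.C (Polynomial.C d⁻¹) = 1 := by
          rw [← Polynomial.C_mul, ← Polynomial.C_mul, mul_inv_cancel₀ hd, map_one, map_one]
        have hgeq : (MvPolynomial.aeval (![Polynomial.X, Polynomial.C Polynomial.X,
            Polynomial.C (Polynomial.C c) * Polynomial.X] :
            Fin 3 → Polynomial (Polynomial k))) g
            = Polynomial.C (Polynomial.C d) *
              (Polynomial.X ^ n + Polynomial.C (Polynomial.C d⁻¹ * Polynomial.X ^ m)) := by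
          rw [hg_def]
          simp only [map_add, map_pow, aeval_X]
          norm_num [Matrix.cons_val_two]
          rw [mul_pow]
          linear_combination (Polynomial.X : Polynomial (Polynomial k)) ^ n * h1
            - Polynomial.X ^ n * h3
            - (Polynomial.C Polynomial.X : Polynomial (Polynomial k)) ^ m * h2
        have hlceq : (MvPolynomial.aeval (![Polynomial.X, Polynomial.C Polynomial.X,
            Polynomial.C (Polynomial.C c) * Polynomial.X] :
            Fin 3 → Polynomial (Polynomial k))) lc = 0 := by
          rw [hlc_def]
          simp only [map_sub, map_mul, aeval_X, aeval_C]
          norm_num [Matrix.cons_val_two, Polynomial.algebraMap_apply]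
        have hunit : IsUnit (Polynomial.C (Polynomial.C d) : Polynomial (Polynomial k)) :=
          ((Ne.isUnit hd).map (Polynomial.C : k →+* Polynomial k)).map
            (Polynomial.C : Polynomial k →+* Polynomial (Polynomial k))
        refine aux_final 0 1 ![Polynomial.X, Polynomial.C Polynomial.X,
            Polynomial.C (Polynomial.C c) * Polynomial.X] (by norm_num) (by norm_num) _ ?_
          (Polynomial.C (Polynomial.C d) *
            (Polynomial.X ^ n + Polynomial.C (Polynomial.C d⁻¹ * Polynomial.X ^ m)))
          (Polynomial.X ^ n + Polynomial.C (Polynomial.C d⁻¹ * Polynomial.X ^ m)) 1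
          one_ne_zero (aux_prime_poly n m hno hm1 hconm d⁻¹ (inv_ne_zero hd))
          (by rw [pow_one]; exact (associated_unit_mul_left _ _ hunit).symm) ?_
        · intro v
          fin_cases v <;> try norm_num [Polynomial.eval₂_C]
          all_goals first
            | exact hlcmem
            | exact Ideal.subset_span (Set.mem_insert_of_mem _ rfl)
            | simpa using Ideal.zero_mem _
        · exact aux_map_span _ g lc _ hgeq hlceq
      · -- m odd
        have hgeq : (MvPolynomial.aeval (![Polynomial.C Polynomial.X, Polynomial.X,
            Polynomial.C (Polynomial.C c) * Polynomial.C Polynomial.X] :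
            Fin 3 → Polynomial (Polynomial k))) g
            = Polynomial.X ^ m + Polynomial.C (Polynomial.C d * Polynomial.X ^ n) := by
          rw [hg_def]
          simp only [map_add, map_pow, aeval_X]
          norm_num [Matrix.cons_val_two]
          rw [mul_pow]
          linear_combination (Polynomial.C Polynomial.X : Polynomial (Polynomial k)) ^ n * h1
            - (Polynomial.C Polynomial.X : Polynomial (Polynomial k)) ^ n * h3
        have hlceq : (MvPolynomial.aeval (![Polynomial.C Polynomial.X, Polynomial.X,
            Polynomial.C (Polynomial.C c) * Polynomial.C Polynomial.X] :
            Fin 3 → Polynomial (Polynomial k))) lc = 0 := by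
          rw [hlc_def]
          simp only [map_sub, map_mul, aeval_X, aeval_C]
          norm_num [Matrix.cons_val_two, Polynomial.algebraMap_apply]
        refine aux_final 1 0 ![Polynomial.C Polynomial.X, Polynomial.X,
            Polynomial.C (Polynomial.C c) * Polynomial.C Polynomial.X] (by norm_num)
          (by norm_num) _ ?_
          (Polynomial.X ^ m + Polynomial.C (Polynomial.C d * Polynomial.X ^ n))
          (Polynomial.X ^ m + Polynomial.C (Polynomial.C d * Polynomial.X ^ n)) 1
          one_ne_zero (aux_prime_poly m n hmo hn1 hcomn d hd)
          (by rw [pow_one]) ?_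
        · intro v
          fin_cases v <;> try norm_num [Polynomial.eval₂_C]
          all_goals first
            | exact hlcmem
            | exact Ideal.subset_span (Set.mem_insert_of_mem _ rfl)
            | simpa using Ideal.zero_mem _
        · exact aux_map_span _ g lc _ hgeq hlceq
end

section
/- Let k be an algebraically closed field, let d ≥ 2 be an integer, and let m, n ≥ 2 be integers with gcd(m, n) = 1 such that mn is invertible in k (i.e., the image of m·n in k is nonzero). Let a, b ≥ 1 be integers with a + b = n, and let u_1, …, u_{d−1} be k-linearly independent linear forms in the variables X, Z, W_3, …, W_d. Then the quotient ring k[X, Y, Z, W_3, …, W_d]/(X^n + Y^m + X^a Z^b + W_3^n + ⋯ + W_d^n, u_1, …, u_{d−1}) has exactly one minimal prime ideal (when d = 2 the ring is k[X, Y, Z]/(X^n + Y^m + X^a Z^b, u_1)). -/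
open MvPolynomial

private def dotL {k : Type*} [Field k] {d : ℕ} (u : Fin d → k) : (Fin d → k) →ₗ[k] k where
  toFun w := ∑ j, u j * w j
  map_add' x y := by simp [mul_add, Finset.sum_add_distrib]
  map_smul' a x := by simp [Finset.mul_sum, mul_left_comm]

private noncomputable def linPoly {k : Type*} [Field k] {d : ℕ} (sA : Fin d → Fin (d + 1)) :
    (Fin d → k) →ₗ[k] MvPolynomial (Fin (d + 1)) k where
  toFun w := ∑ j, MvPolynomial.C (w j) * MvPolynomial.X (sA j)
  map_add' x y := by simp [map_add, add_mul, Finset.sum_add_distrib]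
  map_smul' a x := by
    simp [MvPolynomial.smul_eq_C_mul, Finset.mul_sum, map_mul, mul_assoc]


-- Lemma: a least prime gives a unique minimal prime
theorem myExistsUnique {R : Type*} [CommRing R] (P₀ : Ideal R) (hP : P₀.IsPrime)
    (hle : ∀ Q : Ideal R, Q.IsPrime → P₀ ≤ Q) : ∃! P, P ∈ minimalPrimes R := by
  refine ⟨P₀, ⟨⟨hP, bot_le⟩, fun Q hQ _ => hle Q hQ.1⟩, ?_⟩
  intro P hmem
  exact le_antisymm (hmem.2 ⟨hP, bot_le⟩ (hle P hmem.1.1)) (hle P hmem.1.1)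


theorem coeff_sum_X_pow {k : Type*} [Semiring k] {ι : Type*} (S : Finset ι) (cf : ι → k)
    (e : ι → ℕ) (he : ∀ a ∈ S, ∀ b ∈ S, e a = e b → a = b) (a₀ : ι) (ha₀ : a₀ ∈ S) :
    (∑ a ∈ S, Polynomial.C (cf a) * Polynomial.X ^ (e a)).coeff (e a₀) = cf a₀ := by
  rw [Polynomial.finset_sum_coeff, Finset.sum_eq_single a₀]
  · simp
  · intro a ha hne
    simp only [Polynomial.coeff_C_mul, Polynomial.coeff_X_pow]
    rw [if_neg fun h => hne (he a ha a₀ ha₀ h.symm)]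
    simp
  · intro h; exact absurd ha₀ h

theorem aux_inj {k : Type*} [Field k] {m n : ℕ} (hm : 0 < m) (hgcd : Nat.gcd m n = 1)
    {s : k} (hs : s ≠ 0) (r : Polynomial (Polynomial k)) (hdeg : r.degree < (m : ℕ))
    (hE : Polynomial.eval₂
      (Polynomial.eval₂RingHom Polynomial.C (Polynomial.C s * Polynomial.X ^ m))
      (Polynomial.X ^ n) r = 0) : r = 0 := by
  classical
  have hsup : ∀ j ∈ r.support, j < m := by
    intro j hj
    have h1 : (j : WithBot ℕ) ≤ r.degree :=
      Polynomial.le_degree_of_ne_zero (Polynomial.mem_support_iff.mp hj)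
    exact_mod_cast lt_of_le_of_lt h1 hdeg
  set S : Finset (Σ _ : ℕ, ℕ) := r.support.sigma (fun j => (r.coeff j).support) with hS
  have key : Polynomial.eval₂
      (Polynomial.eval₂RingHom Polynomial.C (Polynomial.C s * Polynomial.X ^ m))
      (Polynomial.X ^ n) r
      = ∑ p ∈ S, Polynomial.C ((r.coeff p.1).coeff p.2 * s ^ p.2)
          * Polynomial.X ^ (m * p.2 + n * p.1) := by
    rw [hS, Finset.sum_sigma, Polynomial.eval₂_eq_sum, Polynomial.sum]
    refine Finset.sum_congr rfl fun j hj => ?_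
    simp only [Polynomial.coe_eval₂RingHom]
    rw [Polynomial.eval₂_eq_sum, Polynomial.sum, Finset.sum_mul]
    refine Finset.sum_congr rfl fun i hi => ?_
    rw [mul_pow, ← Polynomial.C_pow, ← pow_mul, ← pow_mul, map_mul, pow_add]
    ring
  have hinj : ∀ p ∈ S, ∀ p' ∈ S, m * p.2 + n * p.1 = m * p'.2 + n * p'.1 → p = p' := by
    rintro ⟨j, i⟩ hp ⟨j', i'⟩ hp' heq
    dsimp only at heq ⊢
    simp only [Finset.mem_sigma, hS] at hp hp'
    have hj : j < m := hsup j hp.1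
    have hj' : j' < m := hsup j' hp'.1
    have h1 : n * j ≡ m * i + n * j [MOD m] :=
      (Nat.modEq_iff_dvd' (Nat.le_add_left _ _)).mpr ⟨i, by omega⟩
    have h2 : n * j' ≡ m * i' + n * j' [MOD m] :=
      (Nat.modEq_iff_dvd' (Nat.le_add_left _ _)).mpr ⟨i', by omega⟩
    have hmod : n * j ≡ n * j' [MOD m] := h1.trans (heq ▸ h2.symm)
    have hjj : j = j' := by
      have := Nat.ModEq.cancel_left_of_coprime hgcd hmod
      rwa [Nat.ModEq, Nat.mod_eq_of_lt hj, Nat.mod_eq_of_lt hj'] at this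
    subst hjj
    have hii : i = i' := Nat.eq_of_mul_eq_mul_left hm (by omega)
    subst hii; rfl
  by_contra hr0
  obtain ⟨j, hj⟩ := (Polynomial.nonempty_support_iff.mpr hr0)
  obtain ⟨i, hi⟩ := Polynomial.nonempty_support_iff.mpr (Polynomial.mem_support_iff.mp hj)
  have hmem : (⟨j, i⟩ : Σ _ : ℕ, ℕ) ∈ S := Finset.mem_sigma.mpr ⟨hj, hi⟩
  rw [key] at hE
  have h0 := congrArg (fun p => Polynomial.coeff p (m * i + n * j)) hE
  simp only [Polynomial.coeff_zero] at h0
  rw [coeff_sum_X_pow S _ _ hinj ⟨j, i⟩ hmem] at h0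
  rcases mul_eq_zero.mp h0 with h | h
  · exact (Polynomial.mem_support_iff.mp hi) h
  · exact pow_ne_zero i hs h


open Module

theorem lin_alg {k : Type*} [Field k] {d : ℕ} (hd : 2 ≤ d) (c : Fin (d - 1) → Fin d → k)
    (hc : LinearIndependent k c) :
    ∃ (v : Fin d → k) (j₀ : Fin d), v j₀ = 1 ∧ (∀ i, ∑ j, c i j * v j = 0) ∧
      (∀ j : Fin d, ((Pi.single j 1 : Fin d → k) - v j • (Pi.single j₀ 1 : Fin d → k))
        ∈ Submodule.span k (Set.range c)) := by
  classical
  set M : (Fin d → k) →ₗ[k] (Fin (d - 1) → k) := LinearMap.pi (fun i => dotL (c i)) with hM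
  -- nontrivial kernel
  have hker : LinearMap.ker M ≠ ⊥ := by
    intro h
    have hinj : Function.Injective M := LinearMap.ker_eq_bot.mp h
    have := LinearMap.finrank_le_finrank_of_injective hinj
    rw [Module.finrank_fintype_fun_eq_card, Module.finrank_fintype_fun_eq_card] at this
    simp [Fintype.card_fin] at this
    omega
  obtain ⟨v', hv'mem, hv'0⟩ := Submodule.exists_mem_ne_zero_of_ne_bot hker
  obtain ⟨j₀, hj₀⟩ := Function.ne_iff.mp hv'0
  have hj₀' : v' j₀ ≠ 0 := by simpa using hj₀
  set v : Fin d → k := (v' j₀)⁻¹ • v' with hv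
  have hvj₀ : v j₀ = 1 := by
    simp only [hv, Pi.smul_apply, smul_eq_mul]
    exact inv_mul_cancel₀ hj₀'
  have hvker : v ∈ LinearMap.ker M := Submodule.smul_mem _ _ hv'mem
  have hvz : ∀ i, ∑ j, c i j * v j = 0 := by
    intro i
    have := congrFun (LinearMap.mem_ker.mp hvker) i
    simpa [hM, dotL, LinearMap.pi_apply] using this
  -- the functional w ↦ ∑ w j * v j
  set φ : (Fin d → k) →ₗ[k] k := dotL v with hφ
  have hφv : ∀ w : Fin d → k, φ w = ∑ j, v j * w j := fun w => rfl
  have hφsingle : ∀ j : Fin d, φ (Pi.single j 1) = v j := by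
    intro j
    rw [hφv]
    rw [Finset.sum_eq_single j]
    · simp
    · intro b _ hb; simp [Pi.single_eq_of_ne hb]
    · simp
  have hφsurj : LinearMap.range φ = ⊤ := by
    rw [LinearMap.range_eq_top]
    intro a
    exact ⟨a • (Pi.single j₀ 1 : Fin d → k), by rw [map_smul, hφsingle, hvj₀]; simp⟩
  have hkerrank : finrank k (LinearMap.ker φ) = d - 1 := by
    have h1 := LinearMap.finrank_range_add_finrank_ker φ
    rw [hφsurj, finrank_top, Module.finrank_fintype_fun_eq_card, finrank_self,
      Fintype.card_fin] at h1
    omega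
  have hWle : Submodule.span k (Set.range c) ≤ LinearMap.ker φ := by
    rw [Submodule.span_le]
    rintro _ ⟨i, rfl⟩
    rw [SetLike.mem_coe, LinearMap.mem_ker, hφv]
    rw [← hvz i]
    exact Finset.sum_congr rfl fun j _ => mul_comm _ _
  have hWeq : Submodule.span k (Set.range c) = LinearMap.ker φ := by
    apply Submodule.eq_of_le_of_finrank_le hWle
    rw [hkerrank, finrank_span_eq_card hc, Fintype.card_fin]
  refine ⟨v, j₀, hvj₀, hvz, fun j => ?_⟩
  rw [hWeq, LinearMap.mem_ker, map_sub, map_smul, hφsingle, hφsingle, hvj₀]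
  simp

set_option maxHeartbeats 1600000 in
/-- Let `k` be an algebraically closed field, `d ≥ 2`, and `m, n ≥ 2` integers with
`gcd(m,n) = 1` such that `m·n` is invertible in `k`, and `a, b ≥ 1` with `a + b = n`.
Let `u_1, …, u_{d−1}` be `k`-linearly independent linear forms in the `d` variables
`X, Z, W_3, …, W_d` (given by linearly independent coefficient vectors `c i : Fin d → k`;
the variables `X, Y, Z, W_3, …, W_d` are indexed by `0, 1, 2, 3, …, d` in `Fin (d+1)`,
and `Fin.succAbove 1` enumerates the variables other than `Y`). Then
`k[X, Y, Z, W_3, …, W_d]/(X^n + Y^m + X^a Z^b + W_3^n + ⋯ + W_d^n, u_1, …, u_{d−1})`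
has exactly one minimal prime. -/
theorem stmt_16 (k : Type*) [Field k] [IsAlgClosed k] (d m n a b : ℕ)
    (hd : 2 ≤ d) (hm : 2 ≤ m) (hn : 2 ≤ n) (hgcd : Nat.gcd m n = 1)
    (hchar : ((m * n : ℕ) : k) ≠ 0) (ha : 1 ≤ a) (hb : 1 ≤ b) (hab : a + b = n)
    (c : Fin (d - 1) → Fin d → k) (hc : LinearIndependent k c) :
    ∃! P : Ideal (MvPolynomial (Fin (d + 1)) k ⧸
        Ideal.span ({(X 0 : MvPolynomial (Fin (d + 1)) k) ^ n + (X 1) ^ m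
            + (X 0) ^ a * (X 2) ^ b
            + ∑ j ∈ Finset.univ.filter (fun j : Fin (d + 1) => 3 ≤ (j : ℕ)), (X j) ^ n}
          ∪ Set.range (fun i : Fin (d - 1) =>
              ∑ j : Fin d, C (c i j) *
                (X ((1 : Fin (d + 1)).succAbove j) : MvPolynomial (Fin (d + 1)) k)))),
      P ∈ minimalPrimes (MvPolynomial (Fin (d + 1)) k ⧸
        Ideal.span ({(X 0 : MvPolynomial (Fin (d + 1)) k) ^ n + (X 1) ^ m
            + (X 0) ^ a * (X 2) ^ b
            + ∑ j ∈ Finset.univ.filter (fun j : Fin (d + 1) => 3 ≤ (j : ℕ)), (X j) ^ n}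
          ∪ Set.range (fun i : Fin (d - 1) =>
              ∑ j : Fin d, C (c i j) *
                (X ((1 : Fin (d + 1)).succAbove j) : MvPolynomial (Fin (d + 1)) k)))) := by
  obtain ⟨v, j₀, hvj₀, hvz, hvspan⟩ := lin_alg hd c hc
  classical
  subst hab
  set sA : Fin d → Fin (d + 1) := (1 : Fin (d + 1)).succAbove with hsA
  set f : MvPolynomial (Fin (d + 1)) k :=
    (X 0 : MvPolynomial (Fin (d + 1)) k) ^ (a + b) + (X 1) ^ m + (X 0) ^ a * (X 2) ^ b
      + ∑ j ∈ Finset.univ.filter (fun j : Fin (d + 1) => 3 ≤ (j : ℕ)), (X j) ^ (a + b) with hf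
  set gens : Fin (d - 1) → MvPolynomial (Fin (d + 1)) k :=
    fun i => ∑ j : Fin d, C (c i j) * X (sA j) with hgens
  set I : Ideal (MvPolynomial (Fin (d + 1)) k) := Ideal.span ({f} ∪ Set.range gens) with hI
  -- value facts
  have hval1 : ((1 : Fin (d + 1)) : ℕ) = 1 := by rw [Fin.val_one', Nat.mod_eq_of_lt (by omega)]
  have hsAval : ∀ j : Fin d, ((sA j : ℕ)) = if (j : ℕ) = 0 then 0 else (j : ℕ) + 1 := by
    intro j
    by_cases h : (j : ℕ) = 0
    · rw [if_pos h, hsA, Fin.succAbove_of_castSucc_lt, Fin.coe_castSucc, h]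
      rw [Fin.lt_def, Fin.coe_castSucc, hval1, h]; omega
    · rw [if_neg h, hsA, Fin.succAbove_of_le_castSucc, Fin.val_succ]
      rw [Fin.le_def, Fin.coe_castSucc, hval1]; omega
  -- the scalars V
  set vIdx : Fin (d + 1) → Fin d := fun i =>
    ⟨if (i : ℕ) = 0 then 0 else (i : ℕ) - 1, by have := i.isLt; split <;> omega⟩ with hvIdx
  set V : Fin (d + 1) → k := fun i => v (vIdx i) with hV
  have hVs : ∀ j : Fin d, V (sA j) = v j := by
    intro j
    have : vIdx (sA j) = j := by
      apply Fin.ext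
      show (if ((sA j : ℕ)) = 0 then 0 else ((sA j : ℕ)) - 1) = (j : ℕ)
      rw [hsAval j]
      by_cases h : (j : ℕ) = 0 <;> simp [h]
    show v (vIdx (sA j)) = v j
    rw [this]
  -- linear forms in the span are in I
  have hΦspan : ∀ w ∈ Submodule.span k (Set.range c), linPoly sA w ∈ I := by
    intro w hw
    induction hw using Submodule.span_induction with
    | mem x hx =>
      obtain ⟨i, rfl⟩ := hx
      exact Ideal.subset_span (Or.inr ⟨i, rfl⟩)
    | zero => rw [map_zero]; exact I.zero_mem
    | add x y _ _ hx hy => rw [map_add]; exact I.add_mem hx hy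
    | smul t x _ hx =>
      rw [map_smul, MvPolynomial.smul_eq_C_mul]
      exact I.mul_mem_left _ hx
  have hΦsingle : ∀ j : Fin d, linPoly sA (Pi.single j (1 : k)) = X (sA j) := by
    intro j
    have hrfl : linPoly sA (Pi.single j (1 : k)) =
        ∑ l, C ((Pi.single j (1 : k) : Fin d → k) l) * X (sA l) := rfl
    rw [hrfl, Finset.sum_eq_single j]
    · simp
    · intro l _ hl; simp [Pi.single_eq_of_ne hl]
    · simp
  set i₀ : Fin (d + 1) := sA j₀ with hi₀
  have hrel : ∀ i : Fin (d + 1), i ≠ 1 →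
      (X i : MvPolynomial (Fin (d + 1)) k) - C (V i) * X i₀ ∈ I := by
    intro i hi
    obtain ⟨j, rfl⟩ := Fin.exists_succAbove_eq hi
    have := hΦspan _ (hvspan j)
    rw [map_sub, map_smul, MvPolynomial.smul_eq_C_mul, hΦsingle, hΦsingle] at this
    rwa [hVs]
  -- A-side
  set mkA := Ideal.Quotient.mk I with hmkA
  have hne01 : (0 : Fin (d + 1)) ≠ 1 := by
    intro h; have := congrArg Fin.val h; rw [Fin.val_zero, hval1] at this; omega
  have hval2 : ((2 : Fin (d + 1)) : ℕ) = 2 := by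
    rw [Fin.coe_ofNat_eq_mod]
    exact Nat.mod_eq_of_lt (by omega)
  have hne21 : (2 : Fin (d + 1)) ≠ 1 := by
    intro h; have := congrArg Fin.val h; rw [hval2, hval1] at this; omega
  have hneF1 : ∀ j ∈ Finset.univ.filter (fun j : Fin (d + 1) => 3 ≤ (j : ℕ)),
      j ≠ (1 : Fin (d + 1)) := by
    intro j hj h
    rw [Finset.mem_filter] at hj
    rw [h, hval1] at hj
    omega
  set α : k := V 0 ^ (a + b) + V 0 ^ a * V 2 ^ b
    + ∑ j ∈ Finset.univ.filter (fun j : Fin (d + 1) => 3 ≤ (j : ℕ)), V j ^ (a + b) with hα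
  have hx : ∀ i : Fin (d + 1), i ≠ 1 → mkA (X i) = mkA (C (V i)) * mkA (X i₀) := by
    intro i hi
    have h0 := Ideal.Quotient.eq_zero_iff_mem.mpr (hrel i hi)
    rw [map_sub, sub_eq_zero, map_mul] at h0
    exact h0
  have hf0 : mkA f = 0 := Ideal.Quotient.eq_zero_iff_mem.mpr
    (Ideal.subset_span (Or.inl rfl))
  rw [hf] at hf0
  have hCα : mkA (C α) = mkA (C (V 0)) ^ (a + b) + mkA (C (V 0)) ^ a * mkA (C (V 2)) ^ b
      + ∑ j ∈ Finset.univ.filter (fun j : Fin (d + 1) => 3 ≤ (j : ℕ)), mkA (C (V j)) ^ (a + b) := by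
    rw [hα]
    simp only [map_add, map_mul, map_pow, map_sum]
  have hQ : mkA (C α) * mkA (X i₀) ^ (a + b) + mkA (X 1) ^ m = 0 := by
    rw [← hf0]
    simp only [map_add, map_mul, map_pow, map_sum]
    rw [hx 0 hne01, hx 2 hne21,
      Finset.sum_congr rfl (fun j hj => by rw [hx j (hneF1 j hj)]), hCα]
    simp only [mul_pow, ← Finset.sum_mul]
    ring
  -- B-side
  set q : Polynomial (Polynomial k) := Polynomial.X ^ m
    + Polynomial.C (Polynomial.C α * Polynomial.X ^ (a + b)) with hq
  set g : Fin (d + 1) → Polynomial (Polynomial k) := fun i =>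
    if i = 1 then Polynomial.X else Polynomial.C (Polynomial.C (V i) * Polynomial.X) with hg
  set ψ : MvPolynomial (Fin (d + 1)) k →ₐ[k] Polynomial (Polynomial k) :=
    MvPolynomial.aeval g with hψ
  have hψX1 : ψ (X 1) = Polynomial.X := by
    rw [hψ, aeval_X, hg]; simp
  have hψXi : ∀ i : Fin (d + 1), i ≠ 1 →
      ψ (X i) = Polynomial.C (Polynomial.C (V i) * Polynomial.X) := by
    intro i hi
    rw [hψ, aeval_X, hg]; simp [hi]
  have halgB : ∀ r : k, algebraMap k (Polynomial (Polynomial k)) r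
      = Polynomial.C (Polynomial.C r) := fun r => by
    rw [Polynomial.algebraMap_apply, Polynomial.algebraMap_eq]
  have hψC : ∀ r : k, ψ (C r) = Polynomial.C (Polynomial.C r) := fun r => by
    rw [hψ, aeval_C, Polynomial.algebraMap_apply, Polynomial.algebraMap_eq]
  have hψf : ψ f = q := by
    rw [hf]
    simp only [map_add, map_mul, map_pow, map_sum]
    rw [hψX1, hψXi 0 hne01, hψXi 2 hne21,
      Finset.sum_congr rfl (fun j hj => by rw [hψXi j (hneF1 j hj)]), hq]
    have hinner : ((Polynomial.C (V 0) * Polynomial.X) ^ (a+b)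
        + (Polynomial.C (V 0) * Polynomial.X) ^ a * (Polynomial.C (V 2) * Polynomial.X) ^ b
        + ∑ j ∈ Finset.univ.filter (fun j : Fin (d + 1) => 3 ≤ (j : ℕ)),
            (Polynomial.C (V j) * Polynomial.X) ^ (a+b) : Polynomial k)
        = Polynomial.C α * Polynomial.X ^ (a+b) := by
      rw [hα]
      simp only [Polynomial.C_add, Polynomial.C_mul, Polynomial.C_pow, map_sum, mul_pow,
        ← Finset.sum_mul]
      ring
    calc _ = (Polynomial.C ((Polynomial.C (V 0) * Polynomial.X) ^ (a+b)
        + (Polynomial.C (V 0) * Polynomial.X) ^ a * (Polynomial.C (V 2) * Polynomial.X) ^ b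
        + ∑ j ∈ Finset.univ.filter (fun j : Fin (d + 1) => 3 ≤ (j : ℕ)),
            (Polynomial.C (V j) * Polynomial.X) ^ (a+b))
        : Polynomial (Polynomial k)) + Polynomial.X ^ m := by
          simp only [Polynomial.C_add, Polynomial.C_mul, Polynomial.C_pow, map_sum]
          ring
      _ = _ := by rw [hinner]; ring
  have hψgen : ∀ i : Fin (d - 1), ψ (gens i) = 0 := by
    intro i
    rw [hgens]
    simp only [map_sum, map_mul, hψC]
    rw [Finset.sum_congr rfl (fun j _ => by rw [hψXi (sA j) (Fin.succAbove_ne 1 j), hVs j])]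
    simp only [← mul_assoc, ← Polynomial.C_mul, ← Finset.sum_mul, ← map_sum]
    rw [hvz i]
    simp
  set mkT := Ideal.Quotient.mk (Ideal.span {q}) with hmkT
  have hIker : ∀ x ∈ I, mkT (ψ x) = 0 := by
    intro x hx'
    have hle : I ≤ RingHom.ker (mkT.comp ψ.toRingHom) := by
      rw [hI, Ideal.span_le]
      rintro y (rfl | ⟨i, rfl⟩)
      · show mkT (ψ f) = 0
        rw [hψf]
        exact Ideal.Quotient.eq_zero_iff_mem.mpr (Ideal.subset_span rfl)
      · show mkT (ψ (gens i)) = 0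
        rw [hψgen]
        exact map_zero _
    exact hle hx'
  set ψT := Ideal.Quotient.lift I (mkT.comp ψ.toRingHom) hIker with hψT
  set ic : k →+* MvPolynomial (Fin (d + 1)) k ⧸ I :=
    mkA.comp (MvPolynomial.C : k →+* MvPolynomial (Fin (d + 1)) k) with hic
  set θin : Polynomial k →+* MvPolynomial (Fin (d + 1)) k ⧸ I :=
    Polynomial.eval₂RingHom ic (mkA (X i₀)) with hθin
  set θ : Polynomial (Polynomial k) →+* MvPolynomial (Fin (d + 1)) k ⧸ I :=
    Polynomial.eval₂RingHom θin (mkA (X 1)) with hθ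
  have hθq : θ q = 0 := by
    rw [hq]
    simp only [hθ, hθin, hic, Polynomial.coe_eval₂RingHom, Polynomial.eval₂_add,
      Polynomial.eval₂_pow, Polynomial.eval₂_X, Polynomial.eval₂_C, Polynomial.eval₂_mul,
      RingHom.comp_apply]
    linear_combination hQ
  have hspanq : ∀ x ∈ Ideal.span ({q} : Set (Polynomial (Polynomial k))), θ x = 0 := by
    intro x hx'
    obtain ⟨w, rfl⟩ := Ideal.mem_span_singleton.mp hx'
    rw [map_mul, hθq, zero_mul]
  set θT := Ideal.Quotient.lift (Ideal.span {q}) θ hspanq with hθT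
  have hψTmk : ∀ p, ψT (mkA p) = mkT (ψ p) := fun p => by
    rw [hψT, hmkA]
    exact Ideal.Quotient.lift_mk I _ _
  have hθTmk : ∀ p, θT (mkT p) = θ p := fun p => by
    rw [hθT, hmkT]
    exact Ideal.Quotient.lift_mk _ _ _
  have hθC2 : ∀ r : k, θ (Polynomial.C (Polynomial.C r)) = mkA (C r) := fun r => by
    simp only [hθ, hθin, hic, Polynomial.coe_eval₂RingHom, Polynomial.eval₂_C,
      RingHom.comp_apply]
  have hθCX : θ (Polynomial.C Polynomial.X) = mkA (X i₀) := by
    simp only [hθ, hθin, Polynomial.coe_eval₂RingHom, Polynomial.eval₂_C, Polynomial.eval₂_X]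
  have hθX : θ Polynomial.X = mkA (X 1) := by
    simp only [hθ, Polynomial.coe_eval₂RingHom, Polynomial.eval₂_X]
  have hθCmul : ∀ r : k, θ (Polynomial.C (Polynomial.C r * Polynomial.X))
      = mkA (C r) * mkA (X i₀) := fun r => by
    simp only [hθ, hθin, hic, Polynomial.coe_eval₂RingHom, Polynomial.eval₂_C,
      Polynomial.eval₂_mul, Polynomial.eval₂_X, RingHom.comp_apply]
  have hcomp1 : θT.comp ψT = RingHom.id _ := by
    apply Ideal.Quotient.ringHom_ext
    apply MvPolynomial.ringHom_ext
    · intro r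
      simp only [RingHom.comp_apply, RingHom.coe_comp, Function.comp_apply, RingHom.id_apply]
      rw [hψTmk, hψC, hθTmk, hθC2]
    · intro i
      simp only [RingHom.comp_apply, RingHom.coe_comp, Function.comp_apply, RingHom.id_apply]
      by_cases hi : i = 1
      · subst hi
        rw [hψTmk, hψX1, hθTmk, hθX]
      · rw [hψTmk, hψXi i hi, hθTmk, hθCmul, ← hx i hi]
  have hcomp2 : ψT.comp θT = RingHom.id _ := by
    apply Ideal.Quotient.ringHom_ext
    apply Polynomial.ringHom_ext'
    · apply Polynomial.ringHom_ext
      · intro r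
        simp only [RingHom.comp_apply, RingHom.coe_comp, Function.comp_apply, RingHom.id_apply]
        rw [hθTmk, hθC2, hψTmk, hψC]
      · simp only [RingHom.comp_apply, RingHom.coe_comp, Function.comp_apply, RingHom.id_apply]
        rw [hθTmk, hθCX, hψTmk, hψXi i₀ (by rw [hi₀]; exact Fin.succAbove_ne 1 j₀)]
        rw [hi₀, hVs j₀, hvj₀]
        simp
        rfl
    · simp only [RingHom.comp_apply, RingHom.coe_comp, Function.comp_apply, RingHom.id_apply]
      rw [hθTmk, hθX, hψTmk, hψX1]
  have e : (MvPolynomial (Fin (d + 1)) k ⧸ I) ≃+*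
      (Polynomial (Polynomial k) ⧸ Ideal.span {q}) :=
    RingEquiv.ofRingHom ψT θT hcomp2 hcomp1
  have hT : ∃ P₀ : Ideal (Polynomial (Polynomial k) ⧸ Ideal.span {q}),
      P₀.IsPrime ∧ ∀ Q : Ideal (Polynomial (Polynomial k) ⧸ Ideal.span {q}),
        Q.IsPrime → P₀ ≤ Q := by
    by_cases hα0 : α = 0
    · have hqX : q = Polynomial.X ^ m := by rw [hq, hα0]; simp
      have hspX : (Ideal.span ({Polynomial.X} : Set (Polynomial (Polynomial k)))).IsPrime :=
        (Ideal.span_singleton_prime Polynomial.X_ne_zero).mpr Polynomial.prime_X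
      have hkerle : RingHom.ker mkT ≤ Ideal.span ({Polynomial.X} : Set (Polynomial (Polynomial k))) := by
        rw [hmkT, Ideal.mk_ker, Ideal.span_le]
        rintro y rfl
        rw [SetLike.mem_coe, Ideal.mem_span_singleton, hqX]
        exact dvd_pow_self _ (by omega)
      refine ⟨Ideal.map mkT (Ideal.span {Polynomial.X}), ?_, ?_⟩
      · exact Ideal.map_isPrime_of_surjective Ideal.Quotient.mk_surjective hkerle
      · intro Q hQ
        rw [Ideal.map_span, Set.image_singleton, Ideal.span_le]
        rintro z rfl
        rw [SetLike.mem_coe]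
        apply hQ.mem_of_pow_mem m
        have hpow : (mkT Polynomial.X) ^ m = mkT q := by
          rw [← map_pow]; exact congrArg mkT hqX.symm
        have hq0 : mkT q = 0 := Ideal.Quotient.eq_zero_iff_mem.mpr (Ideal.subset_span rfl)
        rw [hpow, hq0]
        exact Q.zero_mem
    · obtain ⟨s, hs⟩ := IsAlgClosed.exists_pow_nat_eq (-α⁻¹) (n := a + b) (by omega)
      have hs0 : s ≠ 0 := by
        intro h
        rw [h, zero_pow (by omega : a + b ≠ 0)] at hs
        exact hα0 (inv_eq_zero.mp (neg_eq_zero.mp hs.symm))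
      set E : Polynomial (Polynomial k) →+* Polynomial k :=
        Polynomial.eval₂RingHom
          (Polynomial.eval₂RingHom Polynomial.C (Polynomial.C s * Polynomial.X ^ m))
          (Polynomial.X ^ (a + b)) with hE
      have hEq : E q = 0 := by
        rw [hq]
        simp only [hE, Polynomial.coe_eval₂RingHom, Polynomial.eval₂_add, Polynomial.eval₂_pow,
          Polynomial.eval₂_X, Polynomial.eval₂_C, Polynomial.eval₂_mul]
        rw [mul_pow, ← Polynomial.C_pow, hs, ← pow_mul, ← pow_mul, ← mul_assoc,
          ← Polynomial.C_mul, mul_neg, mul_inv_cancel₀ hα0, mul_comm m (a + b)]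
        simp
      have hmonic : q.Monic := by
        rw [hq]; exact Polynomial.monic_X_pow_add_C _ (by omega)
      have hker : ∀ p : Polynomial (Polynomial k), E p = 0 → p ∈ Ideal.span {q} := by
        intro p hp
        have hr := Polynomial.modByMonic_add_div p q
        have hdeg : (p %ₘ q).degree < ((m : ℕ) : WithBot ℕ) := by
          have h1 := Polynomial.degree_modByMonic_lt p hmonic
          rw [hq, Polynomial.degree_X_pow_add_C (by omega)] at h1
          exact h1
        have hE0 : Polynomial.eval₂
            (Polynomial.eval₂RingHom Polynomial.C (Polynomial.C s * Polynomial.X ^ m))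
            (Polynomial.X ^ (a + b)) (p %ₘ q) = 0 := by
          have h2 : E (p %ₘ q) + E q * E (p /ₘ q) = E p := by
            rw [← map_mul, ← map_add, hr]
          rw [hEq, zero_mul, add_zero, hp] at h2
          simpa only [hE, Polynomial.coe_eval₂RingHom] using h2
        have hr0 := aux_inj (by omega : 0 < m) hgcd hs0 (p %ₘ q) hdeg hE0
        rw [Ideal.mem_span_singleton]
        exact ⟨p /ₘ q, by conv_lhs => rw [← hr, hr0, zero_add]⟩
      have hE' : ∀ z ∈ Ideal.span ({q} : Set (Polynomial (Polynomial k))), E z = 0 := by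
        intro z hz
        obtain ⟨w, rfl⟩ := Ideal.mem_span_singleton.mp hz
        rw [map_mul, hEq, zero_mul]
      set EE := Ideal.Quotient.lift (Ideal.span {q}) E hE' with hEE
      have hinj : Function.Injective EE := by
        intro x y hxy
        obtain ⟨p, rfl⟩ := Ideal.Quotient.mk_surjective x
        obtain ⟨r, rfl⟩ := Ideal.Quotient.mk_surjective y
        rw [hEE, Ideal.Quotient.lift_mk, Ideal.Quotient.lift_mk] at hxy
        rw [Ideal.Quotient.eq]
        apply hker
        rw [map_sub, hxy, sub_self]
      haveI : IsDomain (Polynomial (Polynomial k) ⧸ Ideal.span {q}) :=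
        Function.Injective.isDomain EE hinj
      exact ⟨⊥, Ideal.bot_prime, fun Q _ => bot_le⟩
  obtain ⟨P₀, hP₀, hleast⟩ := hT
  haveI := hP₀
  refine myExistsUnique (Ideal.comap e P₀) (Ideal.IsPrime.comap _) ?_
  intro Q hQ
  haveI := hQ
  have h1 : (Ideal.comap (e.symm : _ ≃+* _) Q).IsPrime := Ideal.IsPrime.comap _
  have h2 := hleast _ h1
  have h3 := Ideal.comap_mono (f := (e : _ ≃+* _)) h2
  have h4 : Ideal.comap (e : _ ≃+* _) (Ideal.comap (e.symm : _ ≃+* _) Q) = Q := by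
    ext x
    simp [Ideal.mem_comap]
  rwa [h4] at h3
end
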